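/- arXiv:1805.09247 — 7 statements merged into one kernel-verified Lean document; each statement's English description precedes it below -/
import Mathlib

section
/- Let K, E ≥ 2 be integers and L ∈ [0,1]^{K×E} a loss matrix with rows ℓ_a. Suppose actions a and b are neighbors (i.e., both are Pareto optimal and dim(C_a ∩ C_b) = E−2). Then for every action d with C_a ∩ C_b ⊆ C_d there exists a unique α ∈ [0,1] such that ℓ_d = α·ℓ_a + (1−α)·ℓ_b. -/
open scoped BigOperators

/-- The probability simplex in `ℝ^E`. -/
def probSimplex (E : ℕ) : Set (Fin E → ℝ) :=
  {u | (∀ i, 0 ≤ u i ∧ u i ≤ 1) ∧ ∑ i, u i = 1}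

/-- The cell of action `a`: the set of distributions on which `a` is optimal. -/
def cell {K E : ℕ} (L : Fin K → Fin E → ℝ) (a : Fin K) : Set (Fin E → ℝ) :=
  {u | u ∈ probSimplex E ∧ ∀ b, ∑ i, L a i * u i ≤ ∑ i, L b i * u i}

/-- The dimension of a set: the dimension of its affine hull. -/
noncomputable def dimSet {E : ℕ} (s : Set (Fin E → ℝ)) : ℕ :=
  Module.finrank ℝ (affineSpan ℝ s).direction

/-- Action `a` is Pareto optimal if its cell has dimension `E - 1`. -/
def ParetoOptimal {K E : ℕ} (L : Fin K → Fin E → ℝ) (a : Fin K) : Prop :=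
  (cell L a).Nonempty ∧ dimSet (cell L a) = E - 1

/-- Pareto optimal actions `a` and `b` are neighbors if `C_a ∩ C_b` has dimension `E - 2`. -/
def Neighbors {K E : ℕ} (L : Fin K → Fin E → ℝ) (a b : Fin K) : Prop :=
  ParetoOptimal L a ∧ ParetoOptimal L b ∧
    (cell L a ∩ cell L b).Nonempty ∧ dimSet (cell L a ∩ cell L b) = E - 2

/-- Auxiliary: dot product with `w` as a linear map. -/
def dotLM {E : ℕ} (w : Fin E → ℝ) : (Fin E → ℝ) →ₗ[ℝ] ℝ where
  toFun u := ∑ i, w i * u i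
  map_add' u v := by simp [mul_add, Finset.sum_add_distrib]
  map_smul' c u := by simp [smul_eq_mul, Finset.mul_sum, mul_left_comm]

lemma dotLM_apply {E : ℕ} (w u : Fin E → ℝ) : dotLM w u = ∑ i, w i * u i := rfl

lemma dotLM_single {E : ℕ} (w : Fin E → ℝ) (i : Fin E) :
    dotLM w (Pi.single i 1) = w i := by
  simp [dotLM_apply, Pi.single_apply, mul_ite, Finset.sum_ite_eq']

lemma finrank_ker_dotLM {E : ℕ} (w : Fin E → ℝ) (hw : w ≠ 0) :
    Module.finrank ℝ (LinearMap.ker (dotLM w)) = E - 1 := by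
  obtain ⟨i, hi⟩ : ∃ i, w i ≠ 0 := by
    by_contra h; push_neg at h; exact hw (funext h)
  have hsurj : Function.Surjective (dotLM w) := by
    intro r
    refine ⟨(r / w i) • (Pi.single i 1 : Fin E → ℝ), ?_⟩
    rw [map_smul, dotLM_single]
    rw [smul_eq_mul]
    field_simp
  have h := LinearMap.finrank_range_add_finrank_ker (dotLM w)
  rw [LinearMap.range_eq_top.2 hsurj] at h
  simp [Module.finrank_pi] at h
  omega

theorem stmt0 {K E : ℕ} (hK : 2 ≤ K) (hE : 2 ≤ E)
    (L : Fin K → Fin E → ℝ) (hL : ∀ a i, L a i ∈ Set.Icc (0 : ℝ) 1)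
    (a b : Fin K) (hab : Neighbors L a b)
    (d : Fin K) (hd : cell L a ∩ cell L b ⊆ cell L d) :
    ∃! α : ℝ, α ∈ Set.Icc (0 : ℝ) 1 ∧ ∀ i, L d i = α * L a i + (1 - α) * L b i := by
  obtain ⟨⟨hCaNe, hCa⟩, ⟨hCbNe, hCb⟩, ⟨u₀, hu₀⟩, hCab⟩ := hab
  set S : Set (Fin E → ℝ) := cell L a ∩ cell L b with hSdef
  -- the rows of a and b are distinct
  have hne : L a ≠ L b := by
    intro h
    have hcells : cell L a = cell L b := by unfold cell; rw [h]
    have hSa : S = cell L a := by rw [hSdef, hcells, Set.inter_self]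
    rw [hSa] at hCab
    unfold dimSet at hCa hCab
    omega
  -- orthogonality relations
  have keyb : ∀ u ∈ S, ∑ i, L b i * u i = ∑ i, L a i * u i :=
    fun u hu => le_antisymm (hu.2.2 a) (hu.1.2 b)
  have keyd : ∀ u ∈ S, ∑ i, L d i * u i = ∑ i, L a i * u i :=
    fun u hu => le_antisymm ((hd hu).2 a) (hu.1.2 d)
  set w : Fin E → ℝ := fun i => L b i - L a i with hwdef
  set w' : Fin E → ℝ := fun i => L d i - L a i with hw'def
  have hwne : w ≠ 0 := by
    intro h
    apply hne; funext i
    have := congrFun h i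
    simp [hwdef] at this
    linarith
  have hSw : Submodule.span ℝ S ≤ LinearMap.ker (dotLM w) := by
    apply Submodule.span_le.2
    intro u hu
    have := keyb u hu
    simp [LinearMap.mem_ker, dotLM_apply, hwdef, sub_mul, Finset.sum_sub_distrib, this]
  have hSw' : Submodule.span ℝ S ≤ LinearMap.ker (dotLM w') := by
    apply Submodule.span_le.2
    intro u hu
    have := keyd u hu
    simp [LinearMap.mem_ker, dotLM_apply, hw'def, sub_mul, Finset.sum_sub_distrib, this]
  -- dimension of the span of S
  have hu₀sum : ∑ i, u₀ i = 1 := hu₀.1.1.2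
  have hu₀ne : u₀ ≠ 0 := by
    intro h; rw [h] at hu₀sum; simp at hu₀sum
  have hvs : Module.finrank ℝ (vectorSpan ℝ S) = E - 2 := by
    unfold dimSet at hCab
    rwa [direction_affineSpan] at hCab
  have hvs_le : vectorSpan ℝ S ≤ Submodule.span ℝ S := by
    rw [vectorSpan_def]
    apply Submodule.span_le.2
    rintro x ⟨p, hp, q, hq, rfl⟩
    exact Submodule.sub_mem _ (Submodule.subset_span hp) (Submodule.subset_span hq)
  have hsum0 : vectorSpan ℝ S ≤ LinearMap.ker (dotLM (fun _ => (1:ℝ))) := by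
    rw [vectorSpan_def]
    apply Submodule.span_le.2
    rintro x ⟨p, hp, q, hq, rfl⟩
    have hp1 : ∑ i, p i = 1 := hp.1.1.2
    have hq1 : ∑ i, q i = 1 := hq.1.1.2
    simp [LinearMap.mem_ker, dotLM_apply, vsub_eq_sub, Finset.sum_sub_distrib, hp1, hq1]
  have hu₀nvs : u₀ ∉ vectorSpan ℝ S := by
    intro h
    have := hsum0 h
    simp [LinearMap.mem_ker, dotLM_apply, hu₀sum] at this
  have hinf : vectorSpan ℝ S ⊓ Submodule.span ℝ {u₀} = ⊥ := by
    rw [Submodule.eq_bot_iff]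
    rintro x ⟨hx1, hx2⟩
    obtain ⟨c, rfl⟩ := Submodule.mem_span_singleton.1 hx2
    by_cases hc : c = 0
    · simp [hc]
    · exfalso
      apply hu₀nvs
      have := (vectorSpan ℝ S).smul_mem c⁻¹ hx1
      rwa [smul_smul, inv_mul_cancel₀ hc, one_smul] at this
  have hsup : Module.finrank ℝ ↥(vectorSpan ℝ S ⊔ Submodule.span ℝ {u₀}) = (E - 2) + 1 := by
    have h := Submodule.finrank_sup_add_finrank_inf_eq (vectorSpan ℝ S) (Submodule.span ℝ {u₀})
    rw [hinf, finrank_span_singleton hu₀ne, hvs] at h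
    simpa using h
  have hspanS : E - 1 ≤ Module.finrank ℝ (Submodule.span ℝ S) := by
    have hle : vectorSpan ℝ S ⊔ Submodule.span ℝ {u₀} ≤ Submodule.span ℝ S :=
      sup_le hvs_le (Submodule.span_mono (Set.singleton_subset_iff.2 hu₀))
    have := Submodule.finrank_mono hle
    omega
  -- ker (dotLM w) equals span of S, hence is contained in ker (dotLM w')
  have hkeq : Submodule.span ℝ S = LinearMap.ker (dotLM w) := by
    apply Submodule.eq_of_le_of_finrank_le hSw
    rw [finrank_ker_dotLM w hwne]
    exact hspanS
  have hkerle : LinearMap.ker (dotLM w) ≤ LinearMap.ker (dotLM w') := by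
    rw [← hkeq]; exact hSw'
  -- produce the proportionality constant
  obtain ⟨i₀, hi₀⟩ : ∃ i, w i ≠ 0 := by
    by_contra h; push_neg at h; exact hwne (funext h)
  set x₀ : Fin E → ℝ := (w i₀)⁻¹ • (Pi.single i₀ 1 : Fin E → ℝ) with hx₀def
  have hx₀ : dotLM w x₀ = 1 := by
    rw [hx₀def, map_smul, dotLM_single, smul_eq_mul, inv_mul_cancel₀ hi₀]
  set t : ℝ := dotLM w' x₀ with htdef
  have hprop : ∀ y, dotLM w' y = t * dotLM w y := by
    intro y
    have hyk : y - (dotLM w y) • x₀ ∈ LinearMap.ker (dotLM w) := by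
      simp [LinearMap.mem_ker, map_sub, map_smul, hx₀]
    have h2 := hkerle hyk
    simp only [LinearMap.mem_ker, map_sub, map_smul, smul_eq_mul] at h2
    rw [htdef]
    linarith
  have hpt : ∀ i, L d i - L a i = t * (L b i - L a i) := by
    intro i
    have := hprop (Pi.single i 1)
    rwa [dotLM_single, dotLM_single] at this
  set α : ℝ := 1 - t with hαdef
  have hform : ∀ i, L d i = α * L a i + (1 - α) * L b i := by
    intro i
    have := hpt i
    rw [hαdef]
    ring_nf
    linarith
  -- strict points
  have hstrict : ∀ c c' : Fin K, cell L c ∩ cell L c' = S →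
      dimSet (cell L c) = E - 1 →
      ∃ u ∈ cell L c, (∑ i, L c i * u i) < ∑ i, L c' i * u i := by
    intro c c' hcc' hdim
    by_contra h
    push_neg at h
    have hsub : cell L c ⊆ cell L c' := by
      intro u hu
      exact ⟨hu.1, fun e => le_trans (h u hu) (hu.2 e)⟩
    have hSc : S = cell L c := by rw [← hcc', Set.inter_eq_left.2 hsub]
    rw [hSc] at hCab
    unfold dimSet at hCab hdim
    omega
  obtain ⟨u, hu, hult⟩ := hstrict a b rfl hCa
  obtain ⟨v, hv, hvlt⟩ := hstrict b a (by rw [Set.inter_comm]) hCb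
  -- bounds on α
  have hsumd : ∀ z : Fin E → ℝ,
      ∑ i, L d i * z i = α * (∑ i, L a i * z i) + (1 - α) * (∑ i, L b i * z i) := by
    intro z
    rw [Finset.mul_sum, Finset.mul_sum, ← Finset.sum_add_distrib]
    apply Finset.sum_congr rfl
    intro i _
    rw [hform i]; ring
  have hα1 : α ≤ 1 := by
    have h1 : ∑ i, L a i * u i ≤ ∑ i, L d i * u i := hu.2 d
    rw [hsumd u] at h1
    nlinarith
  have hα0 : 0 ≤ α := by
    have h1 : ∑ i, L b i * v i ≤ ∑ i, L d i * v i := hv.2 d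
    rw [hsumd v] at h1
    nlinarith
  refine ⟨α, ⟨⟨hα0, hα1⟩, hform⟩, ?_⟩
  rintro β ⟨_, hβ⟩
  obtain ⟨i, hi⟩ : ∃ i, L a i ≠ L b i := by
    by_contra h; push_neg at h; exact hne (funext h)
  have h3 : (β - α) * (L a i - L b i) = 0 := by
    linear_combination (hform i) - (hβ i)
  rcases mul_eq_zero.1 h3 with h4 | h4
  · linarith [sub_eq_zero.1 h4]
  · exact absurd (sub_eq_zero.1 h4) hi
end

section
/- Let K, E ≥ 2 be integers and L ∈ [0,1]^{K×E} a loss matrix with rows ℓ_a. Suppose actions a and b are neighbors and d is an action with C_a ∩ C_b ⊆ C_d such that ℓ_d = α·ℓ_a + (1−α)·ℓ_b for some α ∈ (0,1) (strictly between 0 and 1). Then C_d = C_a ∩ C_b. -/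
open scoped BigOperators

theorem stmt1 {K E : ℕ} (hK : 2 ≤ K) (hE : 2 ≤ E)
    (L : Fin K → Fin E → ℝ) (hL : ∀ a i, L a i ∈ Set.Icc (0 : ℝ) 1)
    (a b : Fin K) (hab : Neighbors L a b)
    (d : Fin K) (hd : cell L a ∩ cell L b ⊆ cell L d)
    (α : ℝ) (hα : α ∈ Set.Ioo (0 : ℝ) 1)
    (hld : ∀ i, L d i = α * L a i + (1 - α) * L b i) :
    cell L d = cell L a ∩ cell L b := by
  obtain ⟨hα0, hα1⟩ := hα
  apply Set.Subset.antisymm _ hd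
  intro u hu
  obtain ⟨hs, hopt⟩ := hu
  have hsum : ∑ i, L d i * u i
      = α * ∑ i, L a i * u i + (1 - α) * ∑ i, L b i * u i := by
    simp only [hld, add_mul, mul_assoc, Finset.sum_add_distrib, Finset.mul_sum]
  have hA := hopt a
  have hB := hopt b
  have hAB : ∑ i, L a i * u i = ∑ i, L b i * u i := by nlinarith
  have hdA : ∑ i, L d i * u i = ∑ i, L a i * u i := by nlinarith
  refine ⟨⟨hs, fun c => ?_⟩, ⟨hs, fun c => ?_⟩⟩
  · have := hopt c; linarith
  · have := hopt c; linarith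
end

section
/- Let K, E ≥ 2 be integers and L ∈ [0,1]^{K×E} a loss matrix with rows ℓ_a, and let 𝒜 be a maximal subset of Pareto optimal actions containing no two duplicate actions. Then there exists a constant ε > 0, depending only on L, such that for all pairs of actions a, ã ∈ 𝒜 and all u ∈ C_{ã}, there exists an action b ∈ N_a ∩ 𝒜 with ⟨ℓ_a − ℓ_{ã}, u⟩ ≤ ⟨ℓ_a − ℓ_b, u⟩ / ε. -/
open scoped BigOperators
open Module

/-- `b` belongs to the neighborhood `N_a`: either `b = a`, or `b` is a neighbor of `a`
that is not a duplicate of `a`. -/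
def InNbhd {K E : ℕ} (L : Fin K → Fin E → ℝ) (a b : Fin K) : Prop :=
  b = a ∨ (Neighbors L a b ∧ L b ≠ L a)

/-! ### Auxiliary definitions -/

/-- The dot product as a linear map. -/
noncomputable def dotL {E : ℕ} (c : Fin E → ℝ) : (Fin E → ℝ) →ₗ[ℝ] ℝ where
  toFun z := ∑ i, c i * z i
  map_add' x y := by simp [mul_add, Finset.sum_add_distrib]
  map_smul' r x := by simp [Finset.mul_sum, smul_eq_mul]; ring_nf; simp [mul_comm, mul_left_comm]

@[simp] lemma dotL_apply {E : ℕ} (c z : Fin E → ℝ) : dotL c z = ∑ i, c i * z i := rfl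

/-- The direction of the affine hyperplane `Σ = 1`. -/
noncomputable def Vsub (E : ℕ) : Submodule ℝ (Fin E → ℝ) := LinearMap.ker (dotL (fun _ => 1))

lemma mem_Vsub {E : ℕ} {v : Fin E → ℝ} : v ∈ Vsub E ↔ ∑ i, v i = 1 * 0 ∨ ∑ i, v i = 0 := by
  simp [Vsub, LinearMap.mem_ker]

lemma mem_Vsub' {E : ℕ} {v : Fin E → ℝ} : v ∈ Vsub E ↔ ∑ i, v i = 0 := by
  simp [Vsub, LinearMap.mem_ker]

/-- The affine hyperplane `Σ = 1`. -/
noncomputable def Aone (E : ℕ) : AffineSubspace ℝ (Fin E → ℝ) :=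
  AffineSubspace.mk' (fun _ => (E : ℝ)⁻¹) (Vsub E)

lemma mem_Aone {E : ℕ} (hE : 0 < E) {x : Fin E → ℝ} : x ∈ Aone E ↔ ∑ i, x i = 1 := by
  rw [Aone, AffineSubspace.mem_mk', mem_Vsub']
  have hE' : (E : ℝ) ≠ 0 := by positivity
  constructor
  · intro h
    have : ∑ i, (x i - (E:ℝ)⁻¹) = 0 := by simpa [vsub_eq_sub] using h
    rw [Finset.sum_sub_distrib] at this
    simp at this
    field_simp at this
    linarith [this]
  · intro h
    have : ∑ i, (x i - (E:ℝ)⁻¹) = 0 := by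
      rw [Finset.sum_sub_distrib, h]; simp [hE']
    simpa [vsub_eq_sub] using this

lemma probSimplex_eq_stdSimplex (E : ℕ) : probSimplex E = stdSimplex ℝ (Fin E) := by
  ext u
  constructor
  · rintro ⟨h1, h2⟩; exact ⟨fun i => (h1 i).1, h2⟩
  · rintro ⟨h1, h2⟩
    refine ⟨fun i => ⟨h1 i, ?_⟩, h2⟩
    calc u i ≤ ∑ j, u j := Finset.single_le_sum (fun j _ => h1 j) (Finset.mem_univ i)
    _ = 1 := h2

lemma convex_probSimplex (E : ℕ) : Convex ℝ (probSimplex E) := by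
  rw [probSimplex_eq_stdSimplex]; exact convex_stdSimplex ℝ (Fin E)

lemma isClosed_probSimplex (E : ℕ) : IsClosed (probSimplex E) := by
  rw [probSimplex_eq_stdSimplex]; exact isClosed_stdSimplex ℝ (Fin E)

lemma convex_cell {K E : ℕ} (L : Fin K → Fin E → ℝ) (a : Fin K) : Convex ℝ (cell L a) := by
  have : cell L a = probSimplex E ∩ ⋂ b, {u | 0 ≤ ∑ i, (L b i - L a i) * u i} := by
    ext u
    simp only [cell, Set.mem_inter_iff, Set.mem_iInter, Set.mem_setOf_eq]
    constructor
    · rintro ⟨h1, h2⟩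
      refine ⟨h1, fun b => ?_⟩
      have := h2 b
      have : ∑ i, (L b i - L a i) * u i = ∑ i, L b i * u i - ∑ i, L a i * u i := by
        rw [← Finset.sum_sub_distrib]; congr 1; ext i; ring
      linarith [h2 b, this]
    · rintro ⟨h1, h2⟩
      refine ⟨h1, fun b => ?_⟩
      have h3 := h2 b
      have h4 : ∑ i, (L b i - L a i) * u i = ∑ i, L b i * u i - ∑ i, L a i * u i := by
        rw [← Finset.sum_sub_distrib]; congr 1; ext i; ring
      linarith
  rw [this]
  refine (convex_probSimplex E).inter (convex_iInter fun b => ?_)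
  have : {u : Fin E → ℝ | 0 ≤ ∑ i, (L b i - L a i) * u i} =
      {u : Fin E → ℝ | 0 ≤ dotL (fun i => L b i - L a i) u} := by simp
  rw [this]
  exact convex_halfSpace_ge ⟨fun x y => by simp [mul_add, Finset.sum_add_distrib], fun c x => by
    simp [Finset.mul_sum, smul_eq_mul, mul_comm, mul_left_comm]⟩ 0

lemma isClosed_cell {K E : ℕ} (L : Fin K → Fin E → ℝ) (a : Fin K) : IsClosed (cell L a) := by
  have : cell L a = probSimplex E ∩ ⋂ b, {u | ∑ i, L a i * u i ≤ ∑ i, L b i * u i} := by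
    ext u; simp [cell, Set.mem_iInter]
  rw [this]
  refine (isClosed_probSimplex E).inter (isClosed_iInter fun b => ?_)
  exact isClosed_le (by continuity) (by continuity)

lemma cell_subset {K E : ℕ} (L : Fin K → Fin E → ℝ) (a : Fin K) :
    cell L a ⊆ probSimplex E := fun _ h => h.1

lemma dot_mem_Icc {E : ℕ} {c u : Fin E → ℝ} (hc : ∀ i, c i ∈ Set.Icc (0:ℝ) 1)
    (hu : u ∈ probSimplex E) : ∑ i, c i * u i ∈ Set.Icc (0:ℝ) 1 := by
  constructor
  · exact Finset.sum_nonneg fun i _ => mul_nonneg (hc i).1 (hu.1 i).1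
  · calc ∑ i, c i * u i ≤ ∑ i, u i :=
        Finset.sum_le_sum fun i _ => by
          have := (hc i).2
          have := (hu.1 i).1
          nlinarith
    _ = 1 := hu.2

lemma cell_congr {K E : ℕ} (L : Fin K → Fin E → ℝ) {b b' : Fin K} (h : L b = L b') :
    cell L b = cell L b' := by
  unfold cell; rw [h]

lemma finrank_Vsub {E : ℕ} (hE : 0 < E) : finrank ℝ (Vsub E) = E - 1 := by
  have h := LinearMap.finrank_range_add_finrank_ker (dotL (fun _ => (1:ℝ)) : (Fin E → ℝ) →ₗ[ℝ] ℝ)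
  have hr : LinearMap.range (dotL (fun _ => (1:ℝ)) : (Fin E → ℝ) →ₗ[ℝ] ℝ) = ⊤ := by
    rw [LinearMap.range_eq_top]
    intro r
    refine ⟨fun _ => r / E, ?_⟩
    have hE' : (E : ℝ) ≠ 0 := by positivity
    simp
    field_simp
  rw [hr] at h
  simp only [finrank_top, finrank_self] at h
  have hp : finrank ℝ (Fin E → ℝ) = E := by simp [finrank_pi]
  rw [hp] at h
  unfold Vsub
  omega
/-! ### Rank lemmas -/

lemma finrank_inf_ker {E : ℕ} (W : Submodule ℝ (Fin E → ℝ)) (ψ : (Fin E → ℝ) →ₗ[ℝ] ℝ)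
    {v : Fin E → ℝ} (hvW : v ∈ W) (hv : ψ v ≠ 0) :
    finrank ℝ (W ⊓ LinearMap.ker ψ : Submodule ℝ (Fin E → ℝ)) + 1 = finrank ℝ W := by
  have h := LinearMap.finrank_range_add_finrank_ker (ψ.domRestrict W)
  have hr : LinearMap.range (ψ.domRestrict W) = ⊤ := by
    rw [LinearMap.range_eq_top]
    intro r
    refine ⟨(r / ψ v) • ⟨v, hvW⟩, ?_⟩
    simp [LinearMap.domRestrict_apply]
    field_simp
  rw [hr] at h
  simp only [finrank_top, finrank_self] at h
  rw [LinearMap.ker_domRestrict] at h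
  have hk : finrank ℝ (Submodule.comap W.subtype (LinearMap.ker ψ)) =
      finrank ℝ (W ⊓ LinearMap.ker ψ : Submodule ℝ (Fin E → ℝ)) := by
    rw [← Submodule.finrank_map_subtype_eq W (Submodule.comap W.subtype (LinearMap.ker ψ)),
      Submodule.map_comap_subtype]
  rw [hk] at h
  omega

lemma exists_ratio {E : ℕ} {W : Submodule ℝ (Fin E → ℝ)} {ψ χ : (Fin E → ℝ) →ₗ[ℝ] ℝ}
    (h : W ⊓ LinearMap.ker ψ ≤ LinearMap.ker χ) {v₀ : Fin E → ℝ} (hv₀ : v₀ ∈ W)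
    (hψ : ψ v₀ ≠ 0) : ∃ l : ℝ, ∀ v ∈ W, χ v = l * ψ v := by
  refine ⟨χ v₀ / ψ v₀, fun v hv => ?_⟩
  have hmem : v - (ψ v / ψ v₀) • v₀ ∈ W ⊓ LinearMap.ker ψ := by
    constructor
    · exact W.sub_mem hv (W.smul_mem _ hv₀)
    · simp [LinearMap.mem_ker]
      field_simp
      ring
  have := h hmem
  simp [LinearMap.mem_ker] at this
  have h2 : χ v = (ψ v / ψ v₀) * χ v₀ := by linarith [this]
  rw [h2]; ring

/-! ### The affine span of a Pareto optimal cell -/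

lemma cell_subset_Aone {K E : ℕ} (hE : 0 < E) (L : Fin K → Fin E → ℝ) (a : Fin K) :
    cell L a ⊆ (Aone E : Set (Fin E → ℝ)) := by
  intro z hz
  exact SetLike.mem_coe.mpr ((mem_Aone hE).2 hz.1.2)

lemma vectorSpan_le_Vsub {E : ℕ} (hE : 0 < E) (s : Set (Fin E → ℝ))
    (hs : ∀ z ∈ s, ∑ i, z i = 1) : vectorSpan ℝ s ≤ Vsub E := by
  rw [vectorSpan_def, Submodule.span_le]
  rintro v ⟨p, hp, q, hq, rfl⟩
  rw [SetLike.mem_coe, mem_Vsub']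
  simp only [vsub_eq_sub, Pi.sub_apply]
  rw [Finset.sum_sub_distrib, hs p hp, hs q hq]
  ring

lemma affineSpan_cell_eq {K E : ℕ} (hE : 0 < E) (L : Fin K → Fin E → ℝ) {a : Fin K}
    (hP : ParetoOptimal L a) : affineSpan ℝ (cell L a) = Aone E := by
  obtain ⟨⟨p, hp⟩, hdim⟩ := hP
  have hle : affineSpan ℝ (cell L a) ≤ Aone E := by
    rw [affineSpan_le]
    exact cell_subset_Aone hE L a
  have hdir : (affineSpan ℝ (cell L a)).direction = (Aone E).direction := by
    have h1 : (affineSpan ℝ (cell L a)).direction ≤ (Aone E).direction :=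
      AffineSubspace.direction_le hle
    refine Submodule.eq_of_le_of_finrank_le h1 ?_
    rw [direction_affineSpan]
    have h2 : (Aone E).direction = Vsub E := AffineSubspace.direction_mk' _ _
    rw [h2, finrank_Vsub hE]
    unfold dimSet at hdim
    rw [direction_affineSpan] at hdim
    omega
  refine AffineSubspace.ext_of_direction_eq hdir ⟨p, ?_, ?_⟩
  · exact subset_affineSpan ℝ _ hp
  · exact cell_subset_Aone hE L a hp

/-- If a linear functional vanishes on the cell of a Pareto optimal action,
its coefficient vector (as loss difference) vanishes. -/
lemma row_eq_of_vanish {K E : ℕ} (hE : 0 < E) (L : Fin K → Fin E → ℝ) {a b : Fin K}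
    (hP : ParetoOptimal L a) (h : ∀ z ∈ cell L a, dotL (L b) z - dotL (L a) z = 0) :
    L b = L a := by
  have hspan : affineSpan ℝ (cell L a) = Aone E := affineSpan_cell_eq hE L hP
  set χ : (Fin E → ℝ) →ₗ[ℝ] ℝ := dotL (L b) - dotL (L a) with hχ
  have hker : cell L a ⊆ ((LinearMap.ker χ).toAffineSubspace : Set (Fin E → ℝ)) := by
    intro z hz
    have := h z hz
    simp [Submodule.mem_toAffineSubspace, LinearMap.mem_ker, hχ]
    simpa [hχ, LinearMap.sub_apply] using this
  have hA : Aone E ≤ (LinearMap.ker χ).toAffineSubspace := by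
    rw [← hspan, affineSpan_le]
    exact hker
  funext i
  have hei : (Pi.single i 1 : Fin E → ℝ) ∈ Aone E := by
    rw [mem_Aone hE]
    simp
  have := hA hei
  have h0 : χ (Pi.single i 1) = 0 := by
    simpa [Submodule.mem_toAffineSubspace, LinearMap.mem_ker] using this
  simp [hχ, LinearMap.sub_apply, dotL_apply, Pi.single_apply, mul_ite,
    Finset.sum_ite_eq'] at h0
  linarith
/-! ### Interior point with margins -/

lemma vanish_on_sum_one {K E : ℕ} (hE : 0 < E) (L : Fin K → Fin E → ℝ) {a : Fin K}
    (hP : ParetoOptimal L a) (χ : (Fin E → ℝ) →ₗ[ℝ] ℝ) (h : ∀ z ∈ cell L a, χ z = 0) :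
    ∀ x : Fin E → ℝ, ∑ i, x i = 1 → χ x = 0 := by
  have hspan : affineSpan ℝ (cell L a) = Aone E := affineSpan_cell_eq hE L hP
  have hker : cell L a ⊆ ((LinearMap.ker χ).toAffineSubspace : Set (Fin E → ℝ)) := by
    intro z hz
    simpa [Submodule.mem_toAffineSubspace, LinearMap.mem_ker] using h z hz
  have hA : Aone E ≤ (LinearMap.ker χ).toAffineSubspace := by
    rw [← hspan, affineSpan_le]; exact hker
  intro x hx
  have := hA ((mem_Aone hE).2 hx)
  simpa [Submodule.mem_toAffineSubspace, LinearMap.mem_ker] using this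

lemma exists_pos_coord {K E : ℕ} (hE : 0 < E) (L : Fin K → Fin E → ℝ) {a : Fin K}
    (hP : ParetoOptimal L a) (i : Fin E) : ∃ p ∈ cell L a, 0 < p i := by
  by_contra hcon
  push_neg at hcon
  have h0 : ∀ z ∈ cell L a, (LinearMap.proj i : (Fin E → ℝ) →ₗ[ℝ] ℝ) z = 0 := by
    intro z hz
    have h1 := hcon z hz
    have h2 := (hz.1.1 i).1
    simp only [LinearMap.proj_apply]
    linarith
  have := vanish_on_sum_one hE L hP _ h0 (Pi.single i 1) (by simp)
  simp at this

lemma exists_pos_phi {K E : ℕ} (hE : 0 < E) (L : Fin K → Fin E → ℝ) {a : Fin K}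
    (hP : ParetoOptimal L a) {b : Fin K} (hb : L b ≠ L a) :
    ∃ q ∈ cell L a, 0 < dotL (L b) q - dotL (L a) q := by
  by_contra hcon
  push_neg at hcon
  have h0 : ∀ z ∈ cell L a, (dotL (L b) - dotL (L a)) z = 0 := by
    intro z hz
    have h1 := hcon z hz
    have h2 : dotL (L a) z ≤ dotL (L b) z := by simpa using hz.2 b
    simp only [LinearMap.sub_apply]
    linarith
  apply hb
  exact row_eq_of_vanish hE L hP (by intro z hz; simpa using h0 z hz)

lemma exists_interior_point {K E : ℕ} (hE : 0 < E) (hK : 0 < K) (L : Fin K → Fin E → ℝ)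
    {a : Fin K} (hP : ParetoOptimal L a) :
    ∃ xb ∈ cell L a, (∀ i, 0 < xb i) ∧
      ∀ b, L b ≠ L a → 0 < dotL (L b) xb - dotL (L a) xb := by
  classical
  have hEK : (0:ℝ) < (E + K : ℕ) := by positivity
  choose p hp hppos using exists_pos_coord hE L hP
  have hq : ∀ b : Fin K, ∃ q ∈ cell L a, L b ≠ L a → 0 < dotL (L b) q - dotL (L a) q := by
    intro b
    by_cases hb : L b = L a
    · exact ⟨p ⟨0, hE⟩, hp _, fun h => absurd hb h⟩
    · obtain ⟨q, hq1, hq2⟩ := exists_pos_phi hE L hP hb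
      exact ⟨q, hq1, fun _ => hq2⟩
  choose q hqmem hqpos using hq
  set pts : (Fin E ⊕ Fin K) → (Fin E → ℝ) := Sum.elim p q with hpts
  have hptsmem : ∀ j, pts j ∈ cell L a := by
    rintro (i | b) <;> simp [hpts, hp, hqmem]
  set n : ℝ := ((E + K : ℕ) : ℝ) with hn
  set xb : Fin E → ℝ := n⁻¹ • ∑ j, pts j with hxb
  have hmem : xb ∈ cell L a := by
    have := (convex_cell L a).sum_mem (t := (Finset.univ : Finset (Fin E ⊕ Fin K)))
      (w := fun _ => n⁻¹) (z := pts) (fun j _ => by positivity)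
      (by
        rw [Finset.sum_const, Finset.card_univ]
        simp [hn]
        have hne : ((E:ℝ)+K) ≠ 0 := by positivity
        field_simp)
      (fun j _ => hptsmem j)
    simpa [hxb, Finset.smul_sum, ← Finset.sum_smul] using this
  refine ⟨xb, hmem, ?_, ?_⟩
  · intro i
    have hsum : ∀ j, 0 ≤ pts j i := fun j => ((hptsmem j).1.1 i).1
    have hone : pts (Sum.inl i) i ≤ ∑ j, pts j i :=
      Finset.single_le_sum (fun j _ => hsum j) (Finset.mem_univ _)
    have : 0 < ∑ j, pts j i := lt_of_lt_of_le (by simpa [hpts] using hppos i) hone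
    have hxbi : xb i = n⁻¹ * ∑ j, pts j i := by
      simp [hxb, Finset.sum_apply, mul_add]
    rw [hxbi]
    positivity
  · intro b hb
    set χ : (Fin E → ℝ) →ₗ[ℝ] ℝ := dotL (L b) - dotL (L a) with hχ
    have hval : ∀ j, 0 ≤ χ (pts j) := by
      intro j
      have := (hptsmem j).2 b
      simp [hχ, LinearMap.sub_apply]
      linarith [this]
    have hone : χ (pts (Sum.inr b)) ≤ ∑ j, χ (pts j) :=
      Finset.single_le_sum (fun j _ => hval j) (Finset.mem_univ _)
    have hpos : 0 < ∑ j, χ (pts j) := by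
      refine lt_of_lt_of_le ?_ hone
      have := hqpos b hb
      simpa [hpts, hχ, LinearMap.sub_apply] using this
    have hχxb : χ xb = n⁻¹ * ∑ j, χ (pts j) := by
      rw [hxb, map_smul, map_sum]
      simp
    have : 0 < χ xb := by rw [hχxb]; positivity
    simpa [hχ, LinearMap.sub_apply] using this

lemma abs_dot_le {K E : ℕ} (L : Fin K → Fin E → ℝ) (hL : ∀ a i, L a i ∈ Set.Icc (0 : ℝ) 1)
    (a b : Fin K) (v : Fin E → ℝ) :
    |(dotL (L b) - dotL (L a)) v| ≤ E * ‖v‖ := by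
  simp only [LinearMap.sub_apply, dotL_apply, ← Finset.sum_sub_distrib]
  have h1 : ∀ i, |L b i * v i - L a i * v i| ≤ ‖v‖ := by
    intro i
    have h2 : L b i * v i - L a i * v i = (L b i - L a i) * v i := by ring
    rw [h2, abs_mul]
    have h3 : |L b i - L a i| ≤ 1 := by
      have hb' := hL b i; have ha' := hL a i
      simp only [Set.mem_Icc] at hb' ha'
      rw [abs_le]
      constructor <;> linarith [hb'.1, hb'.2, ha'.1, ha'.2]
    have h4 : |v i| ≤ ‖v‖ := by
      simpa using norm_le_pi_norm v i
    calc |L b i - L a i| * |v i| ≤ 1 * ‖v‖ := by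
          apply mul_le_mul h3 h4 (abs_nonneg _) zero_le_one
    _ = ‖v‖ := by ring
  calc |∑ i, (L b i * v i - L a i * v i)| ≤ ∑ i, |L b i * v i - L a i * v i| :=
        Finset.abs_sum_le_sum_abs _ _
  _ ≤ ∑ _i : Fin E, ‖v‖ := Finset.sum_le_sum fun i _ => h1 i
  _ = E * ‖v‖ := by simp [Finset.sum_const, nsmul_eq_mul]
/-! ### Margin ball -/

lemma exists_margin_ball {K E : ℕ} (hE : 0 < E) (hK : 0 < K) (L : Fin K → Fin E → ℝ)
    (hL : ∀ a i, L a i ∈ Set.Icc (0 : ℝ) 1) {a : Fin K} (hP : ParetoOptimal L a) :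
    ∃ (xb : Fin E → ℝ) (r ρ c₀ : ℝ), 0 < r ∧ 0 < ρ ∧ 0 < c₀ ∧ ∑ i, xb i = 1 ∧
      ∀ z, ∑ i, z i = 1 → ‖z - xb‖ ≤ r → z ∈ cell L a ∧ (∀ i, ρ ≤ z i) ∧
        ∀ b, L b ≠ L a → c₀ ≤ dotL (L b) z - dotL (L a) z := by
  classical
  obtain ⟨xb, hxmem, hxpos, hxphi⟩ := exists_interior_point hE hK L hP
  haveI : Nonempty (Fin E) := ⟨⟨0, hE⟩⟩
  haveI : Nonempty (Fin K) := ⟨⟨0, hK⟩⟩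
  have hne : (Finset.univ : Finset (Fin E)).Nonempty := Finset.univ_nonempty
  have hneK : (Finset.univ : Finset (Fin K)).Nonempty := Finset.univ_nonempty
  set m1 : ℝ := Finset.univ.inf' hne xb with hm1
  have hm1pos : 0 < m1 := by
    rw [hm1, Finset.lt_inf'_iff]
    exact fun i _ => hxpos i
  set f : Fin K → ℝ := fun b =>
    if L b = L a then 1 else dotL (L b) xb - dotL (L a) xb with hf
  set c1 : ℝ := Finset.univ.inf' hneK f with hc1
  have hc1pos : 0 < c1 := by
    rw [hc1, Finset.lt_inf'_iff]
    intro b _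
    by_cases hb : L b = L a
    · simp [hf, hb]
    · simp only [hf, hb, if_false]
      exact hxphi b hb
  have hEpos : (0:ℝ) < E := by positivity
  refine ⟨xb, min (m1/2) (c1/(2*E)), m1/2, c1/2, by positivity, by positivity, by positivity,
    hxmem.1.2, ?_⟩
  intro z hz hznorm
  have hrn1 : ‖z - xb‖ ≤ m1/2 := le_trans hznorm (min_le_left _ _)
  have hrn2 : ‖z - xb‖ ≤ c1/(2*E) := le_trans hznorm (min_le_right _ _)
  have hcoord : ∀ i, m1/2 ≤ z i := by
    intro i
    have h1 : |z i - xb i| ≤ ‖z - xb‖ := by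
      simpa [Real.norm_eq_abs] using norm_le_pi_norm (z - xb) i
    have h2 : m1 ≤ xb i := Finset.inf'_le xb (Finset.mem_univ i)
    have := abs_le.1 h1
    linarith [this.1]
  have hphi : ∀ b, L b ≠ L a → c1/2 ≤ dotL (L b) z - dotL (L a) z := by
    intro b hb
    have h1 : |(dotL (L b) - dotL (L a)) (z - xb)| ≤ E * ‖z - xb‖ := abs_dot_le L hL a b _
    have h2 : c1 ≤ dotL (L b) xb - dotL (L a) xb := by
      have := Finset.inf'_le f (Finset.mem_univ b)
      rw [hc1]
      exact this.trans_eq (by simp [hf, hb])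
    have h3 : (dotL (L b) - dotL (L a)) (z - xb) =
        (dotL (L b) z - dotL (L a) z) - (dotL (L b) xb - dotL (L a) xb) := by
      simp only [LinearMap.sub_apply, map_sub]
    have h4 : E * ‖z - xb‖ ≤ c1/2 := by
      calc E * ‖z - xb‖ ≤ E * (c1/(2*E)) := by
            apply mul_le_mul_of_nonneg_left hrn2 (le_of_lt hEpos)
      _ = c1/2 := by
            field_simp
    have := abs_le.1 h1
    linarith [this.1]
  have hsimplex : z ∈ probSimplex E := by
    refine ⟨fun i => ⟨by linarith [hcoord i], ?_⟩, hz⟩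
    calc z i ≤ ∑ j, z j :=
          Finset.single_le_sum (fun j _ => by linarith [hcoord j]) (Finset.mem_univ i)
    _ = 1 := hz
  refine ⟨⟨hsimplex, ?_⟩, hcoord, hphi⟩
  intro b
  by_cases hb : L b = L a
  · rw [hb]
  · have := hphi b hb
    simp only [dotL_apply] at this
    linarith

/-! ### Avoiding finitely many small affine subspaces -/

lemma exists_avoiding {E : ℕ} (hE : 0 < E) {ι : Type*} (s : Finset ι)
    (S : ι → AffineSubspace ℝ (Fin E → ℝ))
    (hS : ∀ i ∈ s, finrank ℝ (S i).direction + 2 ≤ E)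
    (xb : Fin E → ℝ) (hxb : ∑ i, xb i = 1) {r : ℝ} (hr : 0 < r) :
    ∃ x : Fin E → ℝ, ‖x - xb‖ ≤ r ∧ ∑ i, x i = 1 ∧
      ∀ i ∈ s, x ∉ (S i : Set (Fin E → ℝ)) := by
  classical
  by_contra hcon
  push_neg at hcon
  haveI : Nonempty (Fin E) := ⟨⟨0, hE⟩⟩
  set one : Fin E → ℝ := fun _ => 1 with hone
  set T : ι → AffineSubspace ℝ (Fin E → ℝ) := fun i =>
    if h : ((S i) : Set (Fin E → ℝ)).Nonempty then
      AffineSubspace.mk' h.choose ((S i).direction ⊔ Submodule.span ℝ {one})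
    else ⊥ with hT
  have hcover : Metric.ball xb (r/2) ⊆ ⋃ i ∈ s, (T i : Set (Fin E → ℝ)) := by
    intro y hy
    rw [Metric.mem_ball, dist_eq_norm] at hy
    set c : ℝ := (1 - ∑ i, y i)/E with hc
    set z : Fin E → ℝ := y + c • one with hzdef
    have hE' : (E:ℝ) ≠ 0 := by positivity
    have hzsum : ∑ i, z i = 1 := by
      simp only [hzdef, Pi.add_apply, Pi.smul_apply, hone, smul_eq_mul, mul_one]
      rw [Finset.sum_add_distrib, Finset.sum_const, Finset.card_univ, nsmul_eq_mul, hc]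
      field_simp
      simp only [Fintype.card_fin]; ring
    have hcnorm : |c| ≤ ‖y - xb‖ := by
      have h1 : (1:ℝ) - ∑ i, y i = ∑ i, (xb i - y i) := by
        rw [Finset.sum_sub_distrib, hxb]
      have h2 : |∑ i, (xb i - y i)| ≤ ∑ i, |xb i - y i| := Finset.abs_sum_le_sum_abs _ _
      have h3 : ∀ i, |xb i - y i| ≤ ‖y - xb‖ := by
        intro i
        rw [← norm_sub_rev]
        simpa [Real.norm_eq_abs] using norm_le_pi_norm (xb - y) i
      have h4 : ∑ i, |xb i - y i| ≤ E * ‖y - xb‖ := by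
        calc ∑ i, |xb i - y i| ≤ ∑ _i : Fin E, ‖y - xb‖ := Finset.sum_le_sum fun i _ => h3 i
        _ = E * ‖y - xb‖ := by simp [Finset.sum_const, nsmul_eq_mul]
      have h5 : |c| = |(1:ℝ) - ∑ i, y i| / E := by
        rw [hc, abs_div, abs_of_pos (show (0:ℝ) < E by positivity)]
      rw [h5, h1]
      rw [div_le_iff₀ (by positivity)]
      calc |∑ i, (xb i - y i)| ≤ E * ‖y - xb‖ := le_trans h2 h4
      _ = ‖y - xb‖ * E := by ring
    have hznorm : ‖z - xb‖ ≤ r := by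
      have h1 : z - xb = (y - xb) + c • one := by rw [hzdef]; abel
      have h2 : ‖c • one‖ ≤ |c| := by
        rw [norm_smul, Real.norm_eq_abs]
        have : ‖one‖ = 1 := by
          have : ∀ i : Fin E, ‖one i‖ = 1 := fun i => by simp [hone]
          simp [hone]
        rw [this, mul_one]
      calc ‖z - xb‖ ≤ ‖y - xb‖ + ‖c • one‖ := by rw [h1]; exact norm_add_le _ _
      _ ≤ ‖y - xb‖ + |c| := by linarith
      _ ≤ 2 * ‖y - xb‖ := by linarith
      _ ≤ r := by linarith
    obtain ⟨i, his, hzS⟩ := hcon z hznorm hzsum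
    have hSne : ((S i) : Set (Fin E → ℝ)).Nonempty := ⟨z, hzS⟩
    refine Set.mem_biUnion his ?_
    have hTi : T i = AffineSubspace.mk' hSne.choose
        ((S i).direction ⊔ Submodule.span ℝ {one}) := by
      rw [hT]; simp [hSne]
    rw [hTi]
    rw [SetLike.mem_coe, AffineSubspace.mem_mk']
    have h6 : y -ᵥ hSne.choose = (z -ᵥ hSne.choose) - c • one := by
      simp only [vsub_eq_sub, hzdef]; abel
    rw [h6]
    apply Submodule.sub_mem
    · exact Submodule.mem_sup_left (AffineSubspace.vsub_mem_direction hzS hSne.choose_spec)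
    · exact Submodule.mem_sup_right (Submodule.smul_mem _ _ (Submodule.mem_span_singleton_self _))
  have hvol0 : ∀ i ∈ s, MeasureTheory.volume ((T i : Set (Fin E → ℝ))) = 0 := by
    intro i his
    by_cases h : ((S i) : Set (Fin E → ℝ)).Nonempty
    · have hTi : T i = AffineSubspace.mk' h.choose
          ((S i).direction ⊔ Submodule.span ℝ {one}) := by rw [hT]; simp [h]
      have hone_ne : one ≠ 0 := by
        intro hco
        have := congrFun hco ⟨0, hE⟩
        simp [hone] at this
      have hfr : finrank ℝ ((S i).direction ⊔ Submodule.span ℝ {one} :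
          Submodule ℝ (Fin E → ℝ)) < E := by
        have h1 := Submodule.finrank_sup_add_finrank_inf_eq (S i).direction
          (Submodule.span ℝ {one})
        have h2 : finrank ℝ (Submodule.span ℝ {one} : Submodule ℝ (Fin E → ℝ)) = 1 :=
          finrank_span_singleton hone_ne
        have h3 := hS i his
        omega
      have hTne : T i ≠ ⊤ := by
        intro htop
        have := AffineSubspace.direction_top ℝ (Fin E → ℝ) (Fin E → ℝ)
        rw [hTi] at htop
        have hd : ((S i).direction ⊔ Submodule.span ℝ {one}) = ⊤ := by
          rw [← AffineSubspace.direction_mk' h.choose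
            ((S i).direction ⊔ Submodule.span ℝ {one}), htop, this]
        rw [hd] at hfr
        rw [finrank_top] at hfr
        simp [finrank_pi] at hfr
      exact MeasureTheory.Measure.addHaar_affineSubspace _ _ hTne
    · have hTi : T i = ⊥ := by rw [hT]; simp [h]
      rw [hTi]
      simp
  have hpos : 0 < MeasureTheory.volume (Metric.ball xb (r/2)) :=
    Metric.measure_ball_pos _ xb (by positivity)
  have hle : MeasureTheory.volume (Metric.ball xb (r/2)) ≤
      ∑ i ∈ s, MeasureTheory.volume ((T i : Set (Fin E → ℝ))) :=
    le_trans (MeasureTheory.measure_mono hcover) (MeasureTheory.measure_biUnion_finset_le s _)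
  rw [Finset.sum_eq_zero hvol0] at hle
  exact absurd (le_antisymm hle zero_le) (ne_of_gt hpos)
/-! ### Main geometric lemma -/

lemma sum_sub_eq_neg_phi {K E : ℕ} (L : Fin K → Fin E → ℝ) (a c : Fin K) (z : Fin E → ℝ) :
    ∑ i, (L a i - L c i) * z i = -((dotL (L c) - dotL (L a)) z) := by
  simp only [LinearMap.sub_apply, dotL_apply]
  rw [neg_sub, ← Finset.sum_sub_distrib]
  exact Finset.sum_congr rfl fun i _ => by ring

lemma exists_delta {K : ℕ} (hK : 0 < K) (F G : Fin K → ℝ) (A : ℝ) (hA : 0 < A)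
    (hG : ∀ b, 0 < G b) : ∃ δ : ℝ, 0 < δ ∧ δ ≤ A ∧ ∀ b, 0 < F b → δ * G b ≤ F b := by
  classical
  haveI : Nonempty (Fin K) := ⟨⟨0, hK⟩⟩
  have hne : (Finset.univ : Finset (Fin K)).Nonempty := Finset.univ_nonempty
  set f : Fin K → ℝ := fun b => if 0 < F b then F b / G b else A with hf
  refine ⟨min A (Finset.univ.inf' hne f), ?_, min_le_left _ _, ?_⟩
  · apply lt_min hA
    rw [Finset.lt_inf'_iff]
    intro b _
    by_cases hb : 0 < F b
    · simp only [hf, hb, if_true]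
      exact div_pos hb (hG b)
    · simp only [hf, hb, if_false]
      exact hA
  · intro b hb
    have h1 : min A (Finset.univ.inf' hne f) ≤ F b / G b := by
      refine le_trans (min_le_right _ _) ?_
      have := Finset.inf'_le f (Finset.mem_univ b)
      exact this.trans_eq (by simp [hf, hb])
    calc min A (Finset.univ.inf' hne f) * G b ≤ (F b / G b) * G b :=
          mul_le_mul_of_nonneg_right h1 (le_of_lt (hG b))
    _ = F b := by
          have hGb := ne_of_gt (hG b)
          field_simp

set_option maxHeartbeats 2000000 in
lemma main_a {K E : ℕ} (hK : 2 ≤ K) (hE : 2 ≤ E) (L : Fin K → Fin E → ℝ)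
    (hL : ∀ a i, L a i ∈ Set.Icc (0 : ℝ) 1) {a : Fin K} (hPa : ParetoOptimal L a) :
    ∃ ε > (0:ℝ), ∀ u ∈ probSimplex E, u ∉ cell L a →
      ∃ b, Neighbors L a b ∧ L b ≠ L a ∧ (0 ≤ ∑ i, (L a i - L b i) * u i) ∧
        ∀ c : Fin K, ∑ i, (L a i - L c i) * u i ≤ (∑ i, (L a i - L b i) * u i) / ε := by
  classical
  have hE0 : 0 < E := by omega
  have hK0 : 0 < K := by omega
  set φ : Fin K → ((Fin E → ℝ) →ₗ[ℝ] ℝ) := fun c => dotL (L c) - dotL (L a) with hφ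
  obtain ⟨xb, r, ρ, c₀, hr, hρ, hc₀, hxbsum, hball⟩ := exists_margin_ball hE0 hK0 L hL hPa
  refine ⟨c₀, hc₀, ?_⟩
  intro u hu hucell
  -- genericity: choose the base point x* avoiding bad affine subspaces
  set Bad : Finset (Fin K × Fin K) := Finset.univ.filter (fun p =>
    L p.1 ≠ L a ∧ L p.2 ≠ L a ∧
      finrank ℝ (Vsub E ⊓ LinearMap.ker (φ p.1) ⊓ LinearMap.ker (φ p.2) :
        Submodule ℝ (Fin E → ℝ)) + 3 ≤ E) with hBad
  set Zset : Fin K × Fin K → Set (Fin E → ℝ) := fun p =>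
    {z | ∑ i, z i = 1 ∧ φ p.1 z = 0 ∧ φ p.2 z = 0} with hZset
  set Sp : Fin K × Fin K → AffineSubspace ℝ (Fin E → ℝ) := fun p =>
    affineSpan ℝ ({u} ∪ Zset p) with hSp
  have hZW : ∀ p : Fin K × Fin K, ∀ w1 ∈ Zset p, ∀ w2 ∈ Zset p,
      w1 - w2 ∈ (Vsub E ⊓ LinearMap.ker (φ p.1) ⊓ LinearMap.ker (φ p.2) :
        Submodule ℝ (Fin E → ℝ)) := by
    rintro p w1 ⟨hs1, h11, h12⟩ w2 ⟨hs2, h21, h22⟩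
    refine Submodule.mem_inf.mpr ⟨Submodule.mem_inf.mpr ⟨?_, ?_⟩, ?_⟩
    · rw [mem_Vsub']
      simp only [Pi.sub_apply]
      rw [Finset.sum_sub_distrib, hs1, hs2]; ring
    · rw [LinearMap.mem_ker, map_sub, h11, h21]; ring
    · rw [LinearMap.mem_ker, map_sub, h12, h22]; ring
  have hSdim : ∀ p ∈ Bad, finrank ℝ (Sp p).direction + 2 ≤ E := by
    intro p hp
    rw [hBad, Finset.mem_filter] at hp
    obtain ⟨-, h1, h2, h3⟩ := hp
    rw [hSp]
    rw [direction_affineSpan]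
    by_cases hz : (Zset p).Nonempty
    · obtain ⟨z₀, hz₀⟩ := hz
      set W : Submodule ℝ (Fin E → ℝ) :=
        Vsub E ⊓ LinearMap.ker (φ p.1) ⊓ LinearMap.ker (φ p.2) with hW
      have hle : vectorSpan ℝ ({u} ∪ Zset p) ≤ W ⊔ Submodule.span ℝ {u - z₀} := by
        rw [vectorSpan_def, Submodule.span_le]
        rintro v ⟨x, hx, y, hy, rfl⟩
        show x - y ∈ (W ⊔ Submodule.span ℝ {u - z₀} : Submodule ℝ (Fin E → ℝ))
        rcases hx with hx | hx
        · rw [Set.mem_singleton_iff] at hx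
          subst hx
          rcases hy with hy | hy
          · rw [Set.mem_singleton_iff] at hy
            subst hy
            simp
          · have : x - y = (x - z₀) + (z₀ - y) := by abel
            rw [this]
            exact Submodule.add_mem _
              (Submodule.mem_sup_right (Submodule.mem_span_singleton_self _))
              (Submodule.mem_sup_left (hZW p z₀ hz₀ y hy))
        · rcases hy with hy | hy
          · rw [Set.mem_singleton_iff] at hy
            subst hy
            have : x - y = (x - z₀) - (y - z₀) := by abel
            rw [this]
            exact Submodule.sub_mem _
              (Submodule.mem_sup_left (hZW p x hx z₀ hz₀))
              (Submodule.mem_sup_right (Submodule.mem_span_singleton_self _))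
          · exact Submodule.mem_sup_left (hZW p x hx y hy)
      have h4 : finrank ℝ (vectorSpan ℝ ({u} ∪ Zset p)) ≤
          finrank ℝ (W ⊔ Submodule.span ℝ {u - z₀} : Submodule ℝ (Fin E → ℝ)) :=
        Submodule.finrank_mono hle
      have h5 := Submodule.finrank_sup_add_finrank_inf_eq W (Submodule.span ℝ {u - z₀})
      have h6 : finrank ℝ (Submodule.span ℝ {u - z₀} : Submodule ℝ (Fin E → ℝ)) ≤ 1 := by
        by_cases h : u - z₀ = 0
        · rw [h]
          have : Submodule.span ℝ ({0} : Set (Fin E → ℝ)) = ⊥ := Submodule.span_zero_singleton ℝ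
          rw [this]
          have h9 : finrank ℝ (⊥ : Submodule ℝ (Fin E → ℝ)) = 0 := finrank_bot ℝ _
          omega
        · rw [finrank_span_singleton h]
      omega
    · rw [Set.not_nonempty_iff_eq_empty] at hz
      rw [hz, Set.union_empty]
      have h7 : vectorSpan ℝ ({u} : Set (Fin E → ℝ)) = ⊥ := vectorSpan_singleton ℝ u
      rw [h7]
      have h8 : finrank ℝ (⊥ : Submodule ℝ (Fin E → ℝ)) = 0 := finrank_bot ℝ _
      omega
  obtain ⟨xs, hxsnorm, hxssum, hxsavoid⟩ := exists_avoiding hE0 Bad Sp hSdim xb hxbsum hr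
  obtain ⟨hxscell, hxscoord, hxsphi'⟩ := hball xs hxssum hxsnorm
  have hxsphi : ∀ b, L b ≠ L a → c₀ ≤ φ b xs := by
    intro b hb
    simpa [hφ, LinearMap.sub_apply] using hxsphi' b hb
  have hxssimplex : xs ∈ probSimplex E := hxscell.1
  -- the segment from x* to u
  set seg : ℝ → (Fin E → ℝ) := fun t => xs + t • (u - xs) with hseg
  have hseg0 : seg 0 = xs := by simp [hseg]
  have hseg1 : seg 1 = u := by simp [hseg]
  have hsegsum : ∀ t, ∑ i, seg t i = 1 := by
    intro t
    simp only [hseg, Pi.add_apply, Pi.smul_apply, Pi.sub_apply, smul_eq_mul]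
    rw [Finset.sum_add_distrib, ← Finset.mul_sum, Finset.sum_sub_distrib, hxssum, hu.2]
    ring
  have hsegconv : ∀ t, 0 ≤ t → t ≤ 1 → seg t ∈ probSimplex E := by
    intro t ht0 ht1
    have h1 : seg t = (1 - t) • xs + t • u := by
      funext i
      simp only [hseg, Pi.add_apply, Pi.smul_apply, Pi.sub_apply, smul_eq_mul]
      ring
    rw [h1]
    exact convex_probSimplex E hxssimplex hu (by linarith) ht0 (by ring)
  set T : Set ℝ := {t | t ∈ Set.Icc (0:ℝ) 1 ∧ seg t ∈ cell L a} with hTdef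
  have hT0 : (0:ℝ) ∈ T := ⟨⟨le_refl 0, by norm_num⟩, by rw [hseg0]; exact hxscell⟩
  have hTcompact : IsCompact T := by
    refine IsCompact.of_isClosed_subset isCompact_Icc ?_ (fun t ht => ht.1)
    refine IsClosed.inter isClosed_Icc ?_
    have hcont : Continuous seg := by
      have : Continuous fun t : ℝ => t • (u - xs) := continuous_id.smul continuous_const
      exact continuous_const.add this
    exact (isClosed_cell L a).preimage hcont
  set t1 : ℝ := sSup T with ht1def
  have ht1T : t1 ∈ T := hTcompact.sSup_mem ⟨0, hT0⟩
  have ht1max : ∀ t ∈ T, t ≤ t1 := fun t ht => le_csSup hTcompact.bddAbove ht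
  set w : Fin E → ℝ := seg t1 with hwdef
  have hwcell : w ∈ cell L a := ht1T.2
  have hwsum : ∑ i, w i = 1 := hsegsum t1
  have ht10 : 0 ≤ t1 := ht1T.1.1
  have ht11 : t1 ≤ 1 := ht1T.1.2
  have ht1lt : t1 < 1 := by
    rcases lt_or_eq_of_le ht11 with h | h
    · exact h
    · exfalso; apply hucell; rw [← hseg1, ← h]; exact hwcell
  have hwphi : ∀ c, 0 ≤ φ c w := by
    intro c
    have := hwcell.2 c
    simp only [hφ, LinearMap.sub_apply, dotL_apply]
    linarith
  have hphiseg : ∀ (c : Fin K) (t : ℝ), φ c (seg t) = φ c xs + t * (φ c u - φ c xs) := by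
    intro c t
    have h1 : seg t = xs + t • (u - xs) := rfl
    rw [h1, map_add, map_smul, map_sub]
    ring_nf
    try ring
  -- extraction of the exit constraint b-hat
  haveI : Nonempty (Fin K) := ⟨⟨0, hK0⟩⟩
  have hphirow : ∀ b, L b = L a → ∀ z, φ b z = 0 := by
    intro b hb z
    simp [hφ, LinearMap.sub_apply, hb]
  have hkey : ∃ bh, φ bh w = 0 ∧ L bh ≠ L a := by
    by_contra hcon
    push_neg at hcon
    obtain ⟨δ, hδpos, hδle, hδprop⟩ := exists_delta hK0 (fun b => φ b w)
      (fun b => |φ b u - φ b xs| + 1) ((1 - t1)/2) (by linarith)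
      (fun b => by positivity)
    have hφval : ∀ b, φ b (seg (t1 + δ)) = φ b w + δ * (φ b u - φ b xs) := by
      intro b
      have e1 := hphiseg b (t1 + δ)
      have e2 : φ b w = φ b xs + t1 * (φ b u - φ b xs) := by
        rw [hwdef]; exact hphiseg b t1
      rw [e1, e2]
      ring
    have ht' : t1 + δ ∈ T := by
      refine ⟨⟨by linarith, by linarith⟩, ?_⟩
      refine ⟨hsegconv (t1 + δ) (by linarith) (by linarith), ?_⟩
      intro b
      have hnn : 0 ≤ φ b (seg (t1 + δ)) := by
        by_cases hb : 0 < φ b w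
        · have h1 := hδprop b hb
          have hexp : δ * (|φ b u - φ b xs| + 1) = δ * |φ b u - φ b xs| + δ := by ring
          have hmul : δ * (-|φ b u - φ b xs|) ≤ δ * (φ b u - φ b xs) :=
            mul_le_mul_of_nonneg_left (neg_abs_le _) (le_of_lt hδpos)
          have hneg : δ * (-|φ b u - φ b xs|) = -(δ * |φ b u - φ b xs|) := by ring
          rw [hφval b]
          linarith
        · have hb0 : φ b w = 0 := le_antisymm (not_lt.1 hb) (hwphi b)
          have hrow := hcon b hb0
          rw [hφval b, hb0, hphirow b hrow u, hphirow b hrow xs]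
          simp
      simp only [hφ, LinearMap.sub_apply, dotL_apply] at hnn
      linarith
    have := ht1max _ ht'
    linarith
  obtain ⟨bh, hbhw, hbhrow⟩ := hkey
  have hbhxs : c₀ ≤ φ bh xs := hxsphi bh hbhrow
  have ht1pos : 0 < t1 := by
    rcases lt_or_eq_of_le ht10 with h | h
    · exact h
    · exfalso
      have hwx : w = xs := by rw [hwdef, ← h, hseg0]
      rw [hwx] at hbhw
      linarith
  have hbhu : φ bh u < 0 := by
    have e2 : φ bh w = φ bh xs + t1 * (φ bh u - φ bh xs) := by
      rw [hwdef]; exact hphiseg bh t1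
    rw [hbhw] at e2
    have harith : ∀ A B t c : ℝ, 0 < c → c ≤ A → 0 < t → t < 1 → 0 = A + t * (B - A) →
        B < 0 := by
      intro A B t c h1 h2 h3 h4 h5
      nlinarith
    exact harith (φ bh xs) (φ bh u) t1 c₀ hc₀ hbhxs ht1pos ht1lt e2
  have huw : u - w ∈ Vsub E := by
    rw [mem_Vsub']
    simp only [Pi.sub_apply]
    rw [Finset.sum_sub_distrib, hu.2, hwsum]; ring
  have hψuw : φ bh (u - w) < 0 := by
    rw [map_sub, hbhw]
    simpa using hbhu
  have hψxs : 0 < φ bh xs := lt_of_lt_of_le hc₀ hbhxs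
  -- the active set
  set Act : Finset (Fin K) := Finset.univ.filter (fun c => φ c w = 0 ∧ L c ≠ L a) with hAct
  have hbhAct : bh ∈ Act := by
    rw [hAct, Finset.mem_filter]
    exact ⟨Finset.mem_univ _, hbhw, hbhrow⟩
  have hframe : finrank ℝ (Vsub E ⊓ LinearMap.ker (φ bh) : Submodule ℝ (Fin E → ℝ)) = E - 2 := by
    have h1 := finrank_inf_ker (Vsub E) (φ bh) huw (ne_of_lt hψuw)
    have h2 := finrank_Vsub (E := E) hE0
    omega
  -- proportionality of active constraints
  have hprop : ∀ c ∈ Act, ∃ l : ℝ, ∀ v ∈ Vsub E, φ c v = l * φ bh v := by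
    intro c hc
    rw [hAct, Finset.mem_filter] at hc
    obtain ⟨-, hcw, hcrow⟩ := hc
    by_cases hbad : (bh, c) ∈ Bad
    · exfalso
      have hwZ : w ∈ Zset (bh, c) := ⟨hwsum, hbhw, hcw⟩
      have hxsS : xs ∈ (Sp (bh, c) : Set (Fin E → ℝ)) := by
        have hwu : w - u = (1 - t1) • (xs - u) := by
          funext i
          simp only [hwdef, hseg, Pi.add_apply, Pi.smul_apply, Pi.sub_apply, smul_eq_mul]
          ring
        have hxslm : xs = AffineMap.lineMap u w ((1 - t1)⁻¹ : ℝ) := by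
          have hne : (1 : ℝ) - t1 ≠ 0 := by linarith
          rw [AffineMap.lineMap_apply]
          simp only [vsub_eq_sub, vadd_eq_add]
          rw [hwu, smul_smul, inv_mul_cancel₀ hne, one_smul]
          abel
        have hmem : xs ∈ affineSpan ℝ ({u, w} : Set (Fin E → ℝ)) := by
          rw [hxslm]
          exact AffineMap.lineMap_mem_affineSpan_pair _ _ _
        have hsub : affineSpan ℝ ({u, w} : Set (Fin E → ℝ)) ≤ Sp (bh, c) := by
          apply affineSpan_mono
          rintro x (rfl | hx)
          · exact Or.inl rfl
          · rw [Set.mem_singleton_iff] at hx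
            subst hx
            exact Or.inr hwZ
        exact hsub hmem
      exact hxsavoid (bh, c) hbad hxsS
    · rw [hBad, Finset.mem_filter] at hbad
      push_neg at hbad
      have h1 := hbad (Finset.mem_univ _) hbhrow hcrow
      have hle : (Vsub E ⊓ LinearMap.ker (φ bh) ⊓ LinearMap.ker (φ c) : Submodule ℝ (Fin E → ℝ)) ≤
          Vsub E ⊓ LinearMap.ker (φ bh) := inf_le_left
      have heq : (Vsub E ⊓ LinearMap.ker (φ bh) ⊓ LinearMap.ker (φ c) : Submodule ℝ (Fin E → ℝ)) =
          Vsub E ⊓ LinearMap.ker (φ bh) := by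
        apply Submodule.eq_of_le_of_finrank_le hle
        rw [hframe]
        dsimp only at h1
        omega
      have hker : (Vsub E ⊓ LinearMap.ker (φ bh) : Submodule ℝ (Fin E → ℝ)) ≤
          LinearMap.ker (φ c) := by
        rw [← heq]
        exact inf_le_right
      exact exists_ratio hker huw (ne_of_lt hψuw)
  have hprop' : ∀ c, ∃ l : ℝ, c ∈ Act → ∀ v ∈ Vsub E, φ c v = l * φ bh v := by
    intro c
    by_cases hc : c ∈ Act
    · obtain ⟨l, hl⟩ := hprop c hc
      exact ⟨l, fun _ => hl⟩
    · exact ⟨0, fun h => absurd h hc⟩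
  choose Λ hΛ using hprop'
  have hxsw : xs - w ∈ Vsub E := by
    rw [mem_Vsub']
    simp only [Pi.sub_apply]
    rw [Finset.sum_sub_distrib, hxssum, hwsum]; ring
  have hActphi : ∀ c ∈ Act, φ c w = 0 ∧ L c ≠ L a := by
    intro c hc
    rw [hAct, Finset.mem_filter] at hc
    exact hc.2
  have hψw : φ bh w = 0 := hbhw
  have hΛval : ∀ c ∈ Act, Λ c * φ bh xs = φ c xs := by
    intro c hc
    have h1 := hΛ c hc (xs - w) hxsw
    rw [map_sub, map_sub, (hActphi c hc).1, hψw] at h1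
    linarith
  have hΛpos : ∀ c ∈ Act, 0 < Λ c := by
    intro c hc
    have h1 := hΛval c hc
    have h2 : c₀ ≤ φ c xs := hxsphi c (hActphi c hc).2
    by_contra hneg
    push_neg at hneg
    have h3 := mul_nonpos_iff.mpr (Or.inr ⟨hneg, le_of_lt hψxs⟩)
    linarith
  obtain ⟨bs, hbsAct, hbsmax⟩ := Act.exists_max_image Λ ⟨bh, hbhAct⟩
  have hbsw : φ bs w = 0 := (hActphi bs hbsAct).1
  have hbsrow : L bs ≠ L a := (hActphi bs hbsAct).2
  have hbspos : 0 < Λ bs := hΛpos bs hbsAct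
  have hbsprop : ∀ v ∈ Vsub E, φ bs v = Λ bs * φ bh v := hΛ bs hbsAct
  -- local ball radius at w
  have hwcoord : ∀ i, (1 - t1) * ρ ≤ w i := by
    intro i
    have h1 : w i = (1 - t1) * xs i + t1 * u i := by
      simp only [hwdef, hseg, Pi.add_apply, Pi.smul_apply, Pi.sub_apply, smul_eq_mul]
      ring
    have h2 : ρ ≤ xs i := hxscoord i
    have h3 : 0 ≤ u i := (hu.1 i).1
    rw [h1]
    have h4 := mul_le_mul_of_nonneg_left h2 (show (0:ℝ) ≤ 1 - t1 by linarith)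
    have h5 := mul_nonneg ht10 h3
    linarith
  obtain ⟨δ, hδpos, hδρ, hδprop⟩ := exists_delta hK0 (fun c => φ c w)
    (fun _ => (E:ℝ)) ((1 - t1) * ρ) (mul_pos (by linarith) hρ) (fun _ => by positivity)
  -- membership in the simplex for points near w
  have hsimplex_near : ∀ z : Fin E → ℝ, (∑ i, z i = 1) → ‖z - w‖ ≤ δ → z ∈ probSimplex E := by
    intro z hzsum hznorm
    have hcoord : ∀ i, 0 ≤ z i := by
      intro i
      have h1 : |z i - w i| ≤ ‖z - w‖ := by
        simpa [Real.norm_eq_abs] using norm_le_pi_norm (z - w) i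
      have h2 := hwcoord i
      have h3 := abs_le.1 h1
      linarith [h3.1]
    refine ⟨fun i => ⟨hcoord i, ?_⟩, hzsum⟩
    calc z i ≤ ∑ j, z j := Finset.single_le_sum (fun j _ => hcoord j) (Finset.mem_univ i)
    _ = 1 := hzsum
  have hphinear : ∀ (c : Fin K) (z : Fin E → ℝ), ‖z - w‖ ≤ δ → 0 < φ c w → 0 ≤ φ c z := by
    intro c z hznorm hcw
    have h1 : |φ c (z - w)| ≤ E * ‖z - w‖ := by
      simpa [hφ] using abs_dot_le L hL a c (z - w)
    have h2 : φ c (z - w) = φ c z - φ c w := by rw [map_sub]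
    have h3 : (E:ℝ) * ‖z - w‖ ≤ E * δ := by
      apply mul_le_mul_of_nonneg_left hznorm (by positivity)
    have h4 := hδprop c hcw
    have h5 := abs_le.1 h1
    have h6 : (E:ℝ) * δ = δ * E := mul_comm _ _
    linarith [h5.1]
  have hmemV : ∀ z : Fin E → ℝ, (∑ i, z i = 1) → z - w ∈ Vsub E := by
    intro z hz
    rw [mem_Vsub']
    simp only [Pi.sub_apply]
    rw [Finset.sum_sub_distrib, hz, hwsum]; ring
  -- main containments
  have hCb : ∀ z : Fin E → ℝ, (∑ i, z i = 1) → ‖z - w‖ ≤ δ → φ bh z ≤ 0 → z ∈ cell L bs := by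
    intro z hzsum hznorm hψz
    refine ⟨hsimplex_near z hzsum hznorm, ?_⟩
    intro c
    have hφbsz : φ bs z = Λ bs * φ bh z := by
      have h1 := hbsprop (z - w) (hmemV z hzsum)
      rw [map_sub, map_sub, hbsw, hψw] at h1
      linarith
    have hφbsz_le : φ bs z ≤ 0 := by
      rw [hφbsz]
      exact mul_nonpos_iff.mpr (Or.inl ⟨le_of_lt hbspos, hψz⟩)
    have hgoal : φ bs z ≤ φ c z := by
      by_cases hcrow : L c = L a
      · rw [hphirow c hcrow z]
        exact hφbsz_le
      · by_cases hcAct : c ∈ Act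
        · have hφcz : φ c z = Λ c * φ bh z := by
            have h1 := hΛ c hcAct (z - w) (hmemV z hzsum)
            rw [map_sub, map_sub, (hActphi c hcAct).1, hψw] at h1
            linarith
          rw [hφbsz, hφcz]
          exact mul_le_mul_of_nonpos_right (hbsmax c hcAct) hψz
        · have hcw : 0 < φ c w := by
            have h0 := hwphi c
            rcases lt_or_eq_of_le h0 with h | h
            · exact h
            · exfalso
              apply hcAct
              rw [hAct, Finset.mem_filter]
              exact ⟨Finset.mem_univ _, h.symm, hcrow⟩
          have := hphinear c z hznorm hcw
          linarith
    simp only [hφ, LinearMap.sub_apply, dotL_apply] at hgoal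
    linarith
  have hCa : ∀ z : Fin E → ℝ, (∑ i, z i = 1) → ‖z - w‖ ≤ δ → φ bh z = 0 → z ∈ cell L a := by
    intro z hzsum hznorm hψz
    refine ⟨hsimplex_near z hzsum hznorm, ?_⟩
    intro c
    have hgoal : (0:ℝ) ≤ φ c z := by
      by_cases hcrow : L c = L a
      · rw [hphirow c hcrow z]
      · by_cases hcAct : c ∈ Act
        · have hφcz : φ c z = Λ c * φ bh z := by
            have h1 := hΛ c hcAct (z - w) (hmemV z hzsum)
            rw [map_sub, map_sub, (hActphi c hcAct).1, hψw] at h1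
            linarith
          rw [hφcz, hψz]
          simp
        · have hcw : 0 < φ c w := by
            have h0 := hwphi c
            rcases lt_or_eq_of_le h0 with h | h
            · exact h
            · exfalso
              apply hcAct
              rw [hAct, Finset.mem_filter]
              exact ⟨Finset.mem_univ _, h.symm, hcrow⟩
          exact hphinear c z hznorm hcw
    simp only [hφ, LinearMap.sub_apply, dotL_apply] at hgoal
    linarith
  have hwbs : w ∈ cell L bs := hCb w hwsum (by simp [hδpos.le]) (le_of_eq hψw)
  -- dimension of the cell of bs
  have hVle : vectorSpan ℝ (cell L bs) ≤ Vsub E :=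
    vectorSpan_le_Vsub hE0 _ (fun z hz => hz.1.2)
  have hVge : Vsub E ≤ vectorSpan ℝ (cell L bs) := by
    intro v hv
    by_cases hv0 : v = 0
    · rw [hv0]; exact Submodule.zero_mem _
    · have hvpos : 0 < ‖v‖ := norm_pos_iff.2 hv0
      set v' : Fin E → ℝ := if φ bh v ≤ 0 then (δ/‖v‖) • v else -((δ/‖v‖) • v) with hv'
      have hv'V : v' ∈ Vsub E := by
        rw [hv']
        by_cases h : φ bh v ≤ 0
        · simp only [h, if_true]
          exact Submodule.smul_mem _ _ hv
        · simp only [h, if_false]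
          exact Submodule.neg_mem _ (Submodule.smul_mem _ _ hv)
      have hv'ψ : φ bh v' ≤ 0 := by
        rw [hv']
        by_cases h : φ bh v ≤ 0
        · simp only [h, if_true, map_smul, smul_eq_mul]
          exact mul_nonpos_iff.mpr (Or.inl ⟨by positivity, h⟩)
        · simp only [h, if_false, map_neg, map_smul, smul_eq_mul]
          push_neg at h
          have h2 : 0 ≤ (δ/‖v‖) * φ bh v := by positivity
          linarith
      have hv'norm : ‖v'‖ = δ := by
        have hbase : ‖(δ/‖v‖) • v‖ = δ := by
          rw [norm_smul, Real.norm_eq_abs, abs_of_pos (by positivity)]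
          field_simp
        rw [hv']
        by_cases h : φ bh v ≤ 0
        · simp only [h, if_true]; exact hbase
        · simp only [h, if_false, norm_neg]; exact hbase
      have hv'sum : ∑ i, v' i = 0 := mem_Vsub'.1 hv'V
      set z : Fin E → ℝ := w + v' with hz
      have hzsum : ∑ i, z i = 1 := by
        simp only [hz, Pi.add_apply]
        rw [Finset.sum_add_distrib, hwsum, hv'sum]; ring
      have hznorm : ‖z - w‖ ≤ δ := by
        have : z - w = v' := by rw [hz]; abel
        rw [this, hv'norm]
      have hzψ : φ bh z ≤ 0 := by
        rw [hz, map_add, hψw]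
        linarith
      have hzbs : z ∈ cell L bs := hCb z hzsum hznorm hzψ
      have hv'span : v' ∈ vectorSpan ℝ (cell L bs) := by
        have h1 := vsub_mem_vectorSpan ℝ hzbs hwbs
        have h2 : z -ᵥ w = v' := by rw [hz, vsub_eq_sub]; abel
        rwa [h2] at h1
      have hscale : (‖v‖/δ) • ((δ/‖v‖) • v) = v := by
        rw [smul_smul]
        have : ‖v‖/δ * (δ/‖v‖) = 1 := by field_simp
        rw [this, one_smul]
      by_cases h : φ bh v ≤ 0
      · have hve : v = (‖v‖/δ) • v' := by rw [hv']; simp only [h, if_true]; rw [hscale]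
        rw [hve]
        exact Submodule.smul_mem _ _ hv'span
      · have hve : v = -((‖v‖/δ) • v') := by
          rw [hv']; simp only [h, if_false]
          rw [smul_neg, neg_neg, hscale]
        rw [hve]
        exact Submodule.neg_mem _ (Submodule.smul_mem _ _ hv'span)
  have hVeq : vectorSpan ℝ (cell L bs) = Vsub E := le_antisymm hVle hVge
  have hPbs : ParetoOptimal L bs := by
    refine ⟨⟨w, hwbs⟩, ?_⟩
    unfold dimSet
    rw [direction_affineSpan, hVeq, finrank_Vsub hE0]
  -- the intersection of the two cells
  have hinter0 : ∀ z ∈ cell L a ∩ cell L bs, φ bh z = 0 := by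
    intro z hz
    have h1 : 0 ≤ φ bs z := by
      have := hz.1.2 bs
      simp only [hφ, LinearMap.sub_apply, dotL_apply]
      linarith
    have h2 : φ bs z ≤ 0 := by
      have := hz.2.2 a
      simp only [hφ, LinearMap.sub_apply, dotL_apply]
      linarith
    have h3 : φ bs z = Λ bs * φ bh z := by
      have h4 := hbsprop (z - w) (hmemV z hz.1.1.2)
      rw [map_sub, map_sub, hbsw, hψw] at h4
      linarith
    have h5 : φ bs z = 0 := le_antisymm h2 h1
    rw [h5] at h3
    have h6 := hbspos
    rcases mul_eq_zero.1 h3.symm with h | h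
    · exfalso; linarith
    · exact h
  have hIle : vectorSpan ℝ (cell L a ∩ cell L bs) ≤
      Vsub E ⊓ LinearMap.ker (φ bh) := by
    rw [vectorSpan_def, Submodule.span_le]
    rintro d ⟨x, hx, y, hy, rfl⟩
    show x - y ∈ (Vsub E ⊓ LinearMap.ker (φ bh) : Submodule ℝ (Fin E → ℝ))
    refine Submodule.mem_inf.mpr ⟨?_, ?_⟩
    · rw [mem_Vsub']
      simp only [Pi.sub_apply]
      rw [Finset.sum_sub_distrib, hx.1.1.2, hy.1.1.2]; ring
    · rw [LinearMap.mem_ker, map_sub, hinter0 x hx, hinter0 y hy]; ring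
  have hIge : (Vsub E ⊓ LinearMap.ker (φ bh) : Submodule ℝ (Fin E → ℝ)) ≤
      vectorSpan ℝ (cell L a ∩ cell L bs) := by
    intro v hv
    obtain ⟨hvV, hvk⟩ := Submodule.mem_inf.mp hv
    rw [LinearMap.mem_ker] at hvk
    by_cases hv0 : v = 0
    · rw [hv0]; exact Submodule.zero_mem _
    · have hvpos : 0 < ‖v‖ := norm_pos_iff.2 hv0
      set v' : Fin E → ℝ := (δ/‖v‖) • v with hv'
      have hv'V : v' ∈ Vsub E := Submodule.smul_mem _ _ hvV
      have hv'k : φ bh v' = 0 := by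
        rw [hv', map_smul, hvk, smul_zero]
      have hv'norm : ‖v'‖ = δ := by
        rw [hv', norm_smul, Real.norm_eq_abs, abs_of_pos (by positivity)]
        field_simp
      have hv'sum : ∑ i, v' i = 0 := mem_Vsub'.1 hv'V
      set z : Fin E → ℝ := w + v' with hz
      have hzsum : ∑ i, z i = 1 := by
        simp only [hz, Pi.add_apply]
        rw [Finset.sum_add_distrib, hwsum, hv'sum]; ring
      have hznorm : ‖z - w‖ ≤ δ := by
        have h1 : z - w = v' := by rw [hz]; abel
        rw [h1, hv'norm]
      have hzψ : φ bh z = 0 := by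
        rw [hz, map_add, hψw, hv'k]; ring
      have hzmem : z ∈ cell L a ∩ cell L bs :=
        ⟨hCa z hzsum hznorm hzψ, hCb z hzsum hznorm (le_of_eq hzψ)⟩
      have hwmem : w ∈ cell L a ∩ cell L bs := ⟨hwcell, hwbs⟩
      have hv'span : v' ∈ vectorSpan ℝ (cell L a ∩ cell L bs) := by
        have h1 := vsub_mem_vectorSpan ℝ hzmem hwmem
        have h2 : z -ᵥ w = v' := by rw [hz, vsub_eq_sub]; abel
        rwa [h2] at h1
      have hve : v = (‖v‖/δ) • v' := by
        rw [hv', smul_smul]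
        have h3 : ‖v‖/δ * (δ/‖v‖) = 1 := by field_simp
        rw [h3, one_smul]
      rw [hve]
      exact Submodule.smul_mem _ _ hv'span
  have hIeq : vectorSpan ℝ (cell L a ∩ cell L bs) =
      (Vsub E ⊓ LinearMap.ker (φ bh) : Submodule ℝ (Fin E → ℝ)) := le_antisymm hIle hIge
  have hNb : Neighbors L a bs := by
    refine ⟨hPa, hPbs, ⟨w, hwcell, hwbs⟩, ?_⟩
    unfold dimSet
    rw [direction_affineSpan, hIeq, hframe]
  -- the quantitative estimate
  have hsum1 : ∀ (c : Fin K) (z : Fin E → ℝ),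
      ∑ i, (L a i - L c i) * z i = -(φ c z) := by
    intro c z
    simp only [hφ]
    exact sum_sub_eq_neg_phi L a c z
  have hφbsxs : c₀ ≤ φ bs xs := hxsphi bs hbsrow
  set D : ℝ := (1 - t1)/t1 with hD
  have hDnn : 0 ≤ D := div_nonneg (by linarith) (le_of_lt ht1pos)
  have hBval : -(φ bs u) = D * φ bs xs := by
    have e2 : φ bs w = φ bs xs + t1 * (φ bs u - φ bs xs) := by
      rw [hwdef]; exact hphiseg bs t1
    rw [hbsw] at e2
    rw [hD, div_mul_eq_mul_div, eq_div_iff (ne_of_gt ht1pos)]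
    nlinarith [e2]
  refine ⟨bs, hNb, hbsrow, ?_, ?_⟩
  · rw [hsum1 bs u, hBval]
    have := mul_nonneg hDnn (le_trans (le_of_lt hc₀) hφbsxs)
    linarith
  · intro c
    rw [hsum1 c u, hsum1 bs u]
    have hcw0 : 0 ≤ φ c w := hwphi c
    have e3 : φ c w = φ c xs + t1 * (φ c u - φ c xs) := by
      rw [hwdef]; exact hphiseg c t1
    have hstep1 : -(φ c u) ≤ D * φ c xs := by
      rw [hD, div_mul_eq_mul_div, le_div_iff₀ ht1pos]
      nlinarith [e3, hcw0]
    have hφcxs_le : φ c xs ≤ 1 := by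
      have h1 := dot_mem_Icc (hL c) hxssimplex
      have h2 := dot_mem_Icc (hL a) hxssimplex
      simp only [hφ, LinearMap.sub_apply, dotL_apply]
      have := h1.2
      have := h2.1
      linarith
    have hstep2 : D * φ c xs ≤ D := by
      have := mul_le_mul_of_nonneg_left hφcxs_le hDnn
      linarith
    have hstep3 : D ≤ (D * φ bs xs) / c₀ := by
      rw [le_div_iff₀ hc₀]
      have := mul_le_mul_of_nonneg_left hφbsxs hDnn
      nlinarith
    rw [hBval]
    linarith
/-! ### Transfer along duplicates and final assembly -/

lemma pareto_congr {K E : ℕ} (L : Fin K → Fin E → ℝ) {b b' : Fin K} (h : L b' = L b)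
    (hP : ParetoOptimal L b) : ParetoOptimal L b' := by
  unfold ParetoOptimal at *
  rw [cell_congr L h]
  exact hP

lemma neighbors_congr {K E : ℕ} (L : Fin K → Fin E → ℝ) {a b b' : Fin K} (h : L b' = L b)
    (hN : Neighbors L a b) : Neighbors L a b' := by
  unfold Neighbors at *
  rw [cell_congr L h]
  exact ⟨hN.1, pareto_congr L h hN.2.1, hN.2.2⟩

theorem stmt2 {K E : ℕ} (hK : 2 ≤ K) (hE : 2 ≤ E)
    (L : Fin K → Fin E → ℝ) (hL : ∀ a i, L a i ∈ Set.Icc (0 : ℝ) 1)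
    (𝒜 : Finset (Fin K))
    (h𝒜P : ∀ a ∈ 𝒜, ParetoOptimal L a)
    (h𝒜D : ∀ a ∈ 𝒜, ∀ b ∈ 𝒜, L a = L b → a = b)
    (h𝒜max : ∀ B : Finset (Fin K), (∀ a ∈ B, ParetoOptimal L a) →
      (∀ a ∈ B, ∀ b ∈ B, L a = L b → a = b) → B.card ≤ 𝒜.card) :
    ∃ ε > (0 : ℝ), ∀ a ∈ 𝒜, ∀ a' ∈ 𝒜, ∀ u ∈ cell L a',
      ∃ b ∈ 𝒜, InNbhd L a b ∧
        ∑ i, (L a i - L a' i) * u i ≤ (∑ i, (L a i - L b i) * u i) / ε := by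
  classical
  -- representatives of duplicates inside 𝒜
  have hrep : ∀ b : Fin K, ParetoOptimal L b → ∃ b' ∈ 𝒜, L b' = L b := by
    intro b hPb
    by_contra hcon
    push_neg at hcon
    have hbnot : b ∉ 𝒜 := fun hb => hcon b hb rfl
    have hcard := h𝒜max (insert b 𝒜) ?_ ?_
    · rw [Finset.card_insert_of_notMem hbnot] at hcard
      omega
    · intro c hc
      rcases Finset.mem_insert.1 hc with rfl | hc
      · exact hPb
      · exact h𝒜P c hc
    · intro c hc d hd hcd
      rcases Finset.mem_insert.1 hc with hc1 | hc1
      · rcases Finset.mem_insert.1 hd with hd1 | hd1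
        · rw [hc1, hd1]
        · exact absurd (by rw [← hc1]; exact hcd.symm) (hcon d hd1)
      · rcases Finset.mem_insert.1 hd with hd1 | hd1
        · exact absurd (by rw [← hd1]; exact hcd) (hcon c hc1)
        · exact h𝒜D c hc1 d hd1 hcd
  have hchoice : ∀ a : Fin K, ∃ e : ℝ, 0 < e ∧ (a ∈ 𝒜 →
      ∀ u ∈ probSimplex E, u ∉ cell L a →
        ∃ b, Neighbors L a b ∧ L b ≠ L a ∧ (0 ≤ ∑ i, (L a i - L b i) * u i) ∧
          ∀ c : Fin K, ∑ i, (L a i - L c i) * u i ≤ (∑ i, (L a i - L b i) * u i) / e) := by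
    intro a
    by_cases ha : a ∈ 𝒜
    · obtain ⟨e, he, hprop⟩ := main_a hK hE L hL (h𝒜P a ha)
      exact ⟨e, he, fun _ => hprop⟩
    · exact ⟨1, one_pos, fun h => absurd h ha⟩
  choose f hfpos hfprop using hchoice
  haveI : Nonempty (Fin K) := ⟨⟨0, by omega⟩⟩
  have hne : (Finset.univ : Finset (Fin K)).Nonempty := Finset.univ_nonempty
  set ε : ℝ := Finset.univ.inf' hne f with hεdef
  have hεpos : 0 < ε := by
    rw [hεdef, Finset.lt_inf'_iff]
    exact fun a _ => hfpos a
  refine ⟨ε, hεpos, ?_⟩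
  intro a ha a' ha' u hu
  have hεa : ε ≤ f a := Finset.inf'_le f (Finset.mem_univ a)
  by_cases hua : u ∈ cell L a
  · refine ⟨a, ha, Or.inl rfl, ?_⟩
    have h1 : ∑ i, (L a i - L a i) * u i = 0 := by simp
    rw [h1]
    have h2 := hua.2 a'
    have h3 : ∑ i, (L a i - L a' i) * u i = ∑ i, L a i * u i - ∑ i, L a' i * u i := by
      rw [← Finset.sum_sub_distrib]
      exact Finset.sum_congr rfl fun i _ => by ring
    rw [h3]
    simp
    linarith
  · obtain ⟨b, hNb, hbrow, hbnn, hbineq⟩ := hfprop a ha u hu.1 hua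
    obtain ⟨b', hb'mem, hb'row⟩ := hrep b hNb.2.1
    refine ⟨b', hb'mem, Or.inr ⟨neighbors_congr L hb'row hNb, ?_⟩, ?_⟩
    · rw [hb'row]; exact hbrow
    · have hsums : ∑ i, (L a i - L b' i) * u i = ∑ i, (L a i - L b i) * u i := by
        simp only [hb'row]
      rw [hsums]
      calc ∑ i, (L a i - L a' i) * u i ≤ (∑ i, (L a i - L b i) * u i) / f a := hbineq a'
      _ ≤ (∑ i, (L a i - L b i) * u i) / ε :=
          div_le_div_of_nonneg_left hbnn hεpos hεa
end

section
/- Let K, E ≥ 2 be integers and L ∈ [0,1]^{K×E} a loss matrix with rows ℓ_a. If actions a and b satisfy C_a ∩ C_b = ∅ (i.e., they are not weak neighbors), then there exists ε > 0 such that for all u ∈ 𝒫_{E−1}: ⟨ℓ_a, u⟩ + ⟨ℓ_b, u⟩ − 2·min_{c∈[K]} ⟨ℓ_c, u⟩ ≥ ε. -/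
open scoped BigOperators

/-- `min_{c ∈ [K]} ⟨ℓ_c, u⟩`. -/
noncomputable def minLoss {K E : ℕ} (L : Fin K → Fin E → ℝ) (u : Fin E → ℝ) : ℝ :=
  ⨅ c : Fin K, ∑ i, L c i * u i

theorem stmt4 {K E : ℕ} (hK : 2 ≤ K) (hE : 2 ≤ E)
    (L : Fin K → Fin E → ℝ) (hL : ∀ a i, L a i ∈ Set.Icc (0 : ℝ) 1)
    (a b : Fin K) (h : cell L a ∩ cell L b = ∅) :
    ∃ ε > (0 : ℝ), ∀ u ∈ probSimplex E,
      ε ≤ (∑ i, L a i * u i) + (∑ i, L b i * u i) - 2 * minLoss L u := by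
  have hKpos : 0 < K := by omega
  have hEpos : 0 < E := by omega
  haveI : NeZero K := ⟨by omega⟩
  haveI : NeZero E := ⟨by omega⟩
  -- minLoss via Finset.inf'
  have hne : (Finset.univ : Finset (Fin K)).Nonempty := Finset.univ_nonempty
  have hmin : ∀ u, minLoss L u = Finset.univ.inf' hne (fun c => ∑ i, L c i * u i) := by
    intro u
    rw [minLoss, ← Finset.inf'_univ_eq_ciInf]
  have hmin_le : ∀ (u : Fin E → ℝ) (c : Fin K), minLoss L u ≤ ∑ i, L c i * u i := by
    intro u c
    rw [hmin]
    exact Finset.inf'_le _ (Finset.mem_univ c)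
  -- the function f
  set f : (Fin E → ℝ) → ℝ :=
    fun u => (∑ i, L a i * u i) + (∑ i, L b i * u i) - 2 * minLoss L u with hf
  have hcont_sum : ∀ c : Fin K, Continuous (fun u : Fin E → ℝ => ∑ i, L c i * u i) := by
    intro c
    exact continuous_finset_sum _ fun i _ => continuous_const.mul (continuous_apply i)
  have hcont : Continuous f := by
    have hm : Continuous (fun u => minLoss L u) := by
      have := Continuous.finset_inf'_apply (f := fun c (u : Fin E → ℝ) => ∑ i, L c i * u i)
        hne (fun c _ => hcont_sum c)
      simpa [funext hmin] using this
    exact (((hcont_sum a).add (hcont_sum b)).sub (continuous_const.mul hm))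
  -- compactness of the simplex
  have hclosed : IsClosed (probSimplex E) := by
    have h1 : IsClosed {u : Fin E → ℝ | ∀ i, 0 ≤ u i ∧ u i ≤ 1} := by
      have : {u : Fin E → ℝ | ∀ i, 0 ≤ u i ∧ u i ≤ 1} =
          ⋂ i, ((fun u : Fin E → ℝ => u i) ⁻¹' Set.Icc 0 1) := by
        ext u; simp [Set.mem_iInter, Set.mem_Icc]
      rw [this]
      exact isClosed_iInter fun i => (isClosed_Icc).preimage (continuous_apply i)
    have h2 : IsClosed {u : Fin E → ℝ | ∑ i, u i = 1} :=
      isClosed_eq (continuous_finset_sum _ fun i _ => continuous_apply i) continuous_const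
    exact h1.inter h2
  have hcompact : IsCompact (probSimplex E) := by
    have hsub : probSimplex E ⊆ Set.Icc (fun _ => (0:ℝ)) (fun _ => (1:ℝ)) := by
      intro u hu
      constructor
      · intro i; exact (hu.1 i).1
      · intro i; exact (hu.1 i).2
    exact (isCompact_Icc).of_isClosed_subset hclosed hsub
  have hsne : (probSimplex E).Nonempty := by
    refine ⟨fun _ => (E : ℝ)⁻¹, ⟨fun i => ⟨by positivity, ?_⟩, ?_⟩⟩
    · rw [inv_le_one_iff₀]; right; exact_mod_cast hEpos
    · rw [Finset.sum_const, Finset.card_univ, Fintype.card_fin, nsmul_eq_mul]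
      field_simp
  obtain ⟨u0, hu0, hu0min⟩ := hcompact.exists_isMinOn hsne hcont.continuousOn
  refine ⟨f u0, ?_, fun u hu => hu0min hu⟩
  -- positivity
  have hge : 0 ≤ f u0 := by
    have h1 := hmin_le u0 a
    have h2 := hmin_le u0 b
    simp only [hf]; linarith
  rcases lt_or_eq_of_le hge with hlt | heq
  · exact hlt
  · exfalso
    have h1 := hmin_le u0 a
    have h2 := hmin_le u0 b
    have heqa : ∑ i, L a i * u0 i = minLoss L u0 := by
      simp only [hf] at heq; linarith
    have heqb : ∑ i, L b i * u0 i = minLoss L u0 := by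
      simp only [hf] at heq; linarith
    have : u0 ∈ cell L a ∩ cell L b := by
      constructor
      · exact ⟨hu0, fun c => heqa ▸ hmin_le u0 c⟩
      · exact ⟨hu0, fun c => heqb ▸ hmin_le u0 c⟩
    rw [h] at this
    exact this
end

section
/- Let E, F ≥ 1 be integers, let φ, ψ : [E] → [F] be maps, and let Δ ∈ [−1,1]^E. Suppose there exist functions f, g : [F] → ℝ with f(φ(i)) + g(ψ(i)) = Δ_i for all i ∈ [E]. Then there exist functions f', g' : [F] → ℝ with f'(φ(i)) + g'(ψ(i)) = Δ_i for all i ∈ [E] and max(max_{h∈[F]} |f'(h)|, max_{h∈[F]} |g'(h)|) ≤ 1 + F. -/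
open SimpleGraph

theorem stmt6 (E F : ℕ) (hE : 1 ≤ E) (hF : 1 ≤ F)
    (φ ψ : Fin E → Fin F) (Δ : Fin E → ℝ) (hΔ : ∀ i, |Δ i| ≤ 1)
    (h : ∃ f g : Fin F → ℝ, ∀ i, f (φ i) + g (ψ i) = Δ i) :
    ∃ f' g' : Fin F → ℝ, (∀ i, f' (φ i) + g' (ψ i) = Δ i) ∧
      (∀ h : Fin F, |f' h| ≤ 1 + F) ∧ (∀ h : Fin F, |g' h| ≤ 1 + F) := by
  classical
  obtain ⟨f, g, hfg⟩ := h
  set x : (Fin F ⊕ Fin F) → ℝ := Sum.elim f (fun b => -g b) with hx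
  set G : SimpleGraph (Fin F ⊕ Fin F) :=
    SimpleGraph.fromRel (fun u v => ∃ i, u = Sum.inl (φ i) ∧ v = Sum.inr (ψ i)) with hG
  have hadj : ∀ {u v}, G.Adj u v → |x u - x v| ≤ 1 := by
    intro u v huv
    rw [hG, SimpleGraph.fromRel_adj] at huv
    rcases huv.2 with ⟨i, rfl, rfl⟩ | ⟨i, rfl, rfl⟩
    · simpa [hx, sub_neg_eq_add, hfg i] using hΔ i
    · rw [abs_sub_comm]
      simpa [hx, sub_neg_eq_add, hfg i] using hΔ i
  have hwalk : ∀ {u v} (p : G.Walk u v), |x u - x v| ≤ p.length := by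
    intro u v p
    induction p with
    | nil => simp
    | @cons a b c hab p ih =>
      have := abs_sub_le (x a) (x b) (x c)
      have h1 := hadj hab
      rw [SimpleGraph.Walk.length_cons]
      push_cast
      linarith
  have hreach : ∀ {u v}, G.Reachable u v → |x u - x v| ≤ 2 * F - 1 := by
    intro u v huv
    obtain ⟨p⟩ := huv
    have hlt := (p.toPath.2).length_lt
    have hcard : Fintype.card (Fin F ⊕ Fin F) = 2 * F := by
      simp [Fintype.card_sum]; ring
    rw [hcard] at hlt
    have : ((p.toPath.1.length : ℝ)) ≤ 2 * F - 1 := by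
      have : (p.toPath.1.length : ℝ) + 1 ≤ 2 * F := by exact_mod_cast hlt
      linarith
    exact le_trans (hwalk p.toPath.1) this
  -- reachable set and component max
  let S : (Fin F ⊕ Fin F) → Finset (Fin F ⊕ Fin F) :=
    fun u => Finset.univ.filter (fun v => G.Reachable u v)
  have hmemS : ∀ u, u ∈ S u := by
    intro u
    simp only [S, Finset.mem_filter, Finset.mem_univ, true_and]
    exact SimpleGraph.Reachable.refl u
  have hSne : ∀ u, (S u).Nonempty := fun u => ⟨u, hmemS u⟩
  let m : (Fin F ⊕ Fin F) → ℝ := fun u => (S u).sup' (hSne u) x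
  have hSeq : ∀ {u v}, G.Reachable u v → S u = S v := by
    intro u v huv
    ext w
    simp only [S, Finset.mem_filter, Finset.mem_univ, true_and]
    exact ⟨fun hw => huv.symm.trans hw, fun hw => huv.trans hw⟩
  have hmeq : ∀ {u v}, G.Reachable u v → m u = m v := by
    intro u v huv; simp only [m, hSeq huv]
  have hxle : ∀ u, x u ≤ m u := fun u => Finset.le_sup' x (hmemS u)
  have hmle : ∀ u, m u ≤ x u + (2 * F - 1) := by
    intro u
    obtain ⟨w, hw, hweq⟩ := Finset.exists_mem_eq_sup' (hSne u) x
    have hmw : m u = x w := hweq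
    have hr : G.Reachable u w := by
      simpa [S] using hw
    have h3 := abs_le.mp (hreach hr)
    linarith [h3.1, hmw]
  refine ⟨fun a => f a - m (Sum.inl a) + ((F:ℝ) - 1/2), fun b => g b + m (Sum.inr b) - ((F:ℝ) - 1/2), ?_, ?_, ?_⟩
  · intro i
    have hadjE : G.Adj (Sum.inl (φ i)) (Sum.inr (ψ i)) := by
      rw [hG, SimpleGraph.fromRel_adj]
      exact ⟨by simp, Or.inl ⟨i, rfl, rfl⟩⟩
    have heq := hmeq hadjE.reachable
    have := hfg i
    show f (φ i) - m (Sum.inl (φ i)) + ((F:ℝ) - 1/2) + (g (ψ i) + m (Sum.inr (ψ i)) - ((F:ℝ) - 1/2)) = Δ i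
    linarith
  · intro a
    have h1 := hxle (Sum.inl a)
    have h2 := hmle (Sum.inl a)
    simp only [hx, Sum.elim_inl] at h1 h2
    have hF1 : (1:ℝ) ≤ F := by exact_mod_cast hF
    show |f a - m (Sum.inl a) + ((F:ℝ) - 1/2)| ≤ 1 + F
    rw [abs_le]
    constructor <;> linarith
  · intro b
    have h1 := hxle (Sum.inr b)
    have h2 := hmle (Sum.inr b)
    simp only [hx, Sum.elim_inr] at h1 h2
    have hF1 : (1:ℝ) ≤ F := by exact_mod_cast hF
    show |g b + m (Sum.inr b) - ((F:ℝ) - 1/2)| ≤ 1 + F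
    rw [abs_le]
    constructor <;> linarith
end

section
/- Let (Ω, ℱ, (ℱ_t)_{t=0}^n, P) be a filtered probability space, K ∈ ℕ, 𝒜 ⊆ [K] nonempty, and η > 0. Let (Z_t)_{t∈[n]} be an ℝ^K-valued predictable process (Z_t is ℱ_{t−1}-measurable), (Ẑ_t)_{t∈[n]} an ℝ^K-valued adapted process, (β_t)_{t∈[n]} an ℝ^K-valued predictable process, and set Z̃_t = Ẑ_t − β_t. Define Q_{ta} = 1{a ∈ 𝒜}·exp(−η·∑_{s=1}^{t−1} Z̃_{sa}) / ∑_{b∈𝒜} exp(−η·∑_{s=1}^{t−1} Z̃_{sb}). Assume that almost surely for all t ∈ [n] and a ∈ 𝒜: (a) η·|Ẑ_{ta}| ≤ 1; (b) η·β_{ta} ≤ 1; (c) η·E[Ẑ_{ta}² | ℱ_{t−1}] ≤ β_{ta}; (d) E[Ẑ_{ta} | ℱ_{t−1}] = Z_{ta}. Let A* be an 𝒜-valued random variable with A* ∈ argmin_{a∈𝒜} ∑_{t=1}^n Z_{ta}. Then for every δ with 0 < δ ≤ 1/(K+1), with probability at least 1 − (K+1)δ: ∑_{t=1}^n ∑_{a∈𝒜}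 Q_{ta}·(Z_{ta} − Z_{tA*}) ≤ (3/η)·log(1/δ) + η·∑_{t=1}^n ∑_{a∈𝒜} Q_{ta}·Ẑ_{ta}² + 5·∑_{t=1}^n ∑_{a∈𝒜} Q_{ta}·β_{ta}. -/
open MeasureTheory Finset
open scoped BigOperators ENNReal NNReal


lemma L0 {x : ℝ} (hx : |x| ≤ 1) :
    Real.exp x ≤ 1 + x + x^2/2 + x^3/6 + (5/96)*x^4 := by
  have h := Real.exp_bound hx (n := 4) (by norm_num)
  have hs : ∑ m ∈ range 4, x ^ m / m.factorial = 1 + x + x^2/2 + x^3/6 := by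
    norm_num [Finset.sum_range_succ, Nat.factorial]
  rw [hs] at h
  have h2 := (abs_sub_le_iff.1 h).1
  have h3 : |x| ^ 4 = x ^ 4 := by
    rw [← abs_pow, abs_of_nonneg (by positivity)]
  rw [h3] at h2
  have h4 : ((Nat.succ 4 : ℕ) : ℝ) / ((Nat.factorial 4 : ℕ) * (4:ℕ)) = 5/96 := by
    norm_num [Nat.factorial]
  rw [h4] at h2
  linarith

lemma L2 {x : ℝ} (hx : |x| ≤ 6/7) : Real.exp x ≤ 1 + x + (7/10)*x^2 := by
  have h1 : |x| ≤ 1 := hx.trans (by norm_num)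
  have h := L0 h1
  obtain ⟨hl, hr⟩ := abs_le.1 hx
  nlinarith [mul_nonneg (sq_nonneg x) (sub_nonneg.2 hr),
    mul_nonneg (sq_nonneg x) (by linarith : (0:ℝ) ≤ x + 6/7), sq_nonneg x]

lemma L1 {s : ℝ} (hs : |s| ≤ 6/5) : Real.exp s ≤ 1 + s + (5/6)*s^2 := by
  obtain ⟨hl, hr⟩ := abs_le.1 hs
  have hu : |s/2| ≤ 1 := by rw [abs_div, abs_two]; linarith
  have h := L0 hu
  have he : Real.exp s = (Real.exp (s/2))^2 := by
    rw [← Real.exp_nat_mul]; push_cast; ring_nf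
  have hpos : (0:ℝ) ≤ Real.exp (s/2) := (Real.exp_pos _).le
  have h2 : (Real.exp (s/2))^2 ≤ (1 + s/2 + (s/2)^2/2 + (s/2)^3/6 + (5/96)*(s/2)^4)^2 :=
    pow_le_pow_left₀ hpos h 2
  rw [he]
  refine h2.trans ?_
  nlinarith [mul_nonneg (sq_nonneg s) (sub_nonneg.2 hr),
    mul_nonneg (mul_nonneg (sq_nonneg s) (sub_nonneg.2 hr)) (sub_nonneg.2 hr),
    mul_nonneg (sq_nonneg (s^2)) (sub_nonneg.2 hr),
    mul_nonneg (sq_nonneg s) (by linarith : (0:ℝ) ≤ s + 6/5),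
    mul_nonneg (mul_nonneg (sq_nonneg s) (by linarith : (0:ℝ) ≤ s + 6/5)) (by linarith : (0:ℝ) ≤ 6/5 - s),
    sq_nonneg s, sq_nonneg (s^2), sq_nonneg (s^3)]

lemma L3 {v : ℝ} (h0 : 0 ≤ v) (h1 : v ≤ 1) : Real.exp v ≤ 1 + (Real.exp 1 - 1) * v := by
  have := convexOn_exp.2 (Set.mem_univ (0:ℝ)) (Set.mem_univ (1:ℝ)) (by linarith : (0:ℝ) ≤ 1 - v) h0 (by ring)
  simp only [smul_eq_mul, mul_zero, mul_one, Real.exp_zero, zero_add] at this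
  have h2 : Real.exp v ≤ (1-v) * 1 + v * Real.exp 1 := by simpa using this
  linarith

set_option maxHeartbeats 1000000 in
lemma L4 {u v : ℝ} (hu : |u| ≤ 1) (hv0 : 0 ≤ v) (hv1 : v ≤ 1) :
    Real.exp (v - u) ≤ 1 - u + u^2 + (22/5)*v := by
  obtain ⟨hul, hur⟩ := abs_le.1 hu
  have hneg : |(-u)| ≤ 1 := by rwa [abs_neg]
  have h1 := L0 hneg
  have hE : Real.exp (-u) ≤ 1 - u + u^2/2 - u^3/6 + (5/96)*u^4 := by nlinarith [h1]
  have h2 := L3 hv0 hv1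
  have he : Real.exp (v - u) = Real.exp v * Real.exp (-u) := by
    rw [← Real.exp_add]; ring_nf
  rw [he]
  set e := Real.exp 1 with hedef
  have hc0 : (0:ℝ) ≤ e - 1 := by
    have := Real.add_one_le_exp (1:ℝ); rw [← hedef] at this; linarith
  have hev : e - 1 ≤ 1.7182818286 := by
    have := Real.exp_one_lt_d9; rw [← hedef] at this; norm_num at this ⊢; linarith
  set P : ℝ := 1 - u + u^2/2 - u^3/6 + (5/96)*u^4 with hPdef
  have hP0 : (0:ℝ) ≤ P := le_trans (Real.exp_pos _).le hE
  have hsqu : (0:ℝ) ≤ 1 - u^2 := by nlinarith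
  have hpoly1 : P ≤ 1 - u + u^2 - (27/96)*u^2 := by
    nlinarith [mul_nonneg (sq_nonneg u) (by linarith : (0:ℝ) ≤ 1 + u),
      mul_nonneg (sq_nonneg u) hsqu]
  have hpoly2 : P ≤ 1 - u + (69/96)*u^2 := by
    nlinarith [mul_nonneg (sq_nonneg u) (by linarith : (0:ℝ) ≤ 1 + u),
      mul_nonneg (sq_nonneg u) hsqu]
  have hP : Real.exp v * Real.exp (-u) ≤ (1 + (e - 1)*v) * P := by
    apply mul_le_mul h2 hE (Real.exp_pos _).le (by nlinarith [mul_nonneg hc0 hv0])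
  refine hP.trans ?_
  have hKey : (e-1)*v * P ≤ (e-1)*v * (1 - u + (69/96)*u^2) :=
    mul_le_mul_of_nonneg_left hpoly2 (mul_nonneg hc0 hv0)
  have hA0 : (0:ℝ) ≤ v*(1-u) := mul_nonneg hv0 (by linarith)
  have hA : v*(1-u) ≤ 2*v := by nlinarith
  have hB0 : (0:ℝ) ≤ v*u^2 := mul_nonneg hv0 (sq_nonneg u)
  have hsplit : v * u^2 ≤ (2275/10000)*u^2 + (7725/10000)*v := by
    nlinarith [mul_nonneg (by linarith : (0:ℝ) ≤ 1-v) (sq_nonneg u), mul_nonneg hv0 hsqu]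
  have h5 : (e-1)*(v*(1-u)) ≤ 1.7182818286*(2*v) :=
    mul_le_mul hev hA hA0 (by norm_num)
  have h6 : (e-1)*(v*u^2) ≤ 1.7182818286*((2275/10000)*u^2+(7725/10000)*v) :=
    mul_le_mul hev hsplit hB0 (by norm_num)
  have hexpand : (e-1)*v * (1 - u + (69/96)*u^2)
      = (e-1)*(v*(1-u)) + (69/96)*((e-1)*(v*u^2)) := by ring
  have hgoal : (1 + (e-1)*v) * P = P + (e-1)*v*P := by ring
  rw [hgoal]
  rw [hexpand] at hKey
  nlinarith [sq_nonneg u, hKey, hpoly1, h5, h6]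

section Det
variable {K : ℕ} (n : ℕ) (𝒜 : Finset (Fin K)) (η : ℝ)
  (zh bt : ℕ → Fin K → ℝ)

noncomputable def Wf : ℕ → ℝ := fun t =>
  ∑ b ∈ 𝒜, Real.exp (-η * ∑ s ∈ Icc 1 t, (zh s b - bt s b))

lemma Wf_pos (h𝒜 : 𝒜.Nonempty) (t : ℕ) : 0 < Wf 𝒜 η zh bt t :=
  Finset.sum_pos (fun a _ => Real.exp_pos _) h𝒜

set_option maxHeartbeats 1000000 in
lemma det_lemma (h𝒜 : 𝒜.Nonempty) (hη : 0 < η)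
    (q : ℕ → Fin K → ℝ)
    (hq : ∀ t a, q t a =
      (if a ∈ 𝒜 then Real.exp (-η * ∑ s ∈ Icc 1 (t - 1), (zh s a - bt s a)) else 0) /
        ∑ b ∈ 𝒜, Real.exp (-η * ∑ s ∈ Icc 1 (t - 1), (zh s b - bt s b)))
    (hbound : ∀ t ∈ Icc 1 n, ∀ a ∈ 𝒜, η*|zh t a| ≤ 1 ∧ 0 ≤ η * bt t a ∧ η * bt t a ≤ 1)
    (astar : Fin K) (hastar : astar ∈ 𝒜) :
    ∑ t ∈ Icc 1 n, ∑ a ∈ 𝒜, q t a * zh t a ≤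
      (∑ t ∈ Icc 1 n, (zh t astar - bt t astar)) + Real.log (𝒜.card) / η
        + η * ∑ t ∈ Icc 1 n, ∑ a ∈ 𝒜, q t a * (zh t a)^2
        + (22/5) * ∑ t ∈ Icc 1 n, ∑ a ∈ 𝒜, q t a * bt t a := by
  set W := Wf 𝒜 η zh bt with hWset
  have hWdef : ∀ r, W r = ∑ b ∈ 𝒜, Real.exp (-η * ∑ s ∈ Icc 1 r, (zh s b - bt s b)) :=
    fun r => rfl
  have hWpos : ∀ t, 0 < W t := Wf_pos 𝒜 η zh bt h𝒜
  have hq' : ∀ t, ∀ a ∈ 𝒜, q t a =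
      Real.exp (-η * ∑ s ∈ Icc 1 (t-1), (zh s a - bt s a)) / W (t-1) := by
    intro t a ha
    rw [hq t a, if_pos ha, hWdef]
  have hqe : ∀ t, ∀ a ∈ 𝒜, q t a * W (t-1) =
      Real.exp (-η * ∑ s ∈ Icc 1 (t-1), (zh s a - bt s a)) := by
    intro t a ha
    rw [hq' t a ha, div_mul_cancel₀ _ (hWpos (t-1)).ne']
  have hqnn : ∀ t, ∀ a ∈ 𝒜, 0 ≤ q t a := by
    intro t a ha
    rw [hq' t a ha]
    exact div_nonneg (Real.exp_pos _).le (hWpos (t-1)).le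
  have hqsum : ∀ t, ∑ a ∈ 𝒜, q t a = 1 := by
    intro t
    have h1 : ∑ a ∈ 𝒜, q t a = W (t-1) / W (t-1) := by
      rw [hWdef, Finset.sum_div]
      exact Finset.sum_congr rfl fun a ha => hq' t a ha
    rw [h1, div_self (hWpos (t-1)).ne']
  set D : ℕ → ℝ := fun t => -(∑ a ∈ 𝒜, q t a * zh t a) + η * ∑ a ∈ 𝒜, q t a * (zh t a)^2
      + (22/5) * ∑ a ∈ 𝒜, q t a * bt t a with hD
  have hstep : ∀ t ∈ Icc 1 n, W t ≤ W (t-1) * Real.exp (η * D t) := by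
    intro t ht
    obtain ⟨ht1, htn⟩ := Finset.mem_Icc.1 ht
    have hsplit : (Icc 1 t) = insert t (Icc 1 (t-1)) := by
      rw [show t = (t-1)+1 by omega, Nat.add_sub_cancel,
        ← Finset.insert_Icc_right_eq_Icc_add_one (by omega : 1 ≤ (t-1)+1)]
    have hWt : W t = W (t-1) * ∑ a ∈ 𝒜, q t a * Real.exp (-η * (zh t a - bt t a)) := by
      rw [hWdef t, Finset.mul_sum]
      refine Finset.sum_congr rfl fun a ha => ?_
      rw [hsplit, Finset.sum_insert (by simp; omega), mul_add, Real.exp_add, ← mul_assoc,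
        mul_comm (W (t-1)) (q t a), hqe t a ha]
      ring
    rw [hWt]
    have hle : ∑ a ∈ 𝒜, q t a * Real.exp (-η * (zh t a - bt t a)) ≤ 1 + η * D t := by
      have hterm : ∀ a ∈ 𝒜, q t a * Real.exp (-η * (zh t a - bt t a)) ≤
          q t a * (1 - η * zh t a + (η * zh t a)^2 + (22/5) * (η * bt t a)) := by
        intro a ha
        apply mul_le_mul_of_nonneg_left _ (hqnn t a ha)
        have hb := hbound t ht a ha
        have h4 := L4 (u := η * zh t a) (v := η * bt t a)
          (by rw [abs_mul, abs_of_pos hη]; exact hb.1) hb.2.1 hb.2.2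
        calc Real.exp (-η * (zh t a - bt t a))
            = Real.exp (η * bt t a - η * zh t a) := by ring_nf
          _ ≤ _ := h4
      refine (Finset.sum_le_sum hterm).trans (le_of_eq ?_)
      calc ∑ a ∈ 𝒜, q t a * (1 - η * zh t a + (η * zh t a)^2 + (22/5) * (η * bt t a))
          = ∑ a ∈ 𝒜, (q t a + η*(-(q t a * zh t a) + η*(q t a * (zh t a)^2)
              + (22/5)*(q t a * bt t a))) :=
            Finset.sum_congr rfl fun a _ => by ring
        _ = ∑ a ∈ 𝒜, q t a + η * ∑ a ∈ 𝒜, (-(q t a * zh t a) + η*(q t a * (zh t a)^2)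
              + (22/5)*(q t a * bt t a)) := by
            rw [Finset.sum_add_distrib, Finset.mul_sum]
        _ = 1 + η * D t := by
            rw [hqsum t]
            congr 1
            rw [Finset.sum_add_distrib, Finset.sum_add_distrib, Finset.sum_neg_distrib,
              ← Finset.mul_sum, ← Finset.mul_sum]
    calc W (t-1) * ∑ a ∈ 𝒜, q t a * Real.exp (-η * (zh t a - bt t a))
        ≤ W (t-1) * (1 + η * D t) := mul_le_mul_of_nonneg_left hle (hWpos _).le
      _ ≤ W (t-1) * Real.exp (η * D t) := by
          apply mul_le_mul_of_nonneg_left _ (hWpos _).le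
          linarith [Real.add_one_le_exp (η * D t)]
  have hind : ∀ m, m ≤ n → W m ≤ W 0 * Real.exp (η * ∑ t ∈ Icc 1 m, D t) := by
    intro m
    induction m with
    | zero => intro _; simp
    | succ m ih =>
      intro hmn
      have h1 : W (m+1) ≤ W m * Real.exp (η * D (m+1)) := by
        have := hstep (m+1) (Finset.mem_Icc.2 ⟨Nat.succ_le_succ (Nat.zero_le _), hmn⟩)
        simpa using this
      refine h1.trans ?_
      calc W m * Real.exp (η * D (m+1))
          ≤ (W 0 * Real.exp (η * ∑ t ∈ Icc 1 m, D t)) * Real.exp (η * D (m+1)) :=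
            mul_le_mul_of_nonneg_right (ih (by omega)) (Real.exp_pos _).le
        _ = W 0 * Real.exp (η * ∑ t ∈ Icc 1 (m+1), D t) := by
            rw [mul_assoc, ← Real.exp_add, ← Finset.insert_Icc_right_eq_Icc_add_one (by omega : 1 ≤ m+1),
              Finset.sum_insert (by simp)]
            exact congrArg (fun r => W 0 * Real.exp r) (by ring)
  have hlow : Real.exp (-η * ∑ s ∈ Icc 1 n, (zh s astar - bt s astar)) ≤ W n := by
    rw [hWdef]
    exact Finset.single_le_sum (f := fun b => Real.exp (-η * ∑ s ∈ Icc 1 n, (zh s b - bt s b)))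
      (fun a _ => (Real.exp_pos _).le) hastar
  have hW0 : W 0 = 𝒜.card := by rw [hWdef]; simp
  have hfinal := hlow.trans (hind n le_rfl)
  rw [hW0] at hfinal
  have hcard0 : (0:ℝ) < 𝒜.card := by exact_mod_cast Finset.card_pos.2 h𝒜
  have hlog := Real.log_le_log (Real.exp_pos _) hfinal
  rw [Real.log_exp, Real.log_mul hcard0.ne' (Real.exp_pos _).ne', Real.log_exp] at hlog
  have hsum : ∑ t ∈ Icc 1 n, D t = -(∑ t ∈ Icc 1 n, ∑ a ∈ 𝒜, q t a * zh t a)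
      + η * ∑ t ∈ Icc 1 n, ∑ a ∈ 𝒜, q t a * (zh t a)^2
      + (22/5) * ∑ t ∈ Icc 1 n, ∑ a ∈ 𝒜, q t a * bt t a := by
    rw [hD]
    rw [← Finset.sum_neg_distrib, Finset.mul_sum, Finset.mul_sum,
      ← Finset.sum_add_distrib, ← Finset.sum_add_distrib]
  rw [hsum] at hlog
  -- hlog : -η * ∑ ... ≤ log card + η * (...)
  set X := ∑ t ∈ Icc 1 n, ∑ a ∈ 𝒜, q t a * zh t a with hX
  set Y := ∑ t ∈ Icc 1 n, ∑ a ∈ 𝒜, q t a * (zh t a)^2 with hY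
  set B := ∑ t ∈ Icc 1 n, ∑ a ∈ 𝒜, q t a * bt t a with hB
  set S := ∑ t ∈ Icc 1 n, (zh t astar - bt t astar) with hS
  set L := Real.log (𝒜.card) with hL
  have h1 : η * X ≤ η * S + L + η*(η*Y) + η*((22/5)*B) := by nlinarith [hlog]
  have hre : η * (S + L/η + η*Y + (22/5)*B) = η*S + L + η*(η*Y) + η*((22/5)*B) := by
    field_simp
  exact (mul_le_mul_iff_right₀ hη).mp (by rw [hre]; exact h1)
end Det


lemma integrable_of_ae_bound {Ω : Type*} {mΩ : MeasurableSpace Ω} {μ : Measure Ω}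
    [IsFiniteMeasure μ] {f : Ω → ℝ} {C : ℝ}
    (hm : AEStronglyMeasurable f μ) (h : ∀ᵐ ω ∂μ, |f ω| ≤ C) : Integrable f μ := by
  refine (integrable_const C).mono' hm ?_
  filter_upwards [h] with ω hω
  simpa [Real.norm_eq_abs] using hω

lemma super_prod {Ω : Type*} {mΩ : MeasurableSpace Ω} {μ : Measure Ω} [IsProbabilityMeasure μ]
    (ℱ : Filtration ℕ mΩ) (n : ℕ) (g : ℕ → Ω → ℝ) (C : ℕ → ℝ)
    (hmeas : ∀ t ∈ Icc 1 n, StronglyMeasurable[ℱ t] (g t))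
    (h0 : ∀ t ∈ Icc 1 n, ∀ ω, 0 ≤ g t ω)
    (hC : ∀ t ∈ Icc 1 n, ∀ᵐ ω ∂μ, g t ω ≤ C t)
    (hcond : ∀ t ∈ Icc 1 n, μ[g t|ℱ (t-1)] ≤ᵐ[μ] fun _ => 1) :
    Integrable (fun ω => ∏ t ∈ Icc 1 n, g t ω) μ ∧
      ∫ ω, ∏ t ∈ Icc 1 n, g t ω ∂μ ≤ 1 := by
  suffices h : ∀ m, m ≤ n → Integrable (fun ω => ∏ t ∈ Icc 1 m, g t ω) μ ∧
      ∫ ω, ∏ t ∈ Icc 1 m, g t ω ∂μ ≤ 1 from h n le_rfl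
  intro m
  induction m with
  | zero => intro _; simp
  | succ m ih =>
    intro hmn
    obtain ⟨ihint, ihle⟩ := ih (by omega)
    have hmem : m + 1 ∈ Icc 1 n := Finset.mem_Icc.2 ⟨by omega, hmn⟩
    have hsub : ∀ t ∈ Icc 1 m, t ∈ Icc 1 n := by
      intro t ht; rw [Finset.mem_Icc] at *; omega
    -- strong measurability of the partial product w.r.t. ℱ m
    have hFmeas : StronglyMeasurable[ℱ m] (fun ω => ∏ t ∈ Icc 1 m, g t ω) := by
      apply Finset.stronglyMeasurable_fun_prod
      intro t ht
      exact (hmeas t (hsub t ht)).mono (ℱ.mono (Finset.mem_Icc.1 ht).2)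
    have hF0 : ∀ ω, 0 ≤ ∏ t ∈ Icc 1 m, g t ω := fun ω =>
      Finset.prod_nonneg fun t ht => h0 t (hsub t ht) ω
    -- a.e. bound for the product
    have hFbd : ∀ᵐ ω ∂μ, |∏ t ∈ Icc 1 m, g t ω| ≤ ∏ t ∈ Icc 1 m, max (C t) 0 := by
      have hall : ∀ᵐ ω ∂μ, ∀ t : (Icc 1 m : Finset ℕ), g t.1 ω ≤ C t.1 :=
        ae_all_iff.2 (fun t => hC t.1 (hsub t.1 t.2))
      filter_upwards [hall] with ω hω'
      have hω : ∀ t ∈ Icc 1 m, g t ω ≤ C t := fun t ht => hω' ⟨t, ht⟩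
      rw [abs_of_nonneg (hF0 ω)]
      apply Finset.prod_le_prod (fun t ht => h0 t (hsub t ht) ω)
      intro t ht; exact (hω t ht).trans (le_max_left _ _)
    have hgmeas : ∀ t ∈ Icc 1 n, AEStronglyMeasurable (g t) μ :=
      fun t ht => ((hmeas t ht).mono (ℱ.le t)).aestronglyMeasurable
    have hgint : ∀ t ∈ Icc 1 n, Integrable (g t) μ := by
      intro t ht
      apply integrable_of_ae_bound (hgmeas t ht)
      filter_upwards [hC t ht] with ω hω
      rw [abs_of_nonneg (h0 t ht ω)]; exact hω
    -- integrability of the next product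
    have hprodsplit : (fun ω => ∏ t ∈ Icc 1 (m+1), g t ω)
        = (fun ω => ∏ t ∈ Icc 1 m, g t ω) * g (m+1) := by
      funext ω
      rw [← Finset.insert_Icc_right_eq_Icc_add_one (by omega : 1 ≤ m+1), Finset.prod_insert (by simp)]
      simp [mul_comm]
    have hint1 : Integrable ((fun ω => ∏ t ∈ Icc 1 m, g t ω) * g (m+1)) μ := by
      apply integrable_of_ae_bound
        (((hFmeas.mono (ℱ.le m)).mul ((hmeas _ hmem).mono (ℱ.le (m+1)))).aestronglyMeasurable)
      filter_upwards [hFbd, hC (m+1) hmem] with ω h1 h2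
      rw [Pi.mul_apply, abs_mul]
      have := abs_of_nonneg (h0 (m+1) hmem ω)
      calc |∏ t ∈ Icc 1 m, g t ω| * |g (m+1) ω|
          ≤ (∏ t ∈ Icc 1 m, max (C t) 0) * max (C (m+1)) 0 := by
            apply mul_le_mul h1 _ (abs_nonneg _)
              (Finset.prod_nonneg fun t _ => le_max_right _ _)
            rw [this]; exact h2.trans (le_max_left _ _)
        _ ≤ _ := le_rfl
    constructor
    · rw [hprodsplit]; exact hint1
    -- main estimate
    have hcondexp := condExp_mul_of_stronglyMeasurable_left (m := ℱ m) hFmeas hint1 (hgint _ hmem)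
    have hle : μ[(fun ω => ∏ t ∈ Icc 1 m, g t ω) * g (m+1)|ℱ m]
        ≤ᵐ[μ] fun ω => ∏ t ∈ Icc 1 m, g t ω := by
      have h1 : μ[g (m+1)|ℱ ((m+1)-1)] ≤ᵐ[μ] fun _ => 1 := hcond (m+1) hmem
      simp only [Nat.add_sub_cancel] at h1
      filter_upwards [hcondexp, h1] with ω hω h1ω
      rw [hω, Pi.mul_apply]
      calc (∏ t ∈ Icc 1 m, g t ω) * (μ[g (m+1)|ℱ m]) ω
          ≤ (∏ t ∈ Icc 1 m, g t ω) * 1 := mul_le_mul_of_nonneg_left h1ω (hF0 ω)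
        _ = _ := by rw [mul_one]
    calc ∫ ω, ∏ t ∈ Icc 1 (m+1), g t ω ∂μ
        = ∫ ω, ((fun ω => ∏ t ∈ Icc 1 m, g t ω) * g (m+1)) ω ∂μ := by rw [hprodsplit]
      _ = ∫ ω, (μ[(fun ω => ∏ t ∈ Icc 1 m, g t ω) * g (m+1)|ℱ m]) ω ∂μ :=
          (integral_condExp (ℱ.le m)).symm
      _ ≤ ∫ ω, ∏ t ∈ Icc 1 m, g t ω ∂μ := integral_mono_ae integrable_condExp ihint hle
      _ ≤ 1 := ihle


lemma step1 {Ω : Type*} {mΩ : MeasurableSpace Ω} {μ : Measure Ω} [IsProbabilityMeasure μ]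
    {m : MeasurableSpace Ω} (hm : m ≤ mΩ) {η : ℝ} (hη : 0 < η)
    {zh z b : Ω → ℝ}
    (hzh : StronglyMeasurable[mΩ] zh)
    (hz : StronglyMeasurable[m] z) (hb : StronglyMeasurable[m] b)
    (habs : ∀ᵐ ω ∂μ, η * |zh ω| ≤ 1)
    (hbub : ∀ᵐ ω ∂μ, η * b ω ≤ 1) (hb0 : 0 ≤ᵐ[μ] b)
    (hcc : ∀ᵐ ω ∂μ, η * (μ[fun ω' => (zh ω')^2|m]) ω ≤ b ω)
    (hdd : μ[zh|m] =ᵐ[μ] z) :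
    (∀ᵐ ω ∂μ, |Real.exp ((6/5)*η*(zh ω - z ω - b ω))| ≤ Real.exp (18/5)) ∧
    μ[fun ω => Real.exp ((6/5)*η*(zh ω - z ω - b ω))|m] ≤ᵐ[μ] fun _ => 1 := by
  haveI : SigmaFinite (μ.trim hm) := by infer_instance
  have hzh_bdd : ∀ᵐ ω ∂μ, |zh ω| ≤ 1/η := by
    filter_upwards [habs] with ω hω
    rw [le_div_iff₀ hη]; linarith [abs_nonneg (zh ω)]
  have hz_bdd : ∀ᵐ ω ∂μ, |z ω| ≤ 1/η := by
    have hR : ∀ᵐ ω ∂μ, |zh ω| ≤ ((⟨1/η, by positivity⟩ : NNReal) : ℝ) := hzh_bdd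
    have := ae_bdd_condExp_of_ae_bdd (m := m) hR
    filter_upwards [this, hdd] with ω h1 h2
    rw [← h2]; exact h1
  have hb_bdd : ∀ᵐ ω ∂μ, |b ω| ≤ 1/η := by
    filter_upwards [hbub, hb0] with ω h1 h2
    rw [abs_of_nonneg h2, le_div_iff₀ hη]; linarith
  have hzhm : AEStronglyMeasurable[mΩ] zh μ := hzh.aestronglyMeasurable
  have hzm : AEStronglyMeasurable[mΩ] z μ := (hz.mono hm).aestronglyMeasurable
  have hbm : AEStronglyMeasurable[mΩ] b μ := (hb.mono hm).aestronglyMeasurable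
  have hint_zh : Integrable zh μ := integrable_of_ae_bound hzhm hzh_bdd
  have hint_sq : Integrable (fun ω => (zh ω)^2) μ := by
    refine integrable_of_ae_bound (C := (1/η)^2) (hzhm.pow 2) ?_
    filter_upwards [hzh_bdd] with ω hω
    rw [abs_pow]
    exact pow_le_pow_left₀ (abs_nonneg _) hω 2
  -- the exponential of zh is integrable
  have hexp_meas : AEStronglyMeasurable[mΩ] (fun ω => Real.exp ((6/5)*η*zh ω)) μ :=
    (Real.continuous_exp.comp_aestronglyMeasurable (hzhm.const_mul _))
  have hexp_bdd : ∀ᵐ ω ∂μ, |Real.exp ((6/5)*η*zh ω)| ≤ Real.exp (6/5) := by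
    filter_upwards [habs] with ω hω
    rw [abs_of_pos (Real.exp_pos _)]
    apply Real.exp_le_exp.2
    nlinarith [mul_le_mul_of_nonneg_left (le_abs_self (zh ω)) hη.le]
  have hint_exp : Integrable (fun ω => Real.exp ((6/5)*η*zh ω)) μ :=
    integrable_of_ae_bound hexp_meas hexp_bdd
  -- quadratic majorant
  set φ : Ω → ℝ := fun ω => 1 + (6/5)*η*zh ω + (5/6)*((6/5)*η)^2*(zh ω)^2 with hφ
  have hint_φ : Integrable φ μ := by
    have : φ = fun ω => 1 + ((6/5)*η*zh ω + (5/6)*((6/5)*η)^2*(zh ω)^2) := by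
      funext ω; rw [hφ]; ring
    rw [this]
    exact (integrable_const 1).add ((hint_zh.const_mul _).add (hint_sq.const_mul _))
  have hpt : ∀ᵐ ω ∂μ, Real.exp ((6/5)*η*zh ω) ≤ φ ω := by
    filter_upwards [habs] with ω hω
    have hs : |(6/5)*η*zh ω| ≤ 6/5 := by
      rw [mul_assoc, abs_mul, abs_mul]
      rw [abs_of_nonneg (by norm_num : (0:ℝ) ≤ (6:ℝ)/5)]
      nlinarith [abs_nonneg (zh ω), abs_nonneg η, abs_of_pos hη]
    have := L1 hs
    calc Real.exp ((6/5)*η*zh ω) ≤ 1 + (6/5)*η*zh ω + (5/6)*((6/5)*η*zh ω)^2 := this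
      _ = φ ω := by rw [hφ]; ring
  have hmono := condExp_mono (m := m) hint_exp hint_φ hpt
  -- compute condexp of φ
  have hφeq : μ[φ|m] =ᵐ[μ] fun ω =>
      1 + (6/5)*η*(μ[zh|m]) ω + (5/6)*((6/5)*η)^2*(μ[fun ω' => (zh ω')^2|m]) ω := by
    have e1 : φ = (fun _ => (1:ℝ)) + (((6/5)*η) • zh + ((5/6)*((6/5)*η)^2) • (fun ω => (zh ω)^2)) := by
      funext ω; simp [hφ]; ring
    rw [e1]
    refine (condExp_add (m := m) (integrable_const 1) ((hint_zh.smul _).add (hint_sq.smul _))).trans ?_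
    have h2 := condExp_add (m := m) (f := ((6/5)*η) • zh) (g := ((5/6)*((6/5)*η)^2) • (fun ω => (zh ω)^2))
      (hint_zh.smul _) (hint_sq.smul _)
    have h3 := condExp_smul (μ := μ) (m := m) ((6/5)*η) zh
    have h4 := condExp_smul (μ := μ) (m := m) ((5/6)*((6/5)*η)^2) (fun ω => (zh ω)^2)
    filter_upwards [h2, h3, h4] with ω h2ω h3ω h4ω
    have hconst : (μ[(fun _ => (1:ℝ))|m]) ω = 1 := by
      rw [condExp_const hm]
    simp only [Pi.add_apply, hconst, h2ω, h3ω, h4ω, Pi.smul_apply, smul_eq_mul]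
    ring
  -- bound it
  have hkey : μ[fun ω => Real.exp ((6/5)*η*zh ω)|m] ≤ᵐ[μ]
      fun ω => Real.exp ((6/5)*η*(z ω + b ω)) := by
    filter_upwards [hmono, hφeq, hcc, hdd] with ω h1 h2 h3 h4
    calc (μ[fun ω => Real.exp ((6/5)*η*zh ω)|m]) ω ≤ (μ[φ|m]) ω := h1
      _ = 1 + (6/5)*η*(μ[zh|m]) ω + (5/6)*((6/5)*η)^2*(μ[fun ω' => (zh ω')^2|m]) ω := h2
      _ ≤ 1 + (6/5)*η*z ω + (6/5)*η*b ω := by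
          rw [h4]
          have : (5/6)*((6/5)*η)^2*(μ[fun ω' => (zh ω')^2|m]) ω
              = (6/5)*η*(η*(μ[fun ω' => (zh ω')^2|m]) ω) := by ring
          rw [this]
          have h5 : (6/5)*η*(η*(μ[fun ω' => (zh ω')^2|m]) ω) ≤ (6/5)*η*b ω := by
            apply mul_le_mul_of_nonneg_left h3 (by positivity)
          linarith
      _ ≤ Real.exp ((6/5)*η*(z ω + b ω)) := by
          have := Real.add_one_le_exp ((6/5)*η*(z ω + b ω))
          linarith
  -- multiply by the predictable factor
  set f : Ω → ℝ := fun ω => Real.exp (-((6/5)*η*(z ω + b ω))) with hf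
  have hfSM : StronglyMeasurable[m] f := by
    apply Continuous.comp_stronglyMeasurable Real.continuous_exp
    exact ((hz.add hb).const_mul ((6/5)*η)).neg
  have hgsplit : (fun ω => Real.exp ((6/5)*η*(zh ω - z ω - b ω)))
      = f * (fun ω => Real.exp ((6/5)*η*zh ω)) := by
    funext ω
    rw [Pi.mul_apply, hf, ← Real.exp_add]
    congr 1; ring
  have hprod_bdd : ∀ᵐ ω ∂μ, |Real.exp ((6/5)*η*(zh ω - z ω - b ω))| ≤ Real.exp (18/5) := by
    filter_upwards [hzh_bdd, hz_bdd, hb_bdd] with ω h1 h2 h3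
    rw [abs_of_pos (Real.exp_pos _)]
    apply Real.exp_le_exp.2
    have e1 : zh ω - z ω - b ω ≤ 3*(1/η) := by
      linarith [(abs_le.1 h1).2, (abs_le.1 h2).1, (abs_le.1 h3).1]
    calc (6/5)*η*(zh ω - z ω - b ω) ≤ (6/5)*η*(3*(1/η)) := by
          apply mul_le_mul_of_nonneg_left e1 (by positivity)
      _ = 18/5 := by field_simp; ring
  have hint_prod : Integrable (f * (fun ω => Real.exp ((6/5)*η*zh ω))) μ := by
    rw [← hgsplit]
    refine integrable_of_ae_bound ?_ hprod_bdd
    exact Real.continuous_exp.comp_aestronglyMeasurable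
      ((((hzh.aestronglyMeasurable.sub hzm).sub hbm)).const_mul _)
  have hpull := condExp_mul_of_stronglyMeasurable_left hfSM hint_prod hint_exp
  refine ⟨hprod_bdd, ?_⟩
  rw [hgsplit]
  calc μ[f * (fun ω => Real.exp ((6/5)*η*zh ω))|m]
      =ᵐ[μ] f * μ[fun ω => Real.exp ((6/5)*η*zh ω)|m] := hpull
    _ ≤ᵐ[μ] fun _ => (1:ℝ) := by
        filter_upwards [hkey] with ω h1
        rw [Pi.mul_apply]
        calc f ω * (μ[fun ω => Real.exp ((6/5)*η*zh ω)|m]) ω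
            ≤ f ω * Real.exp ((6/5)*η*(z ω + b ω)) :=
              mul_le_mul_of_nonneg_left h1 (Real.exp_pos _).le
          _ = 1 := by rw [hf, ← Real.exp_add]; simp


-- Cauchy-Schwarz for convex combinations
lemma sq_cvx {ι : Type*} (s : Finset ι) (q x : ι → ℝ) (hq : ∀ i ∈ s, 0 ≤ q i)
    (hsum : ∑ i ∈ s, q i = 1) : (∑ i ∈ s, q i * x i)^2 ≤ ∑ i ∈ s, q i * (x i)^2 := by
  have h := Finset.sum_mul_sq_le_sq_mul_sq s
    (fun i => Real.sqrt (q i)) (fun i => Real.sqrt (q i) * x i)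
  have e1 : ∀ i ∈ s, Real.sqrt (q i) * (Real.sqrt (q i) * x i) = q i * x i := by
    intro i hi
    rw [← mul_assoc, Real.mul_self_sqrt (hq i hi)]
  have e2 : ∀ i ∈ s, Real.sqrt (q i) ^ 2 = q i := fun i hi => Real.sq_sqrt (hq i hi)
  have e3 : ∀ i ∈ s, (Real.sqrt (q i) * x i)^2 = q i * (x i)^2 := by
    intro i hi
    rw [mul_pow, Real.sq_sqrt (hq i hi)]
  rw [Finset.sum_congr rfl e1, Finset.sum_congr rfl e2, Finset.sum_congr rfl e3, hsum,
    one_mul] at h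
  exact h

lemma step2 {Ω : Type*} {mΩ : MeasurableSpace Ω} {μ : Measure Ω} [IsProbabilityMeasure μ]
    {m : MeasurableSpace Ω} (hm : m ≤ mΩ) {η : ℝ} (hη : 0 < η)
    {K : ℕ} {𝒜 : Finset (Fin K)}
    (q zh z b : Fin K → Ω → ℝ)
    (hqSM : ∀ a ∈ 𝒜, StronglyMeasurable[m] (q a))
    (hq0 : ∀ ω, ∀ a ∈ 𝒜, 0 ≤ q a ω)
    (hq1 : ∀ ω, ∑ a ∈ 𝒜, q a ω = 1)
    (hzh : ∀ a ∈ 𝒜, StronglyMeasurable[mΩ] (zh a))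
    (hz : ∀ a ∈ 𝒜, StronglyMeasurable[m] (z a))
    (hbSM : ∀ a ∈ 𝒜, StronglyMeasurable[m] (b a))
    (habs : ∀ᵐ ω ∂μ, ∀ a ∈ 𝒜, η * |zh a ω| ≤ 1)
    (hbb : ∀ᵐ ω ∂μ, ∀ a ∈ 𝒜, 0 ≤ b a ω ∧ η * b a ω ≤ 1)
    (hcc : ∀ a ∈ 𝒜, ∀ᵐ ω ∂μ, η * (μ[fun ω' => (zh a ω')^2|m]) ω ≤ b a ω)
    (hdd : ∀ a ∈ 𝒜, μ[zh a|m] =ᵐ[μ] z a) :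
    (∀ᵐ ω ∂μ, |Real.exp ((6/7)*η*(∑ a ∈ 𝒜, q a ω * (z a ω - zh a ω)
        - (3/5) * ∑ a ∈ 𝒜, q a ω * b a ω))| ≤ Real.exp 3) ∧
    μ[fun ω => Real.exp ((6/7)*η*(∑ a ∈ 𝒜, q a ω * (z a ω - zh a ω)
        - (3/5) * ∑ a ∈ 𝒜, q a ω * b a ω))|m] ≤ᵐ[μ] fun _ => 1 := by
  haveI : SigmaFinite (μ.trim hm) := by infer_instance
  set Y : Ω → ℝ := fun ω => ∑ a ∈ 𝒜, q a ω * zh a ω with hY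
  set M : Ω → ℝ := fun ω => ∑ a ∈ 𝒜, q a ω * z a ω with hM
  set Bq : Ω → ℝ := fun ω => ∑ a ∈ 𝒜, q a ω * b a ω with hBq
  set V : Ω → ℝ := fun ω => ∑ a ∈ 𝒜, q a ω * (zh a ω)^2 with hV
  have hq_le1 : ∀ ω, ∀ a ∈ 𝒜, q a ω ≤ 1 := by
    intro ω a ha
    rw [← hq1 ω]
    exact Finset.single_le_sum (fun i hi => hq0 ω i hi) ha
  -- a.e. bounds for z
  have hz_bdd : ∀ᵐ ω ∂μ, ∀ a ∈ 𝒜, |z a ω| ≤ 1/η := by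
    have h1 : ∀ a : {x // x ∈ 𝒜}, ∀ᵐ ω ∂μ, |z a.1 ω| ≤ 1/η := by
      intro a
      have hR : ∀ᵐ ω ∂μ, |zh a.1 ω| ≤ ((⟨1/η, by positivity⟩ : NNReal) : ℝ) := by
        filter_upwards [habs] with ω hω
        show |zh a.1 ω| ≤ 1/η
        rw [le_div_iff₀ hη]
        nlinarith [hω a.1 a.2]
      filter_upwards [ae_bdd_condExp_of_ae_bdd (m := m) hR, hdd a.1 a.2] with ω h1 h2
      rw [← h2]; exact h1
    have := ae_all_iff.2 h1
    filter_upwards [this] with ω hω a ha using hω ⟨a, ha⟩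
  have hzh_bdd : ∀ᵐ ω ∂μ, ∀ a ∈ 𝒜, |zh a ω| ≤ 1/η := by
    filter_upwards [habs] with ω hω a ha
    rw [le_div_iff₀ hη]; linarith [hω a ha, abs_nonneg (zh a ω)]
  -- a.e. bounds for the aggregates
  have hY_bdd : ∀ᵐ ω ∂μ, |Y ω| ≤ 1/η := by
    filter_upwards [hzh_bdd] with ω hω
    calc |Y ω| ≤ ∑ a ∈ 𝒜, |q a ω * zh a ω| := Finset.abs_sum_le_sum_abs _ _
      _ ≤ ∑ a ∈ 𝒜, q a ω * (1/η) := by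
          apply Finset.sum_le_sum
          intro a ha
          rw [abs_mul, abs_of_nonneg (hq0 ω a ha)]
          exact mul_le_mul_of_nonneg_left (hω a ha) (hq0 ω a ha)
      _ = 1/η := by rw [← Finset.sum_mul, hq1 ω, one_mul]
  have hM_bdd : ∀ᵐ ω ∂μ, |M ω| ≤ 1/η := by
    filter_upwards [hz_bdd] with ω hω
    calc |M ω| ≤ ∑ a ∈ 𝒜, |q a ω * z a ω| := Finset.abs_sum_le_sum_abs _ _
      _ ≤ ∑ a ∈ 𝒜, q a ω * (1/η) := by
          apply Finset.sum_le_sum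
          intro a ha
          rw [abs_mul, abs_of_nonneg (hq0 ω a ha)]
          exact mul_le_mul_of_nonneg_left (hω a ha) (hq0 ω a ha)
      _ = 1/η := by rw [← Finset.sum_mul, hq1 ω, one_mul]
  have hB_bdd : ∀ᵐ ω ∂μ, 0 ≤ Bq ω ∧ Bq ω ≤ 1/η := by
    filter_upwards [hbb] with ω hω
    constructor
    · exact Finset.sum_nonneg fun a ha => mul_nonneg (hq0 ω a ha) (hω a ha).1
    · calc Bq ω ≤ ∑ a ∈ 𝒜, q a ω * (1/η) := by
            apply Finset.sum_le_sum
            intro a ha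
            apply mul_le_mul_of_nonneg_left _ (hq0 ω a ha)
            rw [le_div_iff₀ hη]; linarith [(hω a ha).2]
        _ = 1/η := by rw [← Finset.sum_mul, hq1 ω, one_mul]
  have hV_bdd : ∀ᵐ ω ∂μ, 0 ≤ V ω ∧ V ω ≤ (1/η)^2 := by
    filter_upwards [hzh_bdd] with ω hω
    constructor
    · exact Finset.sum_nonneg fun a ha => mul_nonneg (hq0 ω a ha) (sq_nonneg _)
    · calc V ω ≤ ∑ a ∈ 𝒜, q a ω * (1/η)^2 := by
            apply Finset.sum_le_sum
            intro a ha
            apply mul_le_mul_of_nonneg_left _ (hq0 ω a ha)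
            calc (zh a ω)^2 = |zh a ω|^2 := (sq_abs _).symm
              _ ≤ (1/η)^2 := pow_le_pow_left₀ (abs_nonneg _) (hω a ha) 2
        _ = (1/η)^2 := by rw [← Finset.sum_mul, hq1 ω, one_mul]
  -- measurability of aggregates
  have hqm : ∀ a ∈ 𝒜, StronglyMeasurable[mΩ] (q a) := fun a ha => (hqSM a ha).mono hm
  have hYSM : StronglyMeasurable[mΩ] Y :=
    Finset.stronglyMeasurable_fun_sum 𝒜 (fun a ha => (hqm a ha).mul (hzh a ha))
  have hMSM : StronglyMeasurable[m] M :=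
    Finset.stronglyMeasurable_fun_sum 𝒜 (fun a ha => (hqSM a ha).mul (hz a ha))
  have hBqSM : StronglyMeasurable[m] Bq :=
    Finset.stronglyMeasurable_fun_sum 𝒜 (fun a ha => (hqSM a ha).mul (hbSM a ha))
  have hVSM : StronglyMeasurable[mΩ] V :=
    Finset.stronglyMeasurable_fun_sum 𝒜 (fun a ha => (hqm a ha).mul ((hzh a ha).pow 2))
  -- integrability
  have hYint : Integrable Y μ := integrable_of_ae_bound hYSM.aestronglyMeasurable hY_bdd
  have hVint : Integrable V μ := by
    refine integrable_of_ae_bound (C := (1/η)^2) hVSM.aestronglyMeasurable ?_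
    filter_upwards [hV_bdd] with ω hω
    rw [abs_of_nonneg hω.1]; exact hω.2
  have hexpY_meas : AEStronglyMeasurable[mΩ] (fun ω => Real.exp (-((6/7)*η*Y ω))) μ :=
    Real.continuous_exp.comp_aestronglyMeasurable
      ((hYSM.aestronglyMeasurable.const_mul _).neg)
  have hxabs : ∀ᵐ ω ∂μ, |-((6/7)*η*Y ω)| ≤ 6/7 := by
    filter_upwards [hY_bdd] with ω hω
    rw [abs_neg, abs_mul, abs_mul, abs_of_pos hη,
      abs_of_nonneg (by norm_num : (0:ℝ) ≤ (6:ℝ)/7), mul_assoc]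
    calc (6/7) * (η * |Y ω|) ≤ (6/7) * (η * (1/η)) := by
          apply mul_le_mul_of_nonneg_left (mul_le_mul_of_nonneg_left hω hη.le) (by norm_num)
      _ = 6/7 := by field_simp
  have hexpY_bdd : ∀ᵐ ω ∂μ, |Real.exp (-((6/7)*η*Y ω))| ≤ Real.exp (6/7) := by
    filter_upwards [hxabs] with ω hω
    rw [abs_of_pos (Real.exp_pos _)]
    exact Real.exp_le_exp.2 (le_trans (le_abs_self _) hω)
  have hexpY_int : Integrable (fun ω => Real.exp (-((6/7)*η*Y ω))) μ :=
    integrable_of_ae_bound hexpY_meas hexpY_bdd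
  -- quadratic majorant
  set φ : Ω → ℝ := fun ω => 1 - (6/7)*η*Y ω + (18/35)*η^2*V ω with hφ
  have hφint : Integrable φ μ := by
    have : φ = fun ω => (1 : ℝ) + ((-((6/7)*η))*Y ω + ((18/35)*η^2)*V ω) := by
      funext ω; rw [hφ]; ring
    rw [this]
    exact (integrable_const 1).add ((hYint.const_mul _).add (hVint.const_mul _))
  have hpt : ∀ᵐ ω ∂μ, Real.exp (-((6/7)*η*Y ω)) ≤ φ ω := by
    filter_upwards [hxabs] with ω hω
    have h2 := L2 hω
    have hYV : (Y ω)^2 ≤ V ω := sq_cvx 𝒜 (fun a => q a ω) (fun a => zh a ω)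
      (fun a ha => hq0 ω a ha) (hq1 ω)
    have : (-((6/7)*η*Y ω))^2 = (36/49)*η^2*(Y ω)^2 := by ring
    rw [this] at h2
    calc Real.exp (-((6/7)*η*Y ω))
        ≤ 1 + -((6/7)*η*Y ω) + (7/10)*((36/49)*η^2*(Y ω)^2) := h2
      _ ≤ 1 + -((6/7)*η*Y ω) + (7/10)*((36/49)*η^2*V ω) := by
          have : (7/10)*((36/49)*η^2*(Y ω)^2) ≤ (7/10)*((36/49)*η^2*V ω) := by
            apply mul_le_mul_of_nonneg_left _ (by norm_num)
            apply mul_le_mul_of_nonneg_left hYV (by positivity)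
          linarith
      _ = φ ω := by rw [hφ]; ring
  have hmono := condExp_mono (m := m) hexpY_int hφint hpt
  -- conditional expectations of the aggregates
  have hqzh_int : ∀ a ∈ 𝒜, Integrable (q a * zh a) μ := by
    intro a ha
    refine integrable_of_ae_bound (C := 1/η)
      ((hqm a ha).mul (hzh a ha)).aestronglyMeasurable ?_
    filter_upwards [hzh_bdd] with ω hω
    rw [Pi.mul_apply, abs_mul, abs_of_nonneg (hq0 ω a ha)]
    calc q a ω * |zh a ω| ≤ 1 * (1/η) :=
          mul_le_mul (hq_le1 ω a ha) (hω a ha) (abs_nonneg _) zero_le_one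
      _ = 1/η := one_mul _
  have hzh_int : ∀ a ∈ 𝒜, Integrable (zh a) μ := by
    intro a ha
    refine integrable_of_ae_bound (C := 1/η) (hzh a ha).aestronglyMeasurable ?_
    filter_upwards [hzh_bdd] with ω hω using hω a ha
  have hzhsq_int : ∀ a ∈ 𝒜, Integrable (fun ω => (zh a ω)^2) μ := by
    intro a ha
    refine integrable_of_ae_bound (C := (1/η)^2)
      ((hzh a ha).pow 2).aestronglyMeasurable ?_
    filter_upwards [hzh_bdd] with ω hω
    rw [abs_pow]
    exact pow_le_pow_left₀ (abs_nonneg _) (hω a ha) 2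
  have hqzhsq_int : ∀ a ∈ 𝒜, Integrable (q a * fun ω => (zh a ω)^2) μ := by
    intro a ha
    refine integrable_of_ae_bound (C := (1/η)^2)
      ((hqm a ha).mul ((hzh a ha).pow 2)).aestronglyMeasurable ?_
    filter_upwards [hzh_bdd] with ω hω
    rw [Pi.mul_apply, abs_mul, abs_of_nonneg (hq0 ω a ha), abs_pow]
    calc q a ω * |zh a ω|^2 ≤ 1 * (1/η)^2 :=
          mul_le_mul (hq_le1 ω a ha) (pow_le_pow_left₀ (abs_nonneg _) (hω a ha) 2)
            (by positivity) zero_le_one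
      _ = (1/η)^2 := one_mul _
  -- condexp of Y
  have hYfun : Y = ∑ a ∈ 𝒜, (q a * zh a) := by
    funext ω; rw [Finset.sum_apply]; rfl
  have hcY : μ[Y|m] =ᵐ[μ] M := by
    rw [hYfun]
    refine (condExp_finset_sum hqzh_int m).trans ?_
    have hpull : ∀ a : {x // x ∈ 𝒜}, μ[q a.1 * zh a.1|m] =ᵐ[μ] q a.1 * z a.1 := by
      intro a
      refine (condExp_mul_of_stronglyMeasurable_left (hqSM a.1 a.2) (hqzh_int a.1 a.2)
        (hzh_int a.1 a.2)).trans ?_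
      filter_upwards [hdd a.1 a.2] with ω hω
      rw [Pi.mul_apply, Pi.mul_apply, hω]
    have := ae_all_iff.2 hpull
    filter_upwards [this] with ω hω
    rw [Finset.sum_apply]
    rw [hM]
    refine Finset.sum_congr rfl fun a ha => ?_
    exact hω ⟨a, ha⟩
  -- condexp of V bounded by Bq/η
  have hcV : ∀ᵐ ω ∂μ, η * (μ[V|m]) ω ≤ Bq ω := by
    have hVfun : V = ∑ a ∈ 𝒜, (q a * fun ω => (zh a ω)^2) := by
      funext ω; rw [Finset.sum_apply]; rfl
    have h1 : μ[V|m] =ᵐ[μ] ∑ a ∈ 𝒜, μ[(q a * fun ω => (zh a ω)^2)|m] := by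
      rw [hVfun]; exact condExp_finset_sum hqzhsq_int m
    have hpull : ∀ a : {x // x ∈ 𝒜},
        μ[q a.1 * fun ω => (zh a.1 ω)^2|m] =ᵐ[μ] q a.1 * μ[fun ω => (zh a.1 ω)^2|m] :=
      fun a => condExp_mul_of_stronglyMeasurable_left (hqSM a.1 a.2) (hqzhsq_int a.1 a.2)
        (hzhsq_int a.1 a.2)
    have hccall : ∀ a : {x // x ∈ 𝒜}, ∀ᵐ ω ∂μ,
        η * (μ[fun ω' => (zh a.1 ω')^2|m]) ω ≤ b a.1 ω := fun a => hcc a.1 a.2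
    filter_upwards [h1, ae_all_iff.2 hpull, ae_all_iff.2 hccall, habs] with ω hω1 hω2 hω3 _
    rw [hω1, Finset.sum_apply]
    have e1 : ∀ a ∈ 𝒜, (μ[(q a * fun ω => (zh a ω)^2)|m]) ω
        = q a ω * (μ[fun ω' => (zh a ω')^2|m]) ω := fun a ha => hω2 ⟨a, ha⟩
    rw [Finset.sum_congr rfl e1, Finset.mul_sum]
    apply Finset.sum_le_sum
    intro a ha
    calc η * (q a ω * (μ[fun ω' => (zh a ω')^2|m]) ω)
        = q a ω * (η * (μ[fun ω' => (zh a ω')^2|m]) ω) := by ring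
      _ ≤ q a ω * b a ω := mul_le_mul_of_nonneg_left (hω3 ⟨a, ha⟩) (hq0 ω a ha)
  -- compute condexp of φ and conclude the key bound
  have hφeq : μ[φ|m] =ᵐ[μ] fun ω => 1 - (6/7)*η*(μ[Y|m]) ω + (18/35)*η^2*(μ[V|m]) ω := by
    have e1 : φ = (fun _ => (1:ℝ)) + ((-((6/7)*η)) • Y + ((18/35)*η^2) • V) := by
      funext ω; simp [hφ]; ring
    rw [e1]
    refine (condExp_add (m := m) (integrable_const 1)
      ((hYint.smul _).add (hVint.smul _))).trans ?_
    have h2 := condExp_add (m := m) (f := (-((6/7)*η)) • Y) (g := ((18/35)*η^2) • V)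
      (hYint.smul _) (hVint.smul _)
    have h3 := condExp_smul (μ := μ) (m := m) (-((6/7)*η)) Y
    have h4 := condExp_smul (μ := μ) (m := m) ((18/35)*η^2) V
    filter_upwards [h2, h3, h4] with ω h2ω h3ω h4ω
    have hconst : (μ[(fun _ => (1:ℝ))|m]) ω = 1 := by rw [condExp_const hm]
    simp only [Pi.add_apply, hconst, h2ω, h3ω, h4ω, Pi.smul_apply, smul_eq_mul]
    ring
  have hkey : μ[fun ω => Real.exp (-((6/7)*η*Y ω))|m] ≤ᵐ[μ]
      fun ω => Real.exp (-((6/7)*η*M ω) + (18/35)*η*Bq ω) := by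
    filter_upwards [hmono, hφeq, hcY, hcV] with ω h1 h2 h3 h4
    calc (μ[fun ω => Real.exp (-((6/7)*η*Y ω))|m]) ω ≤ (μ[φ|m]) ω := h1
      _ = 1 - (6/7)*η*(μ[Y|m]) ω + (18/35)*η^2*(μ[V|m]) ω := h2
      _ ≤ 1 + (-((6/7)*η*M ω) + (18/35)*η*Bq ω) := by
          rw [h3]
          have e2 : (18/35)*η^2*(μ[V|m]) ω = (18/35)*η*(η * (μ[V|m]) ω) := by ring
          rw [e2]
          have := mul_le_mul_of_nonneg_left h4 (by positivity : (0:ℝ) ≤ (18/35)*η)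
          linarith
      _ ≤ Real.exp (-((6/7)*η*M ω) + (18/35)*η*Bq ω) := by
          linarith [Real.add_one_le_exp (-((6/7)*η*M ω) + (18/35)*η*Bq ω)]
  -- split goal function and pull out predictable factor
  set f : Ω → ℝ := fun ω => Real.exp ((6/7)*η*M ω - (18/35)*η*Bq ω) with hf
  have hfSM : StronglyMeasurable[m] f := by
    apply Continuous.comp_stronglyMeasurable Real.continuous_exp
    exact (hMSM.const_mul _).sub (hBqSM.const_mul _)
  have hgsplit : (fun ω => Real.exp ((6/7)*η*(∑ a ∈ 𝒜, q a ω * (z a ω - zh a ω)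
        - (3/5) * ∑ a ∈ 𝒜, q a ω * b a ω)))
      = f * (fun ω => Real.exp (-((6/7)*η*Y ω))) := by
    funext ω
    rw [Pi.mul_apply, hf, ← Real.exp_add]
    congr 1
    have e1 : ∑ a ∈ 𝒜, q a ω * (z a ω - zh a ω) = M ω - Y ω := by
      rw [hM, hY, ← Finset.sum_sub_distrib]
      exact Finset.sum_congr rfl fun a _ => by ring
    rw [e1]
    ring
  have hg_bdd : ∀ᵐ ω ∂μ, |Real.exp ((6/7)*η*(∑ a ∈ 𝒜, q a ω * (z a ω - zh a ω)
      - (3/5) * ∑ a ∈ 𝒜, q a ω * b a ω))| ≤ Real.exp 3 := by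
    filter_upwards [hY_bdd, hM_bdd, hB_bdd] with ω h1 h2 h3
    rw [abs_of_pos (Real.exp_pos _)]
    apply Real.exp_le_exp.2
    have e1 : ∑ a ∈ 𝒜, q a ω * (z a ω - zh a ω) = M ω - Y ω := by
      rw [hM, hY, ← Finset.sum_sub_distrib]
      exact Finset.sum_congr rfl fun a _ => by ring
    rw [e1]
    have hb' : - ∑ a ∈ 𝒜, q a ω * b a ω ≤ 0 := neg_nonpos.2 h3.1
    have : M ω - Y ω - (3/5) * ∑ a ∈ 𝒜, q a ω * b a ω ≤ 2*(1/η) := by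
      have := abs_le.1 h1; have := abs_le.1 h2
      have h5 : (0:ℝ) ≤ (3/5) * ∑ a ∈ 𝒜, q a ω * b a ω := by
        have := h3.1; positivity
      linarith [(abs_le.1 h1).1, (abs_le.1 h2).2]
    calc (6/7)*η*(M ω - Y ω - (3/5) * ∑ a ∈ 𝒜, q a ω * b a ω)
        ≤ (6/7)*η*(2*(1/η)) := mul_le_mul_of_nonneg_left this (by positivity)
      _ = 12/7 := by field_simp; ring
      _ ≤ 3 := by norm_num
  have hg_int : Integrable (f * (fun ω => Real.exp (-((6/7)*η*Y ω)))) μ := by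
    rw [← hgsplit]
    refine integrable_of_ae_bound ?_ hg_bdd
    apply Real.continuous_exp.comp_aestronglyMeasurable
    apply AEStronglyMeasurable.const_mul
    apply AEStronglyMeasurable.sub
    · exact (Finset.stronglyMeasurable_fun_sum 𝒜
        (fun a ha => (hqm a ha).mul (((hz a ha).mono hm).sub (hzh a ha)))).aestronglyMeasurable
    · exact (((hBqSM.mono hm).const_mul _)).aestronglyMeasurable
  have hpull := condExp_mul_of_stronglyMeasurable_left hfSM hg_int hexpY_int
  refine ⟨hg_bdd, ?_⟩
  rw [hgsplit]
  calc μ[f * (fun ω => Real.exp (-((6/7)*η*Y ω)))|m]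
      =ᵐ[μ] f * μ[fun ω => Real.exp (-((6/7)*η*Y ω))|m] := hpull
    _ ≤ᵐ[μ] fun _ => (1:ℝ) := by
        filter_upwards [hkey] with ω h1
        rw [Pi.mul_apply]
        calc f ω * (μ[fun ω => Real.exp (-((6/7)*η*Y ω))|m]) ω
            ≤ f ω * Real.exp (-((6/7)*η*M ω) + (18/35)*η*Bq ω) :=
              mul_le_mul_of_nonneg_left h1 (Real.exp_pos _).le
          _ = 1 := by rw [hf, ← Real.exp_add]; simp


set_option maxHeartbeats 2000000 in
theorem stmt7
    {Ω : Type*} {mΩ : MeasurableSpace Ω} {μ : Measure Ω} [IsProbabilityMeasure μ]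
    (n K : ℕ) (ℱ : Filtration ℕ mΩ)
    (𝒜 : Finset (Fin K)) (h𝒜 : 𝒜.Nonempty)
    (η : ℝ) (hη : 0 < η)
    (Z Zhat β : ℕ → Fin K → Ω → ℝ)
    (hZpred : ∀ t ∈ Icc 1 n, ∀ a : Fin K, StronglyMeasurable[ℱ (t - 1)] (Z t a))
    (hZhatadapt : ∀ t ∈ Icc 1 n, ∀ a : Fin K, StronglyMeasurable[ℱ t] (Zhat t a))
    (hβpred : ∀ t ∈ Icc 1 n, ∀ a : Fin K, StronglyMeasurable[ℱ (t - 1)] (β t a))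
    (ha : ∀ᵐ ω ∂μ, ∀ t ∈ Icc 1 n, ∀ a ∈ 𝒜, η * |Zhat t a ω| ≤ 1)
    (hb : ∀ᵐ ω ∂μ, ∀ t ∈ Icc 1 n, ∀ a ∈ 𝒜, η * β t a ω ≤ 1)
    (hc : ∀ t ∈ Icc 1 n, ∀ a ∈ 𝒜,
      ∀ᵐ ω ∂μ, η * (μ[fun ω' => (Zhat t a ω') ^ 2|ℱ (t - 1)]) ω ≤ β t a ω)
    (hd : ∀ t ∈ Icc 1 n, ∀ a ∈ 𝒜, (μ[Zhat t a|ℱ (t - 1)]) =ᵐ[μ] Z t a)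
    (Q : ℕ → Fin K → Ω → ℝ)
    (hQ : ∀ t a ω, Q t a ω =
      (if a ∈ 𝒜 then Real.exp (-η * ∑ s ∈ Icc 1 (t - 1), (Zhat s a ω - β s a ω)) else 0) /
        ∑ b ∈ 𝒜, Real.exp (-η * ∑ s ∈ Icc 1 (t - 1), (Zhat s b ω - β s b ω)))
    (Astar : Ω → Fin K) (hAstarMeas : Measurable Astar)
    (hAstar : ∀ ω, Astar ω ∈ 𝒜 ∧ ∀ b ∈ 𝒜,
      ∑ t ∈ Icc 1 n, Z t (Astar ω) ω ≤ ∑ t ∈ Icc 1 n, Z t b ω)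
    (δ : ℝ) (hδ0 : 0 < δ) (hδ1 : δ ≤ 1 / (K + 1)) :
    1 - (K + 1) * δ ≤
      (μ {ω | ∑ t ∈ Icc 1 n, ∑ a ∈ 𝒜, Q t a ω * (Z t a ω - Z t (Astar ω) ω) ≤
        3 * Real.log (1 / δ) / η
          + η * ∑ t ∈ Icc 1 n, ∑ a ∈ 𝒜, Q t a ω * (Zhat t a ω) ^ 2
          + 5 * ∑ t ∈ Icc 1 n, ∑ a ∈ 𝒜, Q t a ω * β t a ω}).toReal := by
  classical
  have hδinv : (0:ℝ) < 1/δ := by positivity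
  have hKδ : (K:ℝ) + 1 ≤ 1/δ := by
    rw [le_div_iff₀ hδ0]
    rw [le_div_iff₀ (by positivity : (0:ℝ) < (K:ℝ)+1)] at hδ1
    linarith
  have hcardK : (𝒜.card : ℝ) ≤ (K:ℝ) := by
    exact_mod_cast le_trans (Finset.card_le_univ 𝒜) (le_of_eq (Fintype.card_fin K))
  have hcard1 : (1:ℝ) ≤ (𝒜.card : ℝ) := by
    exact_mod_cast Finset.card_pos.2 h𝒜
  have hlogcard : Real.log (𝒜.card) ≤ Real.log (1/δ) :=
    Real.log_le_log (by linarith) (by linarith)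
  have hL0 : 0 ≤ Real.log (1/δ) :=
    Real.log_nonneg (by linarith)
  -- basic properties of Q
  have hWpos : ∀ t ω, 0 < ∑ b ∈ 𝒜, Real.exp (-η * ∑ s ∈ Icc 1 (t - 1), (Zhat s b ω - β s b ω)) :=
    fun t ω => Finset.sum_pos (fun b _ => Real.exp_pos _) h𝒜
  have hQnn : ∀ t a ω, 0 ≤ Q t a ω := by
    intro t a ω
    rw [hQ t a ω]
    apply div_nonneg _ (hWpos t ω).le
    split_ifs
    · exact (Real.exp_pos _).le
    · exact le_rfl
  have hQsum : ∀ t ω, ∑ a ∈ 𝒜, Q t a ω = 1 := by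
    intro t ω
    have h1 : ∑ a ∈ 𝒜, Q t a ω =
        (∑ a ∈ 𝒜, Real.exp (-η * ∑ s ∈ Icc 1 (t - 1), (Zhat s a ω - β s a ω))) /
          ∑ b ∈ 𝒜, Real.exp (-η * ∑ s ∈ Icc 1 (t - 1), (Zhat s b ω - β s b ω)) := by
      rw [Finset.sum_div]
      exact Finset.sum_congr rfl fun a haA => by rw [hQ t a ω, if_pos haA]
    rw [h1, div_self (hWpos t ω).ne']
  -- strong measurability of Q
  have hQSM : ∀ t ∈ Icc 1 n, ∀ a : Fin K, StronglyMeasurable[ℱ (t-1)] (Q t a) := by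
    intro t ht a
    have hsumSM : ∀ b : Fin K, StronglyMeasurable[ℱ (t-1)]
        (fun ω => ∑ s ∈ Icc 1 (t-1), (Zhat s b ω - β s b ω)) := by
      intro b
      apply Finset.stronglyMeasurable_fun_sum
      intro s hs
      have hs' := Finset.mem_Icc.1 hs
      have ht' := Finset.mem_Icc.1 ht
      have hsn : s ∈ Icc 1 n := Finset.mem_Icc.2 ⟨hs'.1, by omega⟩
      exact ((hZhatadapt s hsn b).mono (ℱ.mono (by omega : s ≤ t-1))).sub
        ((hβpred s hsn b).mono (ℱ.mono (by omega : s - 1 ≤ t-1)))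
    have hfun : Q t a = fun ω =>
        (if a ∈ 𝒜 then Real.exp (-η * ∑ s ∈ Icc 1 (t - 1), (Zhat s a ω - β s a ω)) else 0) /
          ∑ b ∈ 𝒜, Real.exp (-η * ∑ s ∈ Icc 1 (t - 1), (Zhat s b ω - β s b ω)) :=
      funext fun ω => hQ t a ω
    rw [hfun]
    apply Measurable.stronglyMeasurable
    apply Measurable.div
    · split_ifs
      · exact (Real.continuous_exp.comp_stronglyMeasurable
          ((hsumSM a).const_mul (-η))).measurable
      · exact measurable_const
    · exact (Finset.stronglyMeasurable_fun_sum 𝒜 fun b _ =>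
        Real.continuous_exp.comp_stronglyMeasurable ((hsumSM b).const_mul (-η))).measurable
  -- nonnegativity of β (a.e.)
  have hβ0 : ∀ t ∈ Icc 1 n, ∀ a ∈ 𝒜, 0 ≤ᵐ[μ] β t a := by
    intro t ht a haA
    have h1 : (0:Ω → ℝ) ≤ᵐ[μ] μ[fun ω' => (Zhat t a ω')^2|ℱ (t-1)] :=
      condExp_nonneg (ae_of_all _ fun ω => sq_nonneg _)
    filter_upwards [h1, hc t ht a haA] with ω h1ω h2ω
    simp only [Pi.zero_apply] at h1ω ⊢
    have h3 : 0 ≤ η * (μ[fun ω' => (Zhat t a ω')^2|ℱ (t-1)]) ω :=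
      mul_nonneg hη.le h1ω
    linarith
  -- step 1 conclusions
  have hstep1 : ∀ t ∈ Icc 1 n, ∀ a ∈ 𝒜,
      (∀ᵐ ω ∂μ, |Real.exp ((6/5)*η*(Zhat t a ω - Z t a ω - β t a ω))| ≤ Real.exp (18/5)) ∧
      μ[fun ω => Real.exp ((6/5)*η*(Zhat t a ω - Z t a ω - β t a ω))|ℱ (t-1)]
        ≤ᵐ[μ] fun _ => 1 := by
    intro t ht a haA
    refine step1 (ℱ.le (t-1)) hη ((hZhatadapt t ht a).mono (ℱ.le t))
      (hZpred t ht a) (hβpred t ht a) ?_ ?_ (hβ0 t ht a haA) (hc t ht a haA) (hd t ht a haA)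
    · filter_upwards [ha] with ω hω using hω t ht a haA
    · filter_upwards [hb] with ω hω using hω t ht a haA
  -- step 2 conclusions
  have hstep2 : ∀ t ∈ Icc 1 n,
      (∀ᵐ ω ∂μ, |Real.exp ((6/7)*η*(∑ a ∈ 𝒜, Q t a ω * (Z t a ω - Zhat t a ω)
          - (3/5) * ∑ a ∈ 𝒜, Q t a ω * β t a ω))| ≤ Real.exp 3) ∧
      μ[fun ω => Real.exp ((6/7)*η*(∑ a ∈ 𝒜, Q t a ω * (Z t a ω - Zhat t a ω)
          - (3/5) * ∑ a ∈ 𝒜, Q t a ω * β t a ω))|ℱ (t-1)] ≤ᵐ[μ] fun _ => 1 := by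
    intro t ht
    refine step2 (ℱ.le (t-1)) hη (fun a => Q t a) (fun a => Zhat t a) (fun a => Z t a)
      (fun a => β t a)
      (fun a _ => hQSM t ht a) (fun ω a haA => hQnn t a ω) (fun ω => hQsum t ω)
      (fun a haA => (hZhatadapt t ht a).mono (ℱ.le t))
      (fun a _ => hZpred t ht a) (fun a _ => hβpred t ht a)
      ?_ ?_ (fun a haA => hc t ht a haA) (fun a haA => hd t ht a haA)
    · filter_upwards [ha] with ω hω a haA using hω t ht a haA
    · have hβall : ∀ᵐ ω ∂μ, ∀ a : {x // x ∈ 𝒜}, 0 ≤ β t a.1 ω :=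
        ae_all_iff.2 fun a => hβ0 t ht a.1 a.2
      filter_upwards [hb, hβall] with ω h1 h2 a haA
      exact ⟨h2 ⟨a, haA⟩, h1 t ht a haA⟩
  -- supermartingale products
  have hsup1 : ∀ a ∈ 𝒜, Integrable (fun ω => ∏ t ∈ Icc 1 n,
      Real.exp ((6/5)*η*(Zhat t a ω - Z t a ω - β t a ω))) μ ∧
      ∫ ω, ∏ t ∈ Icc 1 n, Real.exp ((6/5)*η*(Zhat t a ω - Z t a ω - β t a ω)) ∂μ ≤ 1 := by
    intro a haA
    refine super_prod ℱ n (fun t ω => Real.exp ((6/5)*η*(Zhat t a ω - Z t a ω - β t a ω)))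
      (fun _ => Real.exp (18/5)) ?_ (fun t ht ω => (Real.exp_pos _).le) ?_
      (fun t ht => (hstep1 t ht a haA).2)
    · intro t ht
      apply Real.continuous_exp.comp_stronglyMeasurable
      apply StronglyMeasurable.const_mul
      exact ((hZhatadapt t ht a).sub ((hZpred t ht a).mono (ℱ.mono (by omega)))).sub
        ((hβpred t ht a).mono (ℱ.mono (by omega)))
    · intro t ht
      filter_upwards [(hstep1 t ht a haA).1] with ω hω
      exact le_trans (le_abs_self _) hω
  have hsup2 : Integrable (fun ω => ∏ t ∈ Icc 1 n,
      Real.exp ((6/7)*η*(∑ a ∈ 𝒜, Q t a ω * (Z t a ω - Zhat t a ω)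
        - (3/5) * ∑ a ∈ 𝒜, Q t a ω * β t a ω))) μ ∧
      ∫ ω, ∏ t ∈ Icc 1 n, Real.exp ((6/7)*η*(∑ a ∈ 𝒜, Q t a ω * (Z t a ω - Zhat t a ω)
        - (3/5) * ∑ a ∈ 𝒜, Q t a ω * β t a ω)) ∂μ ≤ 1 := by
    refine super_prod ℱ n _ (fun _ => Real.exp 3) ?_ (fun t ht ω => (Real.exp_pos _).le) ?_
      (fun t ht => (hstep2 t ht).2)
    · intro t ht
      apply Real.continuous_exp.comp_stronglyMeasurable
      apply StronglyMeasurable.const_mul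
      apply StronglyMeasurable.sub
      · apply Finset.stronglyMeasurable_fun_sum
        intro a haA
        exact ((hQSM t ht a).mono (ℱ.mono (by omega))).mul
          (((hZpred t ht a).mono (ℱ.mono (by omega))).sub (hZhatadapt t ht a))
      · apply StronglyMeasurable.const_mul
        apply Finset.stronglyMeasurable_fun_sum
        intro a haA
        exact ((hQSM t ht a).mono (ℱ.mono (by omega))).mul
          ((hβpred t ht a).mono (ℱ.mono (by omega)))
    · intro t ht
      filter_upwards [(hstep2 t ht).1] with ω hω
      exact le_trans (le_abs_self _) hω
  -- Markov's inequality helper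
  have hmark : ∀ (F : Ω → ℝ), Integrable F μ → (∀ ω, 0 ≤ F ω) → (∫ ω, F ω ∂μ) ≤ 1 →
      (μ {ω | 1/δ ≤ F ω}).toReal ≤ δ := by
    intro F hint h0 hle
    have h1 := mul_meas_ge_le_integral_of_nonneg (ae_of_all μ h0) hint (1/δ)
    have h2 : (1/δ) * (μ {ω | 1/δ ≤ F ω}).toReal ≤ 1 := h1.trans hle
    have h3 := mul_le_mul_of_nonneg_left h2 hδ0.le
    calc (μ {ω | 1/δ ≤ F ω}).toReal = δ * ((1/δ) * (μ {ω | 1/δ ≤ F ω}).toReal) := by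
          field_simp
      _ ≤ δ * 1 := h3
      _ = δ := mul_one δ
  -- bad events
  set E1 : Fin K → Set Ω := fun a => {ω | 1/δ ≤ ∏ t ∈ Icc 1 n,
    Real.exp ((6/5)*η*(Zhat t a ω - Z t a ω - β t a ω))} with hE1def
  set E2 : Set Ω := {ω | 1/δ ≤ ∏ t ∈ Icc 1 n,
    Real.exp ((6/7)*η*(∑ a ∈ 𝒜, Q t a ω * (Z t a ω - Zhat t a ω)
      - (3/5) * ∑ a ∈ 𝒜, Q t a ω * β t a ω))} with hE2def
  have hE1meas : ∀ a ∈ 𝒜, MeasurableSet (E1 a) := by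
    intro a haA
    apply measurableSet_le measurable_const
    apply Finset.measurable_fun_prod
    intro t ht
    apply (Real.continuous_exp.comp_stronglyMeasurable ?_).measurable
    apply StronglyMeasurable.const_mul
    exact (((hZhatadapt t ht a).mono (ℱ.le t)).sub
        ((hZpred t ht a).mono (ℱ.le (t-1)))).sub ((hβpred t ht a).mono (ℱ.le (t-1)))
  have hE2meas : MeasurableSet E2 := by
    apply measurableSet_le measurable_const
    apply Finset.measurable_fun_prod
    intro t ht
    apply (Real.continuous_exp.comp_stronglyMeasurable ?_).measurable
    apply StronglyMeasurable.const_mul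
    apply StronglyMeasurable.sub
    · apply Finset.stronglyMeasurable_fun_sum
      intro a haA
      exact ((hQSM t ht a).mono (ℱ.le (t-1))).mul
        (((hZpred t ht a).mono (ℱ.le (t-1))).sub ((hZhatadapt t ht a).mono (ℱ.le t)))
    · apply StronglyMeasurable.const_mul
      apply Finset.stronglyMeasurable_fun_sum
      intro a haA
      exact ((hQSM t ht a).mono (ℱ.le (t-1))).mul ((hβpred t ht a).mono (ℱ.le (t-1)))
  set bad : Set Ω := E2 ∪ ⋃ a ∈ 𝒜, E1 a with hbaddef
  have hbadmeas : MeasurableSet bad :=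
    hE2meas.union (MeasurableSet.biUnion 𝒜.countable_toSet fun a haA => hE1meas a haA)
  -- measure of bad events
  have hE1μ : ∀ a ∈ 𝒜, μ (E1 a) ≤ ENNReal.ofReal δ := by
    intro a haA
    have h1 := hmark _ (hsup1 a haA).1 (fun ω => Finset.prod_nonneg fun t _ => (Real.exp_pos _).le)
      (hsup1 a haA).2
    rw [← ENNReal.ofReal_toReal (measure_ne_top μ (E1 a))]
    exact ENNReal.ofReal_le_ofReal h1
  have hE2μ : μ E2 ≤ ENNReal.ofReal δ := by
    have h1 := hmark _ hsup2.1 (fun ω => Finset.prod_nonneg fun t _ => (Real.exp_pos _).le)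
      hsup2.2
    rw [← ENNReal.ofReal_toReal (measure_ne_top μ E2)]
    exact ENNReal.ofReal_le_ofReal h1
  have hbadμ : (μ bad).toReal ≤ ((K:ℝ) + 1) * δ := by
    have h1 : μ bad ≤ ENNReal.ofReal δ + (𝒜.card : ℝ≥0∞) * ENNReal.ofReal δ := by
      calc μ bad ≤ μ E2 + μ (⋃ a ∈ 𝒜, E1 a) := measure_union_le _ _
        _ ≤ ENNReal.ofReal δ + ∑ a ∈ 𝒜, μ (E1 a) :=
            add_le_add hE2μ (measure_biUnion_finset_le 𝒜 E1)
        _ ≤ ENNReal.ofReal δ + (𝒜.card : ℝ≥0∞) * ENNReal.ofReal δ := by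
            apply add_le_add le_rfl
            calc ∑ a ∈ 𝒜, μ (E1 a) ≤ ∑ a ∈ 𝒜, ENNReal.ofReal δ :=
                  Finset.sum_le_sum hE1μ
              _ = (𝒜.card : ℝ≥0∞) * ENNReal.ofReal δ := by
                  rw [Finset.sum_const, nsmul_eq_mul]
    have h2 : ENNReal.ofReal δ + (𝒜.card : ℝ≥0∞) * ENNReal.ofReal δ
        = ENNReal.ofReal ((𝒜.card + 1 : ℝ) * δ) := by
      rw [ENNReal.ofReal_mul (by positivity)]
      have : ENNReal.ofReal ((𝒜.card : ℝ) + 1) = (𝒜.card : ℝ≥0∞) + 1 := by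
        rw [ENNReal.ofReal_add (by positivity) zero_le_one]
        rw [ENNReal.ofReal_one, ENNReal.ofReal_natCast]
      rw [this]
      ring
    rw [h2] at h1
    calc (μ bad).toReal ≤ (ENNReal.ofReal ((𝒜.card + 1 : ℝ) * δ)).toReal :=
          ENNReal.toReal_mono ENNReal.ofReal_ne_top h1
      _ = (𝒜.card + 1 : ℝ) * δ := ENNReal.toReal_ofReal (by positivity)
      _ ≤ ((K:ℝ) + 1) * δ := by nlinarith
  -- the pointwise implication on the good event
  have hincl : ∀ ω ∈ badᶜ, (∀ t ∈ Icc 1 n, ∀ a ∈ 𝒜,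
      η * |Zhat t a ω| ≤ 1 ∧ 0 ≤ η * β t a ω ∧ η * β t a ω ≤ 1) →
      ∑ t ∈ Icc 1 n, ∑ a ∈ 𝒜, Q t a ω * (Z t a ω - Z t (Astar ω) ω) ≤
        3 * Real.log (1 / δ) / η
          + η * ∑ t ∈ Icc 1 n, ∑ a ∈ 𝒜, Q t a ω * (Zhat t a ω) ^ 2
          + 5 * ∑ t ∈ Icc 1 n, ∑ a ∈ 𝒜, Q t a ω * β t a ω := by
    intro ω hω hbnd
    rw [Set.mem_compl_iff, hbaddef, Set.mem_union, not_or] at hω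
    obtain ⟨hω2, hω1⟩ := hω
    rw [Set.mem_iUnion₂] at hω1
    push_neg at hω1
    -- deterministic bound
    have hdet := det_lemma n 𝒜 η (fun t a => Zhat t a ω) (fun t a => β t a ω) h𝒜 hη
      (fun t a => Q t a ω) (fun t a => hQ t a ω)
      (fun t ht a haA => hbnd t ht a haA) (Astar ω) (hAstar ω).1
    -- bound from E1 at Astar ω
    have hSA : (6/5)*η*(∑ t ∈ Icc 1 n, (Zhat t (Astar ω) ω - Z t (Astar ω) ω
        - β t (Astar ω) ω)) ≤ Real.log (1/δ) := by
      have hlt := hω1 (Astar ω) (hAstar ω).1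
      rw [hE1def] at hlt
      simp only [Set.mem_setOf_eq, not_le] at hlt
      have he : (∏ t ∈ Icc 1 n, Real.exp ((6/5)*η*(Zhat t (Astar ω) ω - Z t (Astar ω) ω
          - β t (Astar ω) ω))) = Real.exp (∑ t ∈ Icc 1 n, (6/5)*η*(Zhat t (Astar ω) ω
          - Z t (Astar ω) ω - β t (Astar ω) ω)) := by
        rw [Real.exp_sum]
      rw [he] at hlt
      have := (Real.log_lt_log (Real.exp_pos _) hlt).le
      rw [Real.log_exp] at this
      calc (6/5)*η*(∑ t ∈ Icc 1 n, (Zhat t (Astar ω) ω - Z t (Astar ω) ω - β t (Astar ω) ω))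
          = ∑ t ∈ Icc 1 n, (6/5)*η*(Zhat t (Astar ω) ω - Z t (Astar ω) ω - β t (Astar ω) ω) := by
            rw [Finset.mul_sum]
        _ ≤ Real.log (1/δ) := this
    -- bound from E2
    have hSX : (6/7)*η*(∑ t ∈ Icc 1 n, (∑ a ∈ 𝒜, Q t a ω * (Z t a ω - Zhat t a ω)
        - (3/5) * ∑ a ∈ 𝒜, Q t a ω * β t a ω)) ≤ Real.log (1/δ) := by
      rw [hE2def] at hω2
      simp only [Set.mem_setOf_eq, not_le] at hω2
      have he : (∏ t ∈ Icc 1 n, Real.exp ((6/7)*η*(∑ a ∈ 𝒜, Q t a ω * (Z t a ω - Zhat t a ω)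
          - (3/5) * ∑ a ∈ 𝒜, Q t a ω * β t a ω)))
          = Real.exp (∑ t ∈ Icc 1 n, (6/7)*η*(∑ a ∈ 𝒜, Q t a ω * (Z t a ω - Zhat t a ω)
          - (3/5) * ∑ a ∈ 𝒜, Q t a ω * β t a ω)) := by
        rw [Real.exp_sum]
      rw [he] at hω2
      have := (Real.log_lt_log (Real.exp_pos _) hω2).le
      rw [Real.log_exp] at this
      calc (6/7)*η*(∑ t ∈ Icc 1 n, (∑ a ∈ 𝒜, Q t a ω * (Z t a ω - Zhat t a ω)
          - (3/5) * ∑ a ∈ 𝒜, Q t a ω * β t a ω))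
          = ∑ t ∈ Icc 1 n, (6/7)*η*(∑ a ∈ 𝒜, Q t a ω * (Z t a ω - Zhat t a ω)
          - (3/5) * ∑ a ∈ 𝒜, Q t a ω * β t a ω) := by rw [Finset.mul_sum]
        _ ≤ Real.log (1/δ) := this
    -- algebraic identities
    have e1 : ∑ t ∈ Icc 1 n, ∑ a ∈ 𝒜, Q t a ω * (Z t a ω - Z t (Astar ω) ω)
        = (∑ t ∈ Icc 1 n, ∑ a ∈ 𝒜, Q t a ω * Z t a ω)
          - ∑ t ∈ Icc 1 n, Z t (Astar ω) ω := by
      rw [← Finset.sum_sub_distrib]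
      refine Finset.sum_congr rfl fun t _ => ?_
      calc ∑ a ∈ 𝒜, Q t a ω * (Z t a ω - Z t (Astar ω) ω)
          = (∑ a ∈ 𝒜, Q t a ω * Z t a ω) - (∑ a ∈ 𝒜, Q t a ω) * Z t (Astar ω) ω := by
            rw [Finset.sum_mul, ← Finset.sum_sub_distrib]
            exact Finset.sum_congr rfl fun a _ => by ring
        _ = (∑ a ∈ 𝒜, Q t a ω * Z t a ω) - Z t (Astar ω) ω := by
            rw [hQsum t ω, one_mul]
    have e2 : ∑ t ∈ Icc 1 n, (∑ a ∈ 𝒜, Q t a ω * (Z t a ω - Zhat t a ω)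
        - (3/5) * ∑ a ∈ 𝒜, Q t a ω * β t a ω)
        = (∑ t ∈ Icc 1 n, ∑ a ∈ 𝒜, Q t a ω * Z t a ω)
          - (∑ t ∈ Icc 1 n, ∑ a ∈ 𝒜, Q t a ω * Zhat t a ω)
          - (3/5) * ∑ t ∈ Icc 1 n, ∑ a ∈ 𝒜, Q t a ω * β t a ω := by
      rw [Finset.mul_sum, ← Finset.sum_sub_distrib, ← Finset.sum_sub_distrib]
      refine Finset.sum_congr rfl fun t _ => ?_
      have : ∑ a ∈ 𝒜, Q t a ω * (Z t a ω - Zhat t a ω)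
          = ∑ a ∈ 𝒜, (Q t a ω * Z t a ω - Q t a ω * Zhat t a ω) :=
        Finset.sum_congr rfl fun a _ => by ring
      rw [this, Finset.sum_sub_distrib]
    have e3 : ∑ t ∈ Icc 1 n, (Zhat t (Astar ω) ω - Z t (Astar ω) ω - β t (Astar ω) ω)
        = (∑ t ∈ Icc 1 n, Zhat t (Astar ω) ω) - (∑ t ∈ Icc 1 n, Z t (Astar ω) ω)
          - ∑ t ∈ Icc 1 n, β t (Astar ω) ω := by
      rw [← Finset.sum_sub_distrib, ← Finset.sum_sub_distrib]
    have e4 : ∑ t ∈ Icc 1 n, (Zhat t (Astar ω) ω - β t (Astar ω) ω)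
        = (∑ t ∈ Icc 1 n, Zhat t (Astar ω) ω) - ∑ t ∈ Icc 1 n, β t (Astar ω) ω := by
      rw [← Finset.sum_sub_distrib]
    -- final arithmetic
    rw [e1]
    rw [e3] at hSA
    rw [e2] at hSX
    rw [e4] at hdet
    have hdetη := mul_le_mul_of_nonneg_left hdet hη.le
    have hcancel : η * (Real.log (𝒜.card) / η) = Real.log (𝒜.card) := by field_simp
    have hgoalη : η * ((∑ t ∈ Icc 1 n, ∑ a ∈ 𝒜, Q t a ω * Z t a ω)
        - ∑ t ∈ Icc 1 n, Z t (Astar ω) ω) ≤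
        η * (3 * Real.log (1 / δ) / η
          + η * ∑ t ∈ Icc 1 n, ∑ a ∈ 𝒜, Q t a ω * (Zhat t a ω) ^ 2
          + 5 * ∑ t ∈ Icc 1 n, ∑ a ∈ 𝒜, Q t a ω * β t a ω) := by
      have hrhs : η * (3 * Real.log (1 / δ) / η
          + η * ∑ t ∈ Icc 1 n, ∑ a ∈ 𝒜, Q t a ω * (Zhat t a ω) ^ 2
          + 5 * ∑ t ∈ Icc 1 n, ∑ a ∈ 𝒜, Q t a ω * β t a ω)
          = 3 * Real.log (1 / δ)
          + η * (η * ∑ t ∈ Icc 1 n, ∑ a ∈ 𝒜, Q t a ω * (Zhat t a ω) ^ 2)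
          + 5 * (η * ∑ t ∈ Icc 1 n, ∑ a ∈ 𝒜, Q t a ω * β t a ω) := by
        field_simp
      rw [hrhs]
      nlinarith [hSA, hSX, hdetη, hcancel, hlogcard]
    exact le_of_mul_le_mul_left hgoalη hη
  -- from a.e. hypotheses to the conclusion
  have haefull : ∀ᵐ ω ∂μ, ∀ t ∈ Icc 1 n, ∀ a ∈ 𝒜,
      η * |Zhat t a ω| ≤ 1 ∧ 0 ≤ η * β t a ω ∧ η * β t a ω ≤ 1 := by
    have hβall : ∀ᵐ ω ∂μ, ∀ t : {x // x ∈ Icc 1 n}, ∀ a : {y // y ∈ 𝒜}, 0 ≤ β t.1 a.1 ω :=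
      ae_all_iff.2 fun t => ae_all_iff.2 fun a => hβ0 t.1 t.2 a.1 a.2
    filter_upwards [ha, hb, hβall] with ω h1 h2 h3
    intro t ht a haA
    exact ⟨h1 t ht a haA, mul_nonneg hη.le (h3 ⟨t, ht⟩ ⟨a, haA⟩), h2 t ht a haA⟩
  -- measure-theoretic conclusion
  set target : Set Ω := {ω | ∑ t ∈ Icc 1 n, ∑ a ∈ 𝒜, Q t a ω * (Z t a ω - Z t (Astar ω) ω) ≤
      3 * Real.log (1 / δ) / η
        + η * ∑ t ∈ Icc 1 n, ∑ a ∈ 𝒜, Q t a ω * (Zhat t a ω) ^ 2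
        + 5 * ∑ t ∈ Icc 1 n, ∑ a ∈ 𝒜, Q t a ω * β t a ω} with htargetdef
  set N : Set Ω := {ω | ¬ (∀ t ∈ Icc 1 n, ∀ a ∈ 𝒜,
      η * |Zhat t a ω| ≤ 1 ∧ 0 ≤ η * β t a ω ∧ η * β t a ω ≤ 1)} with hNdef
  have hNnull : μ N = 0 := by
    rw [hNdef]
    exact haefull
  have hsubset : badᶜ \ N ⊆ target := by
    intro ω hω
    rw [htargetdef, Set.mem_setOf_eq]
    refine hincl ω hω.1 ?_
    have := hω.2
    rw [hNdef, Set.mem_setOf_eq, not_not] at this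
    exact this
  have hμcompl : μ badᶜ ≤ μ target := by
    calc μ badᶜ = μ (badᶜ \ N) := (measure_diff_null hNnull).symm
      _ ≤ μ target := measure_mono hsubset
  have hcompl_toReal : (μ badᶜ).toReal = 1 - (μ bad).toReal := by
    rw [prob_compl_eq_one_sub hbadmeas]
    rw [ENNReal.toReal_sub_of_le prob_le_one ENNReal.one_ne_top]
    simp
  calc 1 - ((K:ℝ) + 1) * δ ≤ 1 - (μ bad).toReal := by linarith
    _ = (μ badᶜ).toReal := hcompl_toReal.symm
    _ ≤ (μ target).toReal :=
        ENNReal.toReal_mono (measure_ne_top μ target) hμcompl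
end

section
/- Let X_1, …, X_n be a sequence of square-integrable real random variables adapted to a filtration (ℱ_t)_{t=0}^n, let μ_t = E[X_t | ℱ_{t−1}], and suppose η > 0 satisfies η·X_t ≤ 1 almost surely for all t. Then for every δ ∈ (0,1): P( ∑_{t=1}^n (X_t − μ_t) ≥ η·∑_{t=1}^n E[X_t² | ℱ_{t−1}] + (1/η)·log(1/δ) ) ≤ δ. -/
open MeasureTheory Finset

lemma exp_le_one_add_add_sq {x : ℝ} (hx : x ≤ 1) : Real.exp x ≤ 1 + x + x ^ 2 := by
  rcases le_or_gt (-1) x with h | h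
  · have hb := Real.exp_bound (x := x) (abs_le.2 ⟨h, hx⟩) (n := 2) (by norm_num)
    have hsum : ∑ m ∈ Finset.range 2, x ^ m / m.factorial = 1 + x := by
      simp [Finset.sum_range_succ]
    rw [hsum] at hb
    have h2 : |x| ^ 2 = x ^ 2 := sq_abs x
    rw [abs_sub_le_iff] at hb
    have hb1 := hb.1
    norm_num at hb1
    nlinarith [sq_nonneg x]
  · have h1 : Real.exp x < 1 := Real.exp_lt_one_iff.2 (by linarith)
    nlinarith

lemma key_sup {Ω : Type*} {mΩ : MeasurableSpace Ω} {μ : Measure Ω} [IsProbabilityMeasure μ]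
    (n : ℕ) (ℱ : Filtration ℕ mΩ) (X : ℕ → Ω → ℝ)
    (hadapt : ∀ t ∈ Icc 1 n, StronglyMeasurable[ℱ t] (X t))
    (hL2 : ∀ t ∈ Icc 1 n, Integrable (fun ω => (X t ω) ^ 2) μ)
    (η : ℝ) (hη : 0 < η)
    (hbound : ∀ᵐ ω ∂μ, ∀ t ∈ Icc 1 n, η * X t ω ≤ 1) :
    ∀ k, k ≤ n → ∫⁻ ω, ENNReal.ofReal (Real.exp (∑ t ∈ Icc 1 k,
      (η * X t ω - η * (μ[X t|ℱ (t - 1)]) ω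
        - η ^ 2 * (μ[fun ω' => (X t ω') ^ 2|ℱ (t - 1)]) ω))) ∂μ ≤ 1 := by
  -- abbreviations
  set m : ℕ → Ω → ℝ := fun t => μ[X t|ℱ (t - 1)] with hm
  set v : ℕ → Ω → ℝ := fun t => μ[fun ω' => (X t ω') ^ 2|ℱ (t - 1)] with hv
  set G : ℕ → Ω → ℝ := fun k ω => ∑ t ∈ Icc 1 k,
      (η * X t ω - η * m t ω - η ^ 2 * v t ω) with hG
  -- measurability of G k w.r.t. ℱ k
  have hGm : ∀ k, k ≤ n → StronglyMeasurable[ℱ k] (G k) := by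
    intro k hk
    apply Finset.stronglyMeasurable_fun_sum
    intro t ht
    rw [mem_Icc] at ht
    have h1 : StronglyMeasurable[ℱ k] (X t) :=
      (hadapt t (mem_Icc.2 ⟨ht.1, ht.2.trans hk⟩)).mono (ℱ.mono ht.2)
    have h2 : StronglyMeasurable[ℱ k] (m t) :=
      stronglyMeasurable_condExp.mono (ℱ.mono ((Nat.sub_le t 1).trans ht.2))
    have h3 : StronglyMeasurable[ℱ k] (v t) :=
      stronglyMeasurable_condExp.mono (ℱ.mono ((Nat.sub_le t 1).trans ht.2))
    exact ((h1.const_mul η).sub (h2.const_mul η)).sub (h3.const_mul (η ^ 2))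
  intro k
  induction k with
  | zero =>
    intro _
    simp [G]
  | succ k ih =>
    intro hk1
    have hk : k ≤ n := Nat.le_of_succ_le hk1
    have ihle := ih hk
    have tmem : k + 1 ∈ Icc 1 n := mem_Icc.2 ⟨Nat.succ_le_succ (Nat.zero_le k), hk1⟩
    -- the new increment pieces
    set Y : Ω → ℝ := X (k + 1) with hY
    have hmk1 : m (k + 1) = μ[Y|ℱ k] := by simp [m, Y]
    have hvk1 : v (k + 1) = μ[fun ω' => (Y ω') ^ 2|ℱ k] := by simp [v, Y]
    set F : Ω → ℝ := fun ω => Real.exp (G k ω) * Real.exp (-(η * m (k + 1) ω) - η ^ 2 * v (k + 1) ω)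
      with hF
    set C : Ω → ℝ := fun ω => Real.exp (η * Y ω) with hC
    -- splitting
    have hMsplit : ∀ ω, Real.exp (G (k + 1) ω) = F ω * C ω := by
      intro ω
      have h1 : G (k + 1) ω = G k ω
          + (η * Y ω - η * m (k + 1) ω - η ^ 2 * v (k + 1) ω) := by
        simp only [G]
        exact Finset.sum_Icc_succ_top (Nat.le_add_left 1 k) _
      rw [h1, show G k ω + (η * Y ω - η * m (k + 1) ω - η ^ 2 * v (k + 1) ω)
          = (G k ω + (-(η * m (k + 1) ω) - η ^ 2 * v (k + 1) ω)) + η * Y ω by ring,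
        Real.exp_add, Real.exp_add]
    -- measurability
    have hYm : StronglyMeasurable (Y) := (hadapt _ tmem).mono (ℱ.le _)
    have hFm : StronglyMeasurable[ℱ k] F := by
      apply StronglyMeasurable.mul
      · exact Real.continuous_exp.comp_stronglyMeasurable (hGm k hk)
      · apply Real.continuous_exp.comp_stronglyMeasurable
        have h2 : StronglyMeasurable[ℱ k] (m (k + 1)) := by
          rw [hmk1]; exact stronglyMeasurable_condExp
        have h3 : StronglyMeasurable[ℱ k] (v (k + 1)) := by
          rw [hvk1]; exact stronglyMeasurable_condExp
        exact ((h2.const_mul η).neg).sub (h3.const_mul (η ^ 2))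
    have hCm : StronglyMeasurable C :=
      Real.continuous_exp.comp_stronglyMeasurable (hYm.const_mul η)
    -- integrability of Y and C
    have hY2int : Integrable (fun ω => (Y ω) ^ 2) μ := hL2 _ tmem
    have hYint : Integrable Y μ := by
      refine (hY2int.add (integrable_const 1)).mono hYm.aestronglyMeasurable ?_
      filter_upwards with ω
      simp only [Pi.add_apply]
      rw [Real.norm_eq_abs, Real.norm_eq_abs]
      have h1 : |Y ω ^ 2 + 1| = Y ω ^ 2 + 1 := abs_of_nonneg (by positivity)
      rw [h1]
      nlinarith [sq_abs (Y ω), abs_nonneg (Y ω), sq_nonneg (|Y ω| - 1)]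
    have hCbd : ∀ᵐ ω ∂μ, η * Y ω ≤ 1 := by
      filter_upwards [hbound] with ω hb using hb (k + 1) tmem
    have hCint : Integrable C μ := by
      refine (integrable_const (Real.exp 1)).mono' hCm.aestronglyMeasurable ?_
      filter_upwards [hCbd] with ω hb
      rw [Real.norm_eq_abs, Real.abs_exp]
      exact Real.exp_le_exp.2 hb
    -- conditional expectation bound : μ[C|ℱ k] ≤ exp (η m + η² v) a.e.
    have hgint : Integrable (fun ω => 1 + η * Y ω + η ^ 2 * (Y ω) ^ 2) μ :=
      ((integrable_const (1 : ℝ)).add (hYint.const_mul η)).add (hY2int.const_mul (η ^ 2))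
    have hstep1 : C ≤ᵐ[μ] fun ω => 1 + η * Y ω + η ^ 2 * (Y ω) ^ 2 := by
      filter_upwards [hCbd] with ω hb
      have := exp_le_one_add_add_sq hb
      simp only [C]
      nlinarith [this]
    have hmono := condExp_mono (m := ℱ k) hCint hgint hstep1
    have hcondg : (μ[fun ω => 1 + η * Y ω + η ^ 2 * (Y ω) ^ 2|ℱ k]) =ᵐ[μ]
        fun ω => 1 + η * m (k + 1) ω + η ^ 2 * v (k + 1) ω := by
      have e0 : (fun ω => 1 + η * Y ω + η ^ 2 * (Y ω) ^ 2)
          = (fun _ : Ω => (1 : ℝ)) + ((fun ω => η * Y ω) + fun ω => η ^ 2 * (Y ω) ^ 2) := by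
        ext ω; simp; ring
      rw [e0]
      have hA := condExp_add (μ := μ) (m := ℱ k) (integrable_const (1 : ℝ))
        ((hYint.const_mul η).add (hY2int.const_mul (η ^ 2)))
      have hB := condExp_add (μ := μ) (m := ℱ k) (hYint.const_mul η) (hY2int.const_mul (η ^ 2))
      have hs1 : (μ[fun ω => η * Y ω|ℱ k]) =ᵐ[μ] fun ω => η * (μ[Y|ℱ k]) ω := by
        simpa [Pi.smul_def, smul_eq_mul] using condExp_smul (μ := μ) (m := ℱ k) η Y
      have hs2 : (μ[fun ω => η ^ 2 * (Y ω) ^ 2|ℱ k]) =ᵐ[μ]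
          fun ω => η ^ 2 * (μ[fun ω' => (Y ω') ^ 2|ℱ k]) ω := by
        simpa [Pi.smul_def, smul_eq_mul] using
          condExp_smul (μ := μ) (m := ℱ k) (η ^ 2) (fun ω => (Y ω) ^ 2)
      filter_upwards [hA, hB, hs1, hs2] with ω h1 h2 h3 h4
      rw [hmk1, hvk1]
      simp only [Pi.add_apply] at h1 h2 ⊢
      rw [h1, condExp_const (ℱ.le k), h2, h3, h4]
      ring
    have hcond : (μ[C|ℱ k]) ≤ᵐ[μ]
        fun ω => Real.exp (η * m (k + 1) ω + η ^ 2 * v (k + 1) ω) := by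
      filter_upwards [hmono, hcondg] with ω h1 h2
      rw [h2] at h1
      have := Real.add_one_le_exp (η * m (k + 1) ω + η ^ 2 * v (k + 1) ω)
      linarith
    have hcond_nonneg : 0 ≤ᵐ[μ] (μ[C|ℱ k]) :=
      condExp_nonneg (ae_of_all _ fun ω => (Real.exp_pos _).le)
    -- integrability and integral bound for exp (G k) from the IH
    have hMkm : StronglyMeasurable (fun ω => Real.exp (G k ω)) :=
      Real.continuous_exp.comp_stronglyMeasurable ((hGm k hk).mono (ℱ.le k))
    have hMk_int : Integrable (fun ω => Real.exp (G k ω)) μ := by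
      refine ⟨hMkm.aestronglyMeasurable, ?_⟩
      rw [hasFiniteIntegral_iff_ofReal (ae_of_all _ fun ω => (Real.exp_pos _).le)]
      exact lt_of_le_of_lt ihle ENNReal.one_lt_top
    have hMk_integral_le : ∫ ω, Real.exp (G k ω) ∂μ ≤ 1 := by
      rw [integral_eq_lintegral_of_nonneg_ae (ae_of_all _ fun ω => (Real.exp_pos _).le)
        hMkm.aestronglyMeasurable]
      have h1 := ENNReal.toReal_mono ENNReal.one_ne_top ihle
      rw [ENNReal.toReal_one] at h1
      exact h1
    -- nonnegativity of F
    have hFnn : ∀ ω, 0 ≤ F ω := fun ω => by positivity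
    -- truncation bound
    have htrunc : ∀ N : ℕ, ∫⁻ ω, ENNReal.ofReal (min (F ω) N * C ω) ∂μ ≤ 1 := by
      intro N
      set fN : Ω → ℝ := fun ω => min (F ω) N with hfN
      have hfNm : StronglyMeasurable[ℱ k] fN :=
        (stronglyMeasurable_iff_measurable.2
          ((stronglyMeasurable_iff_measurable.1 hFm).min measurable_const))
      have hfNnn : ∀ ω, 0 ≤ fN ω := fun ω => le_min (hFnn ω) (Nat.cast_nonneg N)
      have hfNle : ∀ ω, fN ω ≤ N := fun ω => min_le_right _ _
      have hprod_int : Integrable (fN * C) μ := by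
        refine (integrable_const ((N : ℝ) * Real.exp 1)).mono'
          ((hfNm.mono (ℱ.le k)).mul hCm).aestronglyMeasurable ?_
        filter_upwards [hCbd] with ω hb
        simp only [Pi.mul_apply]
        rw [Real.norm_eq_abs, abs_of_nonneg (mul_nonneg (hfNnn ω) (Real.exp_pos _).le)]
        exact mul_le_mul (hfNle ω) (Real.exp_le_exp.2 hb) (Real.exp_pos _).le (Nat.cast_nonneg N)
      have hpull := condExp_mul_of_stronglyMeasurable_left hfNm hprod_int hCint
      have hle : (fN * (μ[C|ℱ k])) ≤ᵐ[μ] fun ω => Real.exp (G k ω) := by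
        filter_upwards [hcond, hcond_nonneg] with ω h1 h2
        have step1 : fN ω * (μ[C|ℱ k]) ω ≤ F ω * (μ[C|ℱ k]) ω :=
          mul_le_mul_of_nonneg_right (min_le_left _ _) h2
        have step2 : F ω * (μ[C|ℱ k]) ω
            ≤ F ω * Real.exp (η * m (k + 1) ω + η ^ 2 * v (k + 1) ω) :=
          mul_le_mul_of_nonneg_left h1 (hFnn ω)
        have step3 : F ω * Real.exp (η * m (k + 1) ω + η ^ 2 * v (k + 1) ω)
            = Real.exp (G k ω) := by
          simp only [F]
          rw [mul_assoc, ← Real.exp_add,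
            show (-(η * m (k + 1) ω) - η ^ 2 * v (k + 1) ω)
              + (η * m (k + 1) ω + η ^ 2 * v (k + 1) ω) = 0 by ring,
            Real.exp_zero, mul_one]
        calc fN ω * (μ[C|ℱ k]) ω ≤ F ω * (μ[C|ℱ k]) ω := step1
          _ ≤ _ := step2
          _ = _ := step3
      have hint_le : ∫ ω, (fN * C) ω ∂μ ≤ 1 := by
        calc ∫ ω, (fN * C) ω ∂μ = ∫ ω, (μ[fN * C|ℱ k]) ω ∂μ :=
              (integral_condExp (ℱ.le k)).symm
          _ = ∫ ω, (fN * (μ[C|ℱ k])) ω ∂μ := integral_congr_ae hpull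
          _ ≤ ∫ ω, Real.exp (G k ω) ∂μ :=
              integral_mono_ae (integrable_condExp.congr hpull) hMk_int hle
          _ ≤ 1 := hMk_integral_le
      have hnn : 0 ≤ᵐ[μ] (fN * C) := ae_of_all _ fun ω =>
        mul_nonneg (hfNnn ω) (Real.exp_pos _).le
      calc ∫⁻ ω, ENNReal.ofReal (min (F ω) N * C ω) ∂μ
          = ENNReal.ofReal (∫ ω, (fN * C) ω ∂μ) :=
            (ofReal_integral_eq_lintegral_ofReal hprod_int hnn).symm
        _ ≤ ENNReal.ofReal 1 := ENNReal.ofReal_le_ofReal hint_le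
        _ = 1 := ENNReal.ofReal_one
    -- monotone convergence
    have hsup : ∀ ω, (⨆ N : ℕ, ENNReal.ofReal (min (F ω) N * C ω))
        = ENNReal.ofReal (F ω * C ω) := by
      intro ω
      apply le_antisymm
      · exact iSup_le fun N => ENNReal.ofReal_le_ofReal
          (mul_le_mul_of_nonneg_right (min_le_left _ _) (Real.exp_pos _).le)
      · refine le_iSup_of_le ⌈F ω⌉₊ ?_
        rw [min_eq_left (Nat.le_ceil _)]
    calc ∫⁻ ω, ENNReal.ofReal (Real.exp (G (k + 1) ω)) ∂μ
        = ∫⁻ ω, ⨆ N : ℕ, ENNReal.ofReal (min (F ω) N * C ω) ∂μ := by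
          congr 1; ext ω; rw [hMsplit ω, hsup ω]
      _ = ⨆ N : ℕ, ∫⁻ ω, ENNReal.ofReal (min (F ω) N * C ω) ∂μ := by
          apply lintegral_iSup
          · intro N
            apply Measurable.ennreal_ofReal
            exact (((hFm.mono (ℱ.le k)).measurable.min measurable_const).mul hCm.measurable)
          · intro N M hNM ω
            apply ENNReal.ofReal_le_ofReal
            exact mul_le_mul_of_nonneg_right
              (min_le_min le_rfl (Nat.cast_le.2 hNM)) (Real.exp_pos _).le
      _ ≤ 1 := iSup_le htrunc

open scoped BigOperators

theorem stmt8
    {Ω : Type*} {mΩ : MeasurableSpace Ω} {μ : Measure Ω} [IsProbabilityMeasure μ]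
    (n : ℕ) (ℱ : Filtration ℕ mΩ)
    (X : ℕ → Ω → ℝ)
    (hadapt : ∀ t ∈ Icc 1 n, StronglyMeasurable[ℱ t] (X t))
    (hL2 : ∀ t ∈ Icc 1 n, Integrable (fun ω => (X t ω) ^ 2) μ)
    (η : ℝ) (hη : 0 < η)
    (hbound : ∀ᵐ ω ∂μ, ∀ t ∈ Icc 1 n, η * X t ω ≤ 1)
    (δ : ℝ) (hδ : δ ∈ Set.Ioo (0 : ℝ) 1) :
    (μ {ω | η * ∑ t ∈ Icc 1 n, (μ[fun ω' => (X t ω') ^ 2|ℱ (t - 1)]) ω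
        + Real.log (1 / δ) / η
        ≤ ∑ t ∈ Icc 1 n, (X t ω - (μ[X t|ℱ (t - 1)]) ω)}).toReal ≤ δ := by
  obtain ⟨hδ0, hδ1⟩ := hδ
  have hkey := key_sup n ℱ X hadapt hL2 η hη hbound n le_rfl
  set G : Ω → ℝ := fun ω => ∑ t ∈ Icc 1 n,
      (η * X t ω - η * (μ[X t|ℱ (t - 1)]) ω
        - η ^ 2 * (μ[fun ω' => (X t ω') ^ 2|ℱ (t - 1)]) ω) with hGdef
  have hGmeas : Measurable G := by
    apply Finset.measurable_sum
    intro t ht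
    have h1 : Measurable (X t) := ((hadapt t ht).mono (ℱ.le t)).measurable
    have h2 : Measurable (μ[X t|ℱ (t - 1)]) :=
      (stronglyMeasurable_condExp.mono (ℱ.le _)).measurable
    have h3 : Measurable (μ[fun ω' => (X t ω') ^ 2|ℱ (t - 1)]) :=
      (stronglyMeasurable_condExp.mono (ℱ.le _)).measurable
    exact ((h1.const_mul η).sub (h2.const_mul η)).sub (h3.const_mul (η ^ 2))
  have hsub : {ω | η * ∑ t ∈ Icc 1 n, (μ[fun ω' => (X t ω') ^ 2|ℱ (t - 1)]) ω
        + Real.log (1 / δ) / η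
        ≤ ∑ t ∈ Icc 1 n, (X t ω - (μ[X t|ℱ (t - 1)]) ω)}
      ⊆ {ω | ENNReal.ofReal (1 / δ) ≤ ENNReal.ofReal (Real.exp (G ω))} := by
    intro ω hω
    simp only [Set.mem_setOf_eq] at hω ⊢
    apply ENNReal.ofReal_le_ofReal
    set A := ∑ t ∈ Icc 1 n, (μ[fun ω' => (X t ω') ^ 2|ℱ (t - 1)]) ω with hA
    set B := ∑ t ∈ Icc 1 n, (X t ω - (μ[X t|ℱ (t - 1)]) ω) with hB
    have hGω : G ω = η * B - η ^ 2 * A := by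
      simp only [G, A, B, Finset.mul_sum, ← Finset.sum_sub_distrib]
      apply Finset.sum_congr rfl
      intro t _
      ring
    have hlog : Real.log (1 / δ) ≤ G ω := by
      have hmul := mul_le_mul_of_nonneg_left hω hη.le
      have hcanc : η * (Real.log (1 / δ) / η) = Real.log (1 / δ) := by
        field_simp
      rw [hGω]
      nlinarith [hmul, hcanc]
    calc 1 / δ = Real.exp (Real.log (1 / δ)) :=
          (Real.exp_log (by positivity)).symm
      _ ≤ Real.exp (G ω) := Real.exp_le_exp.2 hlog
  have hmarkov := mul_meas_ge_le_lintegral₀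
    (μ := μ) (f := fun ω => ENNReal.ofReal (Real.exp (G ω)))
    ((Real.measurable_exp.comp hGmeas).ennreal_ofReal).aemeasurable
    (ENNReal.ofReal (1 / δ))
  have h2 : ENNReal.ofReal (1 / δ) *
      μ {ω | η * ∑ t ∈ Icc 1 n, (μ[fun ω' => (X t ω') ^ 2|ℱ (t - 1)]) ω
        + Real.log (1 / δ) / η
        ≤ ∑ t ∈ Icc 1 n, (X t ω - (μ[X t|ℱ (t - 1)]) ω)} ≤ 1 := by
    calc ENNReal.ofReal (1 / δ) * μ _
        ≤ ENNReal.ofReal (1 / δ)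
          * μ {ω | ENNReal.ofReal (1 / δ) ≤ ENNReal.ofReal (Real.exp (G ω))} :=
          mul_le_mul_right (measure_mono hsub) _
      _ ≤ ∫⁻ ω, ENNReal.ofReal (Real.exp (G ω)) ∂μ := hmarkov
      _ ≤ 1 := hkey
  have hfinal : μ {ω | η * ∑ t ∈ Icc 1 n, (μ[fun ω' => (X t ω') ^ 2|ℱ (t - 1)]) ω
        + Real.log (1 / δ) / η
        ≤ ∑ t ∈ Icc 1 n, (X t ω - (μ[X t|ℱ (t - 1)]) ω)} ≤ ENNReal.ofReal δ := by
    have hδδ : ENNReal.ofReal δ * ENNReal.ofReal (1 / δ) = 1 := by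
      rw [← ENNReal.ofReal_mul hδ0.le]
      rw [mul_one_div, div_self hδ0.ne']
      exact ENNReal.ofReal_one
    calc μ _ = (ENNReal.ofReal δ * ENNReal.ofReal (1 / δ)) * μ _ := by rw [hδδ, one_mul]
      _ = ENNReal.ofReal δ * (ENNReal.ofReal (1 / δ) * μ _) := by rw [mul_assoc]
      _ ≤ ENNReal.ofReal δ * 1 := mul_le_mul_right h2 _
      _ = ENNReal.ofReal δ := mul_one _
  exact ENNReal.toReal_le_of_le_ofReal hδ0.le hfinal
end
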